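/- arXiv:2310.07466 — 11 statements merged into one kernel-verified Lean document; each statement's English description precedes it below -/
import Mathlib

section
/- Let n ≥ 1 and 0 < ε < 1. Suppose 𝒢 is a group of n×n complex unitary matrices and ξ ∈ ℂⁿ is a unit vector with |⟨Gξ, ξ⟩| ≥ 1 − ε for all G ∈ 𝒢. If G ∈ 𝒢 is a commutator, i.e. G = ABA⁻¹B⁻¹ for some A, B ∈ 𝒢, then ‖Gξ − ξ‖ ≤ 4√(2ε). -/
open Matrix in
lemma aux_mul {n : ℕ} (M N : Matrix (Fin n) (Fin n) ℂ) (v : EuclideanSpace ℂ (Fin n)) :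
    Matrix.toEuclideanLin (M * N) v = Matrix.toEuclideanLin M (Matrix.toEuclideanLin N v) := by
  simp [Matrix.toEuclideanLin_apply, Matrix.mulVec_mulVec]

open Matrix in
lemma aux_inner {n : ℕ} (A : Matrix (Fin n) (Fin n) ℂ) (hA : star A * A = 1)
    (x y : EuclideanSpace ℂ (Fin n)) :
    (inner ℂ (Matrix.toEuclideanLin A x) (Matrix.toEuclideanLin A y) : ℂ) = inner ℂ x y := by
  have h1 : Aᴴ * A = 1 := hA
  simp only [Matrix.toEuclideanLin_apply, EuclideanSpace.inner_toLp_toLp,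
    Matrix.star_mulVec]
  rw [dotProduct_comm, Matrix.dotProduct_mulVec, Matrix.vecMul_vecMul, h1, Matrix.vecMul_one,
    EuclideanSpace.inner_eq_star_dotProduct]
  exact dotProduct_comm _ _

lemma aux_norm {n : ℕ} (A : Matrix (Fin n) (Fin n) ℂ) (hA : star A * A = 1)
    (x : EuclideanSpace ℂ (Fin n)) : ‖Matrix.toEuclideanLin A x‖ = ‖x‖ := by
  rw [@norm_eq_sqrt_re_inner ℂ, @norm_eq_sqrt_re_inner ℂ, aux_inner A hA]

lemma aux_approx {n : ℕ} (C : Matrix (Fin n) (Fin n) ℂ) (hC : star C * C = 1)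
    (ξ : EuclideanSpace ℂ (Fin n)) (hξ : ‖ξ‖ = 1) (ε : ℝ) (hε0 : 0 < ε) (hε1 : ε < 1)
    (h : 1 - ε ≤ ‖(inner ℂ ξ (Matrix.toEuclideanLin C ξ) : ℂ)‖) :
    ∃ l : ℂ, ‖l‖ = 1 ∧ ‖Matrix.toEuclideanLin C ξ - l • ξ‖ ≤ Real.sqrt (2 * ε) := by
  set c : ℂ := inner ℂ ξ (Matrix.toEuclideanLin C ξ) with hc
  have habs : 0 < ‖c‖ := lt_of_lt_of_le (by linarith) h
  have hc0 : c ≠ 0 := by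
    intro h0; rw [h0] at habs; simp at habs
  set l : ℂ := c / (‖c‖ : ℂ) with hl
  have hlnorm : ‖l‖ = 1 := by
    rw [hl, norm_div, Complex.norm_real, Real.norm_eq_abs,
      abs_of_pos habs, div_self (ne_of_gt habs)]
  refine ⟨l, hlnorm, ?_⟩
  have hre : l * (starRingEnd ℂ) c = (‖c‖ : ℂ) := by
    have hz : (‖c‖ : ℂ) ≠ 0 := by
      simpa using ne_of_gt habs
    rw [hl, div_mul_eq_mul_div, Complex.mul_conj, Complex.normSq_eq_norm_sq]
    push_cast
    rw [sq, mul_div_assoc, div_self hz, mul_one]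
  have h2 : ‖Matrix.toEuclideanLin C ξ - l • ξ‖ ^ 2 = 2 - 2 * ‖c‖ := by
    rw [@norm_sub_sq ℂ]
    have hn : ‖Matrix.toEuclideanLin C ξ‖ = 1 := by rw [aux_norm C hC, hξ]
    have hinner : (inner ℂ (Matrix.toEuclideanLin C ξ) (l • ξ) : ℂ) = (‖c‖ : ℂ) := by
      rw [inner_smul_right, ← inner_conj_symm, ← hc, hre]
    rw [hinner, hn, norm_smul, hlnorm, hξ]
    simp [Complex.ofReal_re]
    ring
  have h3 : ‖Matrix.toEuclideanLin C ξ - l • ξ‖ ^ 2 ≤ 2 * ε := by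
    rw [h2]; linarith
  calc ‖Matrix.toEuclideanLin C ξ - l • ξ‖
      = Real.sqrt (‖Matrix.toEuclideanLin C ξ - l • ξ‖ ^ 2) := by
        rw [Real.sqrt_sq (norm_nonneg _)]
    _ ≤ Real.sqrt (2 * ε) := Real.sqrt_le_sqrt h3

/-- If `ξ` is a weak `ε`-approximate fixed point of a group of unitary
matrices `G`, then for every commutator `A * B * A⁻¹ * B⁻¹` with `A, B ∈ G` one has
`‖(ABA⁻¹B⁻¹)ξ - ξ‖ ≤ 4√(2ε)`. -/
theorem stmt_2 (n : ℕ) (hn : 1 ≤ n) (ε : ℝ) (hε : 0 < ε) (hε1 : ε < 1)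
    (G : Set (Matrix (Fin n) (Fin n) ℂ))
    (hone : (1 : Matrix (Fin n) (Fin n) ℂ) ∈ G)
    (hmul : ∀ A ∈ G, ∀ B ∈ G, A * B ∈ G)
    (hinv : ∀ A ∈ G, A⁻¹ ∈ G)
    (hunitary : ∀ A ∈ G, A ∈ Matrix.unitaryGroup (Fin n) ℂ)
    (ξ : EuclideanSpace ℂ (Fin n)) (hξ : ‖ξ‖ = 1)
    (hweak : ∀ A ∈ G, 1 - ε ≤ ‖(inner ℂ ξ (Matrix.toEuclideanLin A ξ) : ℂ)‖) :
    ∀ A ∈ G, ∀ B ∈ G,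
      ‖Matrix.toEuclideanLin (A * B * A⁻¹ * B⁻¹) ξ - ξ‖ ≤ 4 * Real.sqrt (2 * ε) := by
  intro A hA B hB
  set f := fun M : Matrix (Fin n) (Fin n) ℂ => Matrix.toEuclideanLin M with hf
  have hA' : A⁻¹ ∈ G := hinv A hA
  have hB' : B⁻¹ ∈ G := hinv B hB
  -- invertibility facts
  have hAu := hunitary A hA
  have hBu := hunitary B hB
  have hAinv : A⁻¹ * A = 1 := by
    have : IsUnit A := ⟨⟨A, star A, hAu.2, hAu.1⟩, rfl⟩
    exact Matrix.nonsing_inv_mul A ((Matrix.isUnit_iff_isUnit_det A).mp this)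
  have hBinv : B⁻¹ * B = 1 := by
    have : IsUnit B := ⟨⟨B, star B, hBu.2, hBu.1⟩, rfl⟩
    exact Matrix.nonsing_inv_mul B ((Matrix.isUnit_iff_isUnit_det B).mp this)
  -- membership / unitary facts
  have hBA : B⁻¹ * A⁻¹ ∈ G := hmul _ hB' _ hA'
  have hBAu : star (B⁻¹ * A⁻¹) * (B⁻¹ * A⁻¹) = 1 := (hunitary _ hBA).1
  have hAiu : star A⁻¹ * A⁻¹ = 1 := (hunitary _ hA').1
  have hBiu : star B⁻¹ * B⁻¹ = 1 := (hunitary _ hB').1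
  -- key algebraic identity
  have key : (B⁻¹ * A⁻¹) * (A * B * A⁻¹ * B⁻¹) = A⁻¹ * B⁻¹ := by
    have e1 : A⁻¹ * (A * (B * (A⁻¹ * B⁻¹))) = B * (A⁻¹ * B⁻¹) := by
      rw [← mul_assoc, hAinv, one_mul]
    simp only [mul_assoc]
    rw [e1, ← mul_assoc B⁻¹ B, hBinv, one_mul]
  -- reduce to commuting difference
  have hred : ‖Matrix.toEuclideanLin (A * B * A⁻¹ * B⁻¹) ξ - ξ‖
      = ‖Matrix.toEuclideanLin (A⁻¹ * B⁻¹) ξ - Matrix.toEuclideanLin (B⁻¹ * A⁻¹) ξ‖ := by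
    rw [← aux_norm (B⁻¹ * A⁻¹) hBAu (Matrix.toEuclideanLin (A * B * A⁻¹ * B⁻¹) ξ - ξ),
      map_sub, ← aux_mul, key]
  -- approximate eigenvalues
  obtain ⟨la, hla, ha⟩ := aux_approx A⁻¹ hAiu ξ hξ ε hε hε1 (hweak _ hA')
  obtain ⟨lb, hlb, hb⟩ := aux_approx B⁻¹ hBiu ξ hξ ε hε hε1 (hweak _ hB')
  set a := Matrix.toEuclideanLin A⁻¹ ξ - la • ξ with ha'
  set b := Matrix.toEuclideanLin B⁻¹ ξ - lb • ξ with hb'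
  have ea : Matrix.toEuclideanLin A⁻¹ ξ = a + la • ξ := by rw [ha']; abel
  have eb : Matrix.toEuclideanLin B⁻¹ ξ = b + lb • ξ := by rw [hb']; abel
  have hdecomp : Matrix.toEuclideanLin (A⁻¹ * B⁻¹) ξ - Matrix.toEuclideanLin (B⁻¹ * A⁻¹) ξ
      = (Matrix.toEuclideanLin A⁻¹ b - la • b) + (lb • a - Matrix.toEuclideanLin B⁻¹ a) := by
    rw [aux_mul, aux_mul, eb, ea, map_add, map_add, map_smul, map_smul, ea, eb]
    module
  have hbound : ‖Matrix.toEuclideanLin (A⁻¹ * B⁻¹) ξ - Matrix.toEuclideanLin (B⁻¹ * A⁻¹) ξ‖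
      ≤ 2 * ‖b‖ + 2 * ‖a‖ := by
    rw [hdecomp]
    calc ‖(Matrix.toEuclideanLin A⁻¹ b - la • b) + (lb • a - Matrix.toEuclideanLin B⁻¹ a)‖
        ≤ ‖Matrix.toEuclideanLin A⁻¹ b - la • b‖ + ‖lb • a - Matrix.toEuclideanLin B⁻¹ a‖ :=
          norm_add_le _ _
      _ ≤ (‖Matrix.toEuclideanLin A⁻¹ b‖ + ‖la • b‖) + (‖lb • a‖ + ‖Matrix.toEuclideanLin B⁻¹ a‖) :=
          add_le_add (norm_sub_le _ _) (norm_sub_le _ _)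
      _ = 2 * ‖b‖ + 2 * ‖a‖ := by
          rw [aux_norm A⁻¹ hAiu, aux_norm B⁻¹ hBiu, norm_smul, norm_smul, hla, hlb]
          ring
  rw [hred]
  calc ‖Matrix.toEuclideanLin (A⁻¹ * B⁻¹) ξ - Matrix.toEuclideanLin (B⁻¹ * A⁻¹) ξ‖
      ≤ 2 * ‖b‖ + 2 * ‖a‖ := hbound
    _ ≤ 2 * Real.sqrt (2 * ε) + 2 * Real.sqrt (2 * ε) := by
        have := hb; have := ha
        gcongr <;> assumption
    _ = 4 * Real.sqrt (2 * ε) := by ring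
end

section
/- Let n ≥ 1 and 0 < ε < 1. Suppose 𝒢 is a group of n×n complex unitary matrices such that every element of 𝒢 is a commutator ABA⁻¹B⁻¹ of two elements A, B ∈ 𝒢. If ξ ∈ ℂⁿ is a unit vector with |⟨Gξ, ξ⟩| ≥ 1 − ε for all G ∈ 𝒢, then ‖Gξ − ξ‖ ≤ 4√(2ε) for all G ∈ 𝒢; that is, ξ is a 4√(2ε)-approximate fixed point of 𝒢. -/
open Matrix

private theorem myComp (n : ℕ) (A B : Matrix (Fin n) (Fin n) ℂ) (x : EuclideanSpace ℂ (Fin n)) :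
    Matrix.toEuclideanLin (A * B) x = Matrix.toEuclideanLin A (Matrix.toEuclideanLin B x) := by
  simp [Matrix.toEuclideanLin_apply, Matrix.mulVec_mulVec]

private theorem myOne (n : ℕ) (x : EuclideanSpace ℂ (Fin n)) :
    Matrix.toEuclideanLin (1 : Matrix (Fin n) (Fin n) ℂ) x = x := by
  simp [Matrix.toEuclideanLin_apply, Matrix.one_mulVec]

private theorem myInner (n : ℕ) (A : Matrix (Fin n) (Fin n) ℂ)
    (hA : A ∈ Matrix.unitaryGroup (Fin n) ℂ) (x y : EuclideanSpace ℂ (Fin n)) :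
    (inner ℂ (Matrix.toEuclideanLin A x) (Matrix.toEuclideanLin A y) : ℂ) = inner ℂ x y := by
  rw [← LinearMap.adjoint_inner_right, ← Matrix.toEuclideanLin_conjTranspose_eq_adjoint]
  have h : Aᴴ * A = 1 := by
    simpa [Matrix.star_eq_conjTranspose] using Unitary.star_mul_self_of_mem hA
  rw [← myComp, h, myOne]

private theorem myNorm (n : ℕ) (A : Matrix (Fin n) (Fin n) ℂ)
    (hA : A ∈ Matrix.unitaryGroup (Fin n) ℂ) (x : EuclideanSpace ℂ (Fin n)) :
    ‖Matrix.toEuclideanLin A x‖ = ‖x‖ := by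
  have h := myInner n A hA x x
  have hsq : ‖Matrix.toEuclideanLin A x‖ ^ 2 = ‖x‖ ^ 2 := by
    have h1 := @inner_self_eq_norm_sq ℂ _ _ _ _ (Matrix.toEuclideanLin A x)
    have h2 := @inner_self_eq_norm_sq ℂ _ _ _ _ x
    have := congrArg Complex.re h
    rw [← h1, ← h2]; exact this
  have := congrArg Real.sqrt hsq
  simpa [Real.sqrt_sq, norm_nonneg] using this

private theorem myStep (n : ℕ) (U : Matrix (Fin n) (Fin n) ℂ)
    (hU : U ∈ Matrix.unitaryGroup (Fin n) ℂ)
    (ξ x : EuclideanSpace ℂ (Fin n)) (c μ : ℂ) (r δ : ℝ) (hc : ‖c‖ ≤ 1)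
    (hx : ‖x - c • ξ‖ ≤ r) (hμ : ‖Matrix.toEuclideanLin U ξ - μ • ξ‖ ≤ δ) :
    ‖Matrix.toEuclideanLin U x - (μ * c) • ξ‖ ≤ r + δ := by
  have key : Matrix.toEuclideanLin U x - (μ * c) • ξ
      = Matrix.toEuclideanLin U (x - c • ξ) + c • (Matrix.toEuclideanLin U ξ - μ • ξ) := by
    rw [map_sub, _root_.map_smul]
    module
  rw [key]
  calc ‖_ + _‖ ≤ ‖Matrix.toEuclideanLin U (x - c • ξ)‖
        + ‖c • (Matrix.toEuclideanLin U ξ - μ • ξ)‖ := norm_add_le _ _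
    _ = ‖x - c • ξ‖ + ‖c‖ * ‖Matrix.toEuclideanLin U ξ - μ • ξ‖ := by
        rw [myNorm n U hU, norm_smul]
    _ ≤ r + 1 * δ := by gcongr
    _ = r + δ := by ring

private theorem myPhase (n : ℕ) (A : Matrix (Fin n) (Fin n) ℂ)
    (hA : A ∈ Matrix.unitaryGroup (Fin n) ℂ) (ξ : EuclideanSpace ℂ (Fin n)) (hξ : ‖ξ‖ = 1)
    (ε : ℝ) (hε1 : ε < 1)
    (hw : 1 - ε ≤ ‖(inner ℂ ξ (Matrix.toEuclideanLin A ξ) : ℂ)‖) :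
    ∃ ω : ℂ, ‖ω‖ = 1 ∧ ‖Matrix.toEuclideanLin A ξ - ω • ξ‖ ≤ Real.sqrt (2 * ε) := by
  set a : ℂ := inner ℂ ξ (Matrix.toEuclideanLin A ξ) with ha
  have hapos : 0 < ‖a‖ := lt_of_lt_of_le (by linarith) hw
  refine ⟨a / (‖a‖ : ℂ), ?_, ?_⟩
  · rw [norm_div, Complex.norm_real, Real.norm_eq_abs, abs_of_nonneg (norm_nonneg a)]
    exact div_self hapos.ne'
  · have hinner : (inner ℂ (Matrix.toEuclideanLin A ξ) ((a / (‖a‖ : ℂ)) • ξ) : ℂ) = (‖a‖ : ℂ) := by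
      rw [inner_smul_right, ← inner_conj_symm, ← ha]
      rw [div_mul_eq_mul_div, Complex.mul_conj]
      rw [Complex.normSq_eq_norm_sq]
      have habs : ((‖a‖ : ℝ) : ℂ) ≠ 0 := Complex.ofReal_ne_zero.mpr hapos.ne'
      push_cast
      rw [sq, mul_div_assoc, div_self habs, mul_one]
    have hAξ : ‖Matrix.toEuclideanLin A ξ‖ = 1 := by rw [myNorm n A hA, hξ]
    have hωξ : ‖(a / (‖a‖ : ℂ)) • ξ‖ = 1 := by
      rw [norm_smul, hξ, norm_div, Complex.norm_real, Real.norm_eq_abs,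
        abs_of_nonneg (norm_nonneg a), div_self hapos.ne', one_mul]
    have hsq : ‖Matrix.toEuclideanLin A ξ - (a / (‖a‖ : ℂ)) • ξ‖ ^ 2 = 2 - 2 * ‖a‖ := by
      rw [@norm_sub_sq ℂ, hAξ, hωξ, hinner]
      simp; ring
    have hle : ‖Matrix.toEuclideanLin A ξ - (a / (‖a‖ : ℂ)) • ξ‖ ^ 2 ≤ 2 * ε := by
      rw [hsq]; linarith
    calc ‖_‖ = Real.sqrt (‖Matrix.toEuclideanLin A ξ - (a / (‖a‖ : ℂ)) • ξ‖ ^ 2) := by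
          rw [Real.sqrt_sq (norm_nonneg _)]
      _ ≤ Real.sqrt (2 * ε) := Real.sqrt_le_sqrt hle

private theorem myInv (n : ℕ) (A : Matrix (Fin n) (Fin n) ℂ)
    (hA : A ∈ Matrix.unitaryGroup (Fin n) ℂ) (ξ : EuclideanSpace ℂ (Fin n)) (ω : ℂ) (δ : ℝ)
    (hω : ‖ω‖ = 1) (h : ‖Matrix.toEuclideanLin A ξ - ω • ξ‖ ≤ δ) :
    ‖Matrix.toEuclideanLin A⁻¹ ξ - (starRingEnd ℂ ω) • ξ‖ ≤ δ := by
  have hu : IsUnit A :=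
    ⟨⟨A, star A, Unitary.mul_star_self_of_mem hA, Unitary.star_mul_self_of_mem hA⟩, rfl⟩
  have hAAinv : A * A⁻¹ = 1 := Matrix.mul_nonsing_inv A (A.isUnit_iff_isUnit_det.mp hu)
  have hωω : (starRingEnd ℂ ω) * ω = 1 := by
    rw [mul_comm, Complex.mul_conj]
    simp [Complex.normSq_eq_norm_sq, hω]
  calc ‖Matrix.toEuclideanLin A⁻¹ ξ - (starRingEnd ℂ ω) • ξ‖
      = ‖Matrix.toEuclideanLin A (Matrix.toEuclideanLin A⁻¹ ξ - (starRingEnd ℂ ω) • ξ)‖ :=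
        (myNorm n A hA _).symm
    _ = ‖ξ - (starRingEnd ℂ ω) • Matrix.toEuclideanLin A ξ‖ := by
        rw [map_sub, _root_.map_smul, ← myComp, hAAinv, myOne]
    _ = ‖(starRingEnd ℂ ω) • (ω • ξ - Matrix.toEuclideanLin A ξ)‖ := by
        rw [smul_sub, smul_smul, hωω, one_smul]
    _ = ‖Matrix.toEuclideanLin A ξ - ω • ξ‖ := by
        rw [norm_smul, ← norm_neg (ω • ξ - _), neg_sub]
        simp [hω]
    _ ≤ δ := h

/-- If every element of a group of unitary matrices `G` is a commutator
of two elements of `G`, and `ξ` is a weak `ε`-approximate fixed point of `G`, then `ξ` is a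
`4√(2ε)`-approximate fixed point of `G`. -/
theorem stmt_3 (n : ℕ) (hn : 1 ≤ n) (ε : ℝ) (hε : 0 < ε) (hε1 : ε < 1)
    (G : Set (Matrix (Fin n) (Fin n) ℂ))
    (hone : (1 : Matrix (Fin n) (Fin n) ℂ) ∈ G)
    (hmul : ∀ A ∈ G, ∀ B ∈ G, A * B ∈ G)
    (hinv : ∀ A ∈ G, A⁻¹ ∈ G)
    (hunitary : ∀ A ∈ G, A ∈ Matrix.unitaryGroup (Fin n) ℂ)
    (hcomm : ∀ C ∈ G, ∃ A ∈ G, ∃ B ∈ G, C = A * B * A⁻¹ * B⁻¹)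
    (ξ : EuclideanSpace ℂ (Fin n)) (hξ : ‖ξ‖ = 1)
    (hweak : ∀ A ∈ G, 1 - ε ≤ ‖(inner ℂ ξ (Matrix.toEuclideanLin A ξ) : ℂ)‖) :
    ∀ C ∈ G, ‖Matrix.toEuclideanLin C ξ - ξ‖ ≤ 4 * Real.sqrt (2 * ε) := by
  intro C hC
  obtain ⟨A, hA, B, hB, hCeq⟩ := hcomm C hC
  set δ := Real.sqrt (2 * ε) with hδdef
  have hAU := hunitary A hA
  have hBU := hunitary B hB
  obtain ⟨ω, hω, hωA⟩ := myPhase n A hAU ξ hξ ε hε1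
    (by simpa using hweak A hA)
  obtain ⟨ψ, hψ, hψB⟩ := myPhase n B hBU ξ hξ ε hε1
    (by simpa using hweak B hB)
  have hAinvU := hunitary A⁻¹ (hinv A hA)
  have hBinvU := hunitary B⁻¹ (hinv B hB)
  have hInvA : ‖Matrix.toEuclideanLin A⁻¹ ξ - (starRingEnd ℂ ω) • ξ‖ ≤ δ :=
    myInv n A hAU ξ ω δ hω hωA
  have hInvB : ‖Matrix.toEuclideanLin B⁻¹ ξ - (starRingEnd ℂ ψ) • ξ‖ ≤ δ :=
    myInv n B hBU ξ ψ δ hψ hψB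
  have h0 : ‖ξ - (1 : ℂ) • ξ‖ ≤ 0 := by simp
  have s1 := myStep n B⁻¹ hBinvU ξ ξ 1 (starRingEnd ℂ ψ) 0 δ (by norm_num) h0 hInvB
  have s2 := myStep n A⁻¹ hAinvU ξ _ _ (starRingEnd ℂ ω) (0 + δ) δ
    (by simp [hψ]) s1 hInvA
  have s3 := myStep n B hBU ξ _ _ ψ (0 + δ + δ) δ (by simp [hω, hψ]) s2 hψB
  have s4 := myStep n A hAU ξ _ _ ω (0 + δ + δ + δ) δ (by simp [hω, hψ]) s3 hωA
  have hωω : ω * starRingEnd ℂ ω = 1 := by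
    rw [Complex.mul_conj]
    simp [Complex.normSq_eq_norm_sq, hω]
  have hψψ : ψ * starRingEnd ℂ ψ = 1 := by
    rw [Complex.mul_conj]
    simp [Complex.normSq_eq_norm_sq, hψ]
  have hsc : ω * (ψ * (starRingEnd ℂ ω * (starRingEnd ℂ ψ * 1))) = 1 := by
    have : ω * (ψ * (starRingEnd ℂ ω * (starRingEnd ℂ ψ * 1)))
        = (ω * starRingEnd ℂ ω) * (ψ * starRingEnd ℂ ψ) := by ring
    rw [this, hωω, hψψ, one_mul]
  rw [hsc, one_smul] at s4
  rw [hCeq, myComp, myComp, myComp]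
  calc ‖_‖ ≤ 0 + δ + δ + δ + δ := s4
    _ = 4 * δ := by ring
    _ ≤ 4 * Real.sqrt (2 * ε) := le_refl _
end

section
/- Let n ≥ 1 and 0 < ε < 1/32. Suppose 𝒢 is a closed (hence compact) subgroup of the group of n×n complex unitary matrices such that every element of 𝒢 is a commutator ABA⁻¹B⁻¹ of two elements A, B ∈ 𝒢. If ξ ∈ ℂⁿ is a unit vector with |⟨Gξ, ξ⟩| ≥ 1 − ε for all G ∈ 𝒢, then there exists a nonzero vector η ∈ ℂⁿ with Gη = η for every G ∈ 𝒢 and ‖η − ξ‖ ≤ 4√(2ε). -/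
set_option maxHeartbeats 2000000

open scoped ComplexConjugate

local notation "⟪" x ", " y "⟫" => @inner ℂ _ _ x y

lemma real_core (eps A B R S R' S' : ℝ) (heps : 0 < eps) (heps2 : eps ≤ 1/2)
    (hA1 : 1 - eps ≤ A) (hA : A ≤ 1) (hB1 : 1 - eps ≤ B) (hB : B ≤ 1)
    (hRn : R ^ 2 = 1 - A ^ 2) (hSn : S ^ 2 = 1 - B ^ 2)
    (hR'n : R' ^ 2 = 1 - A ^ 2) (hS'n : S' ^ 2 = 1 - B ^ 2)
    (hR : 0 ≤ R) (hS : 0 ≤ S) (hR' : 0 ≤ R') (hS' : 0 ≤ S') :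
    1 - 16 * eps ≤ (A * B) ^ 2 - R' * S - S' * R - (A * S + R) * (B * R + S) := by
  have hA0 : (0:ℝ) ≤ A := by linarith
  have hB0 : (0:ℝ) ≤ B := by linarith
  have hR2 : R ^ 2 ≤ 2 * eps := by nlinarith
  have hS2 : S ^ 2 ≤ 2 * eps := by nlinarith
  have hR'2 : R' ^ 2 ≤ 2 * eps := by nlinarith
  have hS'2 : S' ^ 2 ≤ 2 * eps := by nlinarith
  have hA2 : 1 - 2 * eps ≤ A ^ 2 := by nlinarith
  have hB2 : 1 - 2 * eps ≤ B ^ 2 := by nlinarith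
  have hAB : 1 - 4 * eps ≤ (A * B) ^ 2 := by
    rw [mul_pow]
    nlinarith [mul_le_mul hA2 hB2 (by linarith : (0:ℝ) ≤ 1 - 2 * eps) (sq_nonneg A)]
  have hcross1 : R' * S ≤ 2 * eps := by nlinarith [sq_nonneg (R' - S)]
  have hcross2 : S' * R ≤ 2 * eps := by nlinarith [sq_nonneg (S' - R)]
  have hlast : (A * S + R) * (B * R + S) ≤ 8 * eps := by
    have t1 : A * S + R ≤ S + R := by nlinarith
    have t2 : B * R + S ≤ R + S := by nlinarith
    have t3 : (S + R) * (R + S) ≤ 8 * eps := by nlinarith [sq_nonneg (R - S)]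
    calc (A * S + R) * (B * R + S) ≤ (S + R) * (R + S) :=
          mul_le_mul t1 t2 (by positivity) (by positivity)
      _ ≤ 8 * eps := t3
  linarith

lemma real_est (eps A B R S R' S' re2 : ℝ) (heps : 0 < eps) (heps2 : eps ≤ 1/2)
    (hA1 : 1 - eps ≤ A) (hA : A ≤ 1) (hB1 : 1 - eps ≤ B) (hB : B ≤ 1)
    (hRn : R ^ 2 = 1 - A ^ 2) (hSn : S ^ 2 = 1 - B ^ 2)
    (hR'n : R' ^ 2 = 1 - A ^ 2) (hS'n : S' ^ 2 = 1 - B ^ 2)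
    (hR : 0 ≤ R) (hS : 0 ≤ S) (hR' : 0 ≤ R') (hS' : 0 ≤ S')
    (hreip : (A * B) ^ 2 - R' * S - S' * R - (A * S + R) * (B * R + S) ≤ re2) :
    2 - 2 * re2 ≤ 32 * eps := by
  have := real_core eps A B R S R' S' heps heps2 hA1 hA hB1 hB hRn hSn hR'n hS'n hR hS hR' hS'
  linarith

lemma key_est {E : Type*} [NormedAddCommGroup E] [InnerProductSpace ℂ E]
    (ε : ℝ) (hε : 0 < ε) (hε2 : ε ≤ 1/2)
    (f g f' g' : E →ₗ[ℂ] E)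
    (hfn : ∀ x, ‖f x‖ = ‖x‖) (hgn : ∀ x, ‖g x‖ = ‖x‖)
    (hfa : ∀ x y, ⟪x, f y⟫ = ⟪f' x, y⟫)
    (hga : ∀ x y, ⟪x, g y⟫ = ⟪g' x, y⟫)
    (hf'n : ∀ x, ‖f' x‖ = ‖x‖) (hg'n : ∀ x, ‖g' x‖ = ‖x‖)
    (ξ : E) (hξ : ‖ξ‖ = 1)
    (hα : 1 - ε ≤ ‖⟪ξ, f ξ⟫‖) (hβ : 1 - ε ≤ ‖⟪ξ, g ξ⟫‖) :
    ‖g (f ξ) - f (g ξ)‖ ^ 2 ≤ 32 * ε := by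
  set α := ⟪ξ, f ξ⟫ with hαdef
  set β := ⟪ξ, g ξ⟫ with hβdef
  have hξξ : ⟪ξ, ξ⟫ = 1 := by
    rw [inner_self_eq_norm_sq_to_K, hξ]; norm_num
  set r : E := f ξ - α • ξ with hrdef
  set s : E := g ξ - β • ξ with hsdef
  set r' : E := f' ξ - (conj α) • ξ with hr'def
  set s' : E := g' ξ - (conj β) • ξ with hs'def
  have ha1 : ‖α‖ ≤ 1 := by
    have := norm_inner_le_norm (𝕜 := ℂ) ξ (f ξ)
    rwa [hξ, hfn, hξ, one_mul] at this
  have hb1 : ‖β‖ ≤ 1 := by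
    have := norm_inner_le_norm (𝕜 := ℂ) ξ (g ξ)
    rwa [hξ, hgn, hξ, one_mul] at this
  -- inner products with ξ vanish
  have hr0 : ⟪ξ, r⟫ = 0 := by
    simp [hrdef, inner_sub_right, inner_smul_right, hξξ, hξ, hαdef]
  have hs0 : ⟪ξ, s⟫ = 0 := by
    simp [hsdef, inner_sub_right, inner_smul_right, hξξ, hξ, hβdef]
  have hα' : ⟪ξ, f' ξ⟫ = conj α := by
    have h1 : ⟪f' ξ, ξ⟫ = α := (hfa ξ ξ).symm
    rw [← inner_conj_symm, h1]
  have hβ' : ⟪ξ, g' ξ⟫ = conj β := by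
    have h1 : ⟪g' ξ, ξ⟫ = β := (hga ξ ξ).symm
    rw [← inner_conj_symm, h1]
  -- norms of remainders
  have norm_rem : ∀ (x : E) (c : ℂ), ‖x‖ = 1 → ⟪ξ, x⟫ = c → ‖x - c • ξ‖ ^ 2 = 1 - ‖c‖ ^ 2 := by
    intro x c hx hc
    have hxc : ⟪x, c • ξ⟫ = c * conj c := by
      rw [inner_smul_right, ← inner_conj_symm, hc]
    rw [norm_sub_sq (𝕜 := ℂ), hxc, hx, norm_smul, hξ]
    have hre : RCLike.re (c * conj c) = ‖c‖ ^ 2 := by simp [RCLike.mul_conj]; norm_cast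
    rw [hre]; ring
  have hrn : ‖r‖ ^ 2 = 1 - ‖α‖ ^ 2 := norm_rem (f ξ) α (by rw [hfn, hξ]) rfl
  have hsn : ‖s‖ ^ 2 = 1 - ‖β‖ ^ 2 := norm_rem (g ξ) β (by rw [hgn, hξ]) rfl
  have hr'n : ‖r'‖ ^ 2 = 1 - ‖α‖ ^ 2 := by
    have := norm_rem (f' ξ) (conj α) (by rw [hf'n, hξ]) hα'
    simpa using this
  have hs'n : ‖s'‖ ^ 2 = 1 - ‖β‖ ^ 2 := by
    have := norm_rem (g' ξ) (conj β) (by rw [hg'n, hξ]) hβ'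
    simpa using this
  have hfξ : f ξ = α • ξ + r := by rw [hrdef]; abel
  have hgξ : g ξ = β • ξ + s := by rw [hsdef]; abel
  have hf'ξ : f' ξ = (conj α) • ξ + r' := by rw [hr'def]; abel
  have hg'ξ : g' ξ = (conj β) • ξ + s' := by rw [hs'def]; abel
  have hu : g (f ξ) = (α * β) • ξ + (α • s + g r) := by
    rw [hfξ, map_add, map_smul, hgξ]; module
  have hv : f (g ξ) = (α * β) • ξ + (β • r + f s) := by
    rw [hgξ, map_add, map_smul, hfξ]; module
  have hev : ⟪ξ, β • r + f s⟫ = ⟪r', s⟫ := by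
    rw [inner_add_right, inner_smul_right, hr0, hfa, hf'ξ, inner_add_left, inner_smul_left]
    simp [hs0]
  have heu : ⟪α • s + g r, ξ⟫ = conj ⟪s', r⟫ := by
    have h1 : ⟪ξ, g r⟫ = ⟪s', r⟫ := by
      rw [hga, hg'ξ, inner_add_left, inner_smul_left]
      simp [hr0]
    have h2 : (⟪g r, ξ⟫ : ℂ) = conj ⟪s', r⟫ := by rw [← h1]; exact (inner_conj_symm _ _).symm
    have h3 : (⟪s, ξ⟫ : ℂ) = 0 := by
      have := (inner_conj_symm (𝕜 := ℂ) s ξ)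
      rw [hs0, map_zero] at this; exact this.symm
    rw [inner_add_left, inner_smul_left, h2, h3]
    ring
  have hip : ⟪g (f ξ), f (g ξ)⟫ =
      conj (α * β) * (α * β) + conj (α * β) * ⟪r', s⟫ + (α * β) * conj ⟪s', r⟫
        + ⟪α • s + g r, β • r + f s⟫ := by
    have e1 : ⟪((α * β) • ξ : E), ((α * β) • ξ : E)⟫ = conj (α * β) * (α * β) := by
      rw [inner_smul_left, inner_smul_right, hξξ, mul_one]
    have e2 : ⟪((α * β) • ξ : E), β • r + f s⟫ = conj (α * β) * ⟪r', s⟫ := by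
      rw [inner_smul_left, hev]
    have e3 : ⟪α • s + g r, ((α * β) • ξ : E)⟫ = (α * β) * conj ⟪s', r⟫ := by
      rw [inner_smul_right, heu]
    rw [hu, hv, inner_add_left, inner_add_right, e1, e2, inner_add_right, e3]
    ring
  have hnorm1 : ‖g (f ξ)‖ = 1 := by rw [hgn, hfn, hξ]
  have hnorm2 : ‖f (g ξ)‖ = 1 := by rw [hfn, hgn, hξ]
  have hre : ‖g (f ξ) - f (g ξ)‖ ^ 2 = 2 - 2 * RCLike.re ⟪g (f ξ), f (g ξ)⟫ := by
    rw [norm_sub_sq (𝕜 := ℂ), hnorm1, hnorm2]; ring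
  -- real quantities
  have negnorm : ∀ z : ℂ, -‖z‖ ≤ RCLike.re z := by
    intro z
    have h1 : |z.re| ≤ ‖z‖ := Complex.abs_re_le_norm z
    have h2 : -|z.re| ≤ z.re := neg_abs_le _
    rw [RCLike.re_to_complex] at *
    linarith
  have hre1 : RCLike.re (conj (α * β) * (α * β)) = (‖α‖ * ‖β‖) ^ 2 := by
    rw [RCLike.conj_mul]
    simp [norm_mul, mul_pow, ← Complex.ofReal_pow]
  have hb2 : -(‖r'‖ * ‖s‖) ≤ RCLike.re (conj (α * β) * ⟪r', s⟫) := by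
    refine le_trans ?_ (negnorm _)
    rw [norm_mul]
    have h1 : ‖⟪r', s⟫‖ ≤ ‖r'‖ * ‖s‖ := norm_inner_le_norm _ _
    have h2 : ‖conj (α * β)‖ ≤ 1 := by
      rw [RCLike.norm_conj, norm_mul]
      exact mul_le_one₀ ha1 (norm_nonneg _) hb1
    nlinarith [norm_nonneg (⟪r', s⟫ : ℂ), mul_nonneg (norm_nonneg r') (norm_nonneg s)]
  have hb3 : -(‖s'‖ * ‖r‖) ≤ RCLike.re ((α * β) * conj ⟪s', r⟫) := by
    refine le_trans ?_ (negnorm _)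
    rw [norm_mul, RCLike.norm_conj]
    have h1 : ‖⟪s', r⟫‖ ≤ ‖s'‖ * ‖r‖ := norm_inner_le_norm _ _
    have h2 : ‖α * β‖ ≤ 1 := by
      rw [norm_mul]; exact mul_le_one₀ ha1 (norm_nonneg _) hb1
    nlinarith [norm_nonneg (⟪s', r⟫ : ℂ), mul_nonneg (norm_nonneg s') (norm_nonneg r)]
  have hb4 : -((‖α‖ * ‖s‖ + ‖r‖) * (‖β‖ * ‖r‖ + ‖s‖)) ≤ RCLike.re ⟪α • s + g r, β • r + f s⟫ := by
    refine le_trans ?_ (negnorm _)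
    have h1 : ‖⟪α • s + g r, β • r + f s⟫‖ ≤ ‖α • s + g r‖ * ‖β • r + f s‖ :=
      norm_inner_le_norm _ _
    have h2 : ‖α • s + g r‖ ≤ ‖α‖ * ‖s‖ + ‖r‖ := by
      refine le_trans (norm_add_le _ _) ?_
      rw [norm_smul, hgn]
    have h3 : ‖β • r + f s‖ ≤ ‖β‖ * ‖r‖ + ‖s‖ := by
      refine le_trans (norm_add_le _ _) ?_
      rw [norm_smul, hfn]
    have h4 : (0:ℝ) ≤ ‖α‖ * ‖s‖ + ‖r‖ := by positivity
    have h5 : (0:ℝ) ≤ ‖β‖ * ‖r‖ + ‖s‖ := by positivity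
    nlinarith [norm_nonneg (⟪α • s + g r, β • r + f s⟫ : ℂ),
      norm_nonneg (α • s + g r), norm_nonneg (β • r + f s)]
  have hreip : (‖α‖ * ‖β‖) ^ 2 - ‖r'‖ * ‖s‖ - ‖s'‖ * ‖r‖
      - (‖α‖ * ‖s‖ + ‖r‖) * (‖β‖ * ‖r‖ + ‖s‖) ≤ RCLike.re ⟪g (f ξ), f (g ξ)⟫ := by
    rw [hip, map_add, map_add, map_add, hre1]
    linarith [hb2, hb3, hb4]
  have hR : (0:ℝ) ≤ ‖r‖ := norm_nonneg _
  have hS : (0:ℝ) ≤ ‖s‖ := norm_nonneg _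
  have hR' : (0:ℝ) ≤ ‖r'‖ := norm_nonneg _
  have hS' : (0:ℝ) ≤ ‖s'‖ := norm_nonneg _
  have hA0 : (0:ℝ) ≤ ‖α‖ := norm_nonneg _
  have hB0 : (0:ℝ) ≤ ‖β‖ := norm_nonneg _
  rw [hre]
  exact real_est ε ‖α‖ ‖β‖ ‖r‖ ‖s‖ ‖r'‖ ‖s'‖ _ hε hε2 hα ha1 hβ hb1 hrn hsn hr'n hs'n
    (norm_nonneg _) (norm_nonneg _) (norm_nonneg _) (norm_nonneg _) hreip

section glue

variable {n : ℕ}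

lemma tel_mul (A B : Matrix (Fin n) (Fin n) ℂ) (x : EuclideanSpace ℂ (Fin n)) :
    Matrix.toEuclideanLin (A * B) x = Matrix.toEuclideanLin A (Matrix.toEuclideanLin B x) := by
  simp [Matrix.toEuclideanLin_apply, Matrix.mulVec_mulVec]

lemma tel_one (x : EuclideanSpace ℂ (Fin n)) :
    Matrix.toEuclideanLin (1 : Matrix (Fin n) (Fin n) ℂ) x = x := by
  simp [Matrix.toEuclideanLin_apply]

lemma unit_inv_eq_conjT {A : Matrix (Fin n) (Fin n) ℂ}
    (hA : A ∈ Matrix.unitaryGroup (Fin n) ℂ) : A⁻¹ = A.conjTranspose :=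
  Matrix.inv_eq_right_inv (by
    simpa [Matrix.star_eq_conjTranspose] using Matrix.mem_unitaryGroup_iff.mp hA)

lemma unit_inv_mul {A : Matrix (Fin n) (Fin n) ℂ}
    (hA : A ∈ Matrix.unitaryGroup (Fin n) ℂ) : A⁻¹ * A = 1 := by
  rw [unit_inv_eq_conjT hA]
  simpa [Matrix.star_eq_conjTranspose] using Matrix.mem_unitaryGroup_iff'.mp hA

lemma tel_adj {A : Matrix (Fin n) (Fin n) ℂ}
    (hA : A ∈ Matrix.unitaryGroup (Fin n) ℂ) (x y : EuclideanSpace ℂ (Fin n)) :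
    ⟪x, Matrix.toEuclideanLin A⁻¹ y⟫ = ⟪Matrix.toEuclideanLin A x, y⟫ := by
  rw [unit_inv_eq_conjT hA, Matrix.toEuclideanLin_conjTranspose_eq_adjoint]
  exact LinearMap.adjoint_inner_right _ _ _

lemma tel_inner {A : Matrix (Fin n) (Fin n) ℂ}
    (hA : A ∈ Matrix.unitaryGroup (Fin n) ℂ) (x y : EuclideanSpace ℂ (Fin n)) :
    ⟪Matrix.toEuclideanLin A x, Matrix.toEuclideanLin A y⟫ = ⟪x, y⟫ := by
  rw [← tel_adj hA, ← tel_mul, unit_inv_mul hA, tel_one]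

lemma tel_norm {A : Matrix (Fin n) (Fin n) ℂ}
    (hA : A ∈ Matrix.unitaryGroup (Fin n) ℂ) (x : EuclideanSpace ℂ (Fin n)) :
    ‖Matrix.toEuclideanLin A x‖ = ‖x‖ := by
  have h := tel_inner hA x x
  have h2 : (‖Matrix.toEuclideanLin A x‖ : ℝ) ^ 2 = (‖x‖ : ℝ) ^ 2 := by
    rw [← inner_self_eq_norm_sq (𝕜 := ℂ), ← inner_self_eq_norm_sq (𝕜 := ℂ), h]
  calc ‖Matrix.toEuclideanLin A x‖ = Real.sqrt (‖Matrix.toEuclideanLin A x‖ ^ 2) :=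
        (Real.sqrt_sq (norm_nonneg _)).symm
    _ = Real.sqrt (‖x‖ ^ 2) := by rw [h2]
    _ = ‖x‖ := Real.sqrt_sq (norm_nonneg _)

end glue

/-- If every element of a closed (hence compact) group of unitary matrices
`G` is a commutator of two elements of `G`, `0 < ε < 1/32`, and `ξ` is a weak
`ε`-approximate fixed point of `G`, then `G` has a nonzero fixed point `η` with
`‖η - ξ‖ ≤ 4√(2ε)`. -/
theorem stmt_4 (n : ℕ) (hn : 1 ≤ n) (ε : ℝ) (hε : 0 < ε) (hε1 : ε < 1 / 32)
    (G : Set (Matrix (Fin n) (Fin n) ℂ))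
    (hone : (1 : Matrix (Fin n) (Fin n) ℂ) ∈ G)
    (hmul : ∀ A ∈ G, ∀ B ∈ G, A * B ∈ G)
    (hinv : ∀ A ∈ G, A⁻¹ ∈ G)
    (hunitary : ∀ A ∈ G, A ∈ Matrix.unitaryGroup (Fin n) ℂ)
    (hclosed : IsClosed G)
    (hcomm : ∀ C ∈ G, ∃ A ∈ G, ∃ B ∈ G, C = A * B * A⁻¹ * B⁻¹)
    (ξ : EuclideanSpace ℂ (Fin n)) (hξ : ‖ξ‖ = 1)
    (hweak : ∀ A ∈ G, 1 - ε ≤ ‖(inner ℂ ξ (Matrix.toEuclideanLin A ξ) : ℂ)‖) :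
    ∃ η : EuclideanSpace ℂ (Fin n), η ≠ 0 ∧
      (∀ A ∈ G, Matrix.toEuclideanLin A η = η) ∧ ‖η - ξ‖ ≤ 4 * Real.sqrt (2 * ε) := by
  classical
  set δ : ℝ := 4 * Real.sqrt (2 * ε) with hδdef
  have hδ0 : 0 ≤ δ := by positivity
  have hδsq : δ ^ 2 = 32 * ε := by
    rw [hδdef, mul_pow, Real.sq_sqrt (by positivity)]; ring
  have hδ1 : δ < 1 := by nlinarith
  -- Step 1: every element moves ξ by at most δ
  have hdelta : ∀ C ∈ G, ‖Matrix.toEuclideanLin C ξ - ξ‖ ≤ δ := by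
    intro C hC
    obtain ⟨A, hA, B, hB, rfl⟩ := hcomm C hC
    have hAu := hunitary A hA
    have hBu := hunitary B hB
    have hAiu := hunitary A⁻¹ (hinv A hA)
    have hBiu := hunitary B⁻¹ (hinv B hB)
    have hAA : A⁻¹ * A = 1 := unit_inv_mul hAu
    have hBB : B⁻¹ * B = 1 := unit_inv_mul hBu
    have hAinv : (A⁻¹)⁻¹ = A := by
      refine Matrix.inv_eq_right_inv hAA
    have hfa : ∀ x y : EuclideanSpace ℂ (Fin n),
        ⟪x, Matrix.toEuclideanLin A⁻¹ y⟫ = ⟪Matrix.toEuclideanLin A x, y⟫ :=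
      tel_adj hAu
    have hga : ∀ x y : EuclideanSpace ℂ (Fin n),
        ⟪x, Matrix.toEuclideanLin B⁻¹ y⟫ = ⟪Matrix.toEuclideanLin B x, y⟫ :=
      tel_adj hBu
    have h32 := key_est ε hε (by linarith)
      (Matrix.toEuclideanLin A⁻¹) (Matrix.toEuclideanLin B⁻¹)
      (Matrix.toEuclideanLin A) (Matrix.toEuclideanLin B)
      (tel_norm hAiu) (tel_norm hBiu) hfa hga (tel_norm hAu) (tel_norm hBu) ξ hξ
      (by simpa using hweak A⁻¹ (hinv A hA))
      (by simpa using hweak B⁻¹ (hinv B hB))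
    -- identify the commutator displacement
    have cancelA : ∀ X : Matrix (Fin n) (Fin n) ℂ, A⁻¹ * (A * X) = X := fun X => by
      rw [← mul_assoc, hAA, one_mul]
    have cancelB : ∀ X : Matrix (Fin n) (Fin n) ℂ, B⁻¹ * (B * X) = X := fun X => by
      rw [← mul_assoc, hBB, one_mul]
    have hm : B⁻¹ * A⁻¹ * (A * B * A⁻¹ * B⁻¹) = A⁻¹ * B⁻¹ := by
      simp only [mul_assoc, cancelA, cancelB]
    have hrw : Matrix.toEuclideanLin B⁻¹ (Matrix.toEuclideanLin A⁻¹
        (Matrix.toEuclideanLin (A * B * A⁻¹ * B⁻¹) ξ)) =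
        Matrix.toEuclideanLin A⁻¹ (Matrix.toEuclideanLin B⁻¹ ξ) := by
      rw [← tel_mul, ← tel_mul, hm, tel_mul]
    have heq : ‖Matrix.toEuclideanLin (A * B * A⁻¹ * B⁻¹) ξ - ξ‖
        = ‖Matrix.toEuclideanLin A⁻¹ (Matrix.toEuclideanLin B⁻¹ ξ)
            - Matrix.toEuclideanLin B⁻¹ (Matrix.toEuclideanLin A⁻¹ ξ)‖ := by
      rw [← tel_norm hAiu (Matrix.toEuclideanLin (A * B * A⁻¹ * B⁻¹) ξ - ξ)]
      rw [map_sub]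
      rw [← tel_norm hBiu (Matrix.toEuclideanLin A⁻¹ (Matrix.toEuclideanLin (A * B * A⁻¹ * B⁻¹) ξ)
          - Matrix.toEuclideanLin A⁻¹ ξ)]
      rw [map_sub, hrw]
    rw [heq]
    have h1 : ‖Matrix.toEuclideanLin A⁻¹ (Matrix.toEuclideanLin B⁻¹ ξ)
        - Matrix.toEuclideanLin B⁻¹ (Matrix.toEuclideanLin A⁻¹ ξ)‖ ^ 2 ≤ 32 * ε := by
      rw [norm_sub_rev]; exact h32
    calc ‖Matrix.toEuclideanLin A⁻¹ (Matrix.toEuclideanLin B⁻¹ ξ)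
        - Matrix.toEuclideanLin B⁻¹ (Matrix.toEuclideanLin A⁻¹ ξ)‖
        = Real.sqrt (‖Matrix.toEuclideanLin A⁻¹ (Matrix.toEuclideanLin B⁻¹ ξ)
            - Matrix.toEuclideanLin B⁻¹ (Matrix.toEuclideanLin A⁻¹ ξ)‖ ^ 2) :=
          (Real.sqrt_sq (norm_nonneg _)).symm
      _ ≤ Real.sqrt (32 * ε) := Real.sqrt_le_sqrt h1
      _ = δ := by rw [← hδsq, Real.sqrt_sq hδ0]
  -- Step 2: build the fixed point as the minimal-norm point of the closed convex hull
  set S : Set (EuclideanSpace ℂ (Fin n)) := (fun A => Matrix.toEuclideanLin A ξ) '' G with hSdef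
  set K : Set (EuclideanSpace ℂ (Fin n)) := closure (convexHull ℝ S) with hKdef
  have hSsub : S ⊆ Metric.closedBall ξ δ := by
    rintro x ⟨A, hA, rfl⟩
    rw [Metric.mem_closedBall, dist_eq_norm]
    exact hdelta A hA
  have hKsub : K ⊆ Metric.closedBall ξ δ :=
    closure_minimal (convexHull_min hSsub (convex_closedBall _ _)) Metric.isClosed_closedBall
  have hξS : ξ ∈ S := ⟨1, hone, by simp [tel_one]⟩
  have hξK : ξ ∈ K := subset_closure (subset_convexHull ℝ S hξS)
  have hKconv : Convex ℝ K := (convex_convexHull ℝ S).closure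
  have hKcompact : IsCompact K :=
    (isCompact_closedBall ξ δ).of_isClosed_subset isClosed_closure hKsub
  obtain ⟨η, hηK, hηmin⟩ := hKcompact.exists_isMinOn ⟨ξ, hξK⟩ continuous_norm.continuousOn
  have hKinv : ∀ A ∈ G, ∀ x ∈ K, Matrix.toEuclideanLin A x ∈ K := by
    intro A hA x hx
    have hcont : Continuous (Matrix.toEuclideanLin A) :=
      LinearMap.continuous_of_finiteDimensional _
    have himg : Matrix.toEuclideanLin A '' S ⊆ S := by
      rintro y ⟨z, ⟨B, hB, rfl⟩, rfl⟩
      exact ⟨A * B, hmul A hA B hB, by simpa using tel_mul A B ξ⟩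
    have h2 : Matrix.toEuclideanLin A '' convexHull ℝ S
        = convexHull ℝ (Matrix.toEuclideanLin A '' S) := by
      exact ((Matrix.toEuclideanLin A).restrictScalars ℝ).image_convexHull S
    have h3 : Matrix.toEuclideanLin A '' K ⊆ K := by
      refine (image_closure_subset_closure_image hcont).trans ?_
      rw [h2]
      exact closure_mono (convexHull_mono himg)
    exact h3 ⟨x, hx, rfl⟩
  have hfix : ∀ A ∈ G, Matrix.toEuclideanLin A η = η := by
    intro A hA
    set z := Matrix.toEuclideanLin A η with hzdef
    have hzK : z ∈ K := hKinv A hA η hηK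
    have hzn : ‖z‖ = ‖η‖ := tel_norm (hunitary A hA) η
    have hmid : ((1:ℝ)/2) • η + ((1:ℝ)/2) • z ∈ K :=
      hKconv hηK hzK (by norm_num) (by norm_num) (by norm_num)
    have h1 : ‖η‖ ≤ ‖((1:ℝ)/2) • η + ((1:ℝ)/2) • z‖ := hηmin hmid
    have h2 : ‖((1:ℝ)/2) • η + ((1:ℝ)/2) • z‖ = (1/2) * ‖η + z‖ := by
      rw [← smul_add, norm_smul]
      simp
    have hpar := parallelogram_law_with_norm ℂ η z
    rw [hzn] at hpar
    have h7 : 2 * ‖η‖ ≤ ‖η + z‖ := by rw [h2] at h1; linarith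
    have h8 : (2 * ‖η‖) * (2 * ‖η‖) ≤ ‖η + z‖ * ‖η + z‖ :=
      mul_le_mul h7 h7 (by positivity) (norm_nonneg _)
    have h3 : ‖η - z‖ * ‖η - z‖ ≤ 0 := by nlinarith [h8, hpar]
    have h4 : ‖η - z‖ = 0 := by nlinarith [norm_nonneg (η - z)]
    have h5 : η - z = 0 := norm_eq_zero.mp h4
    have h6 : η = z := by rwa [sub_eq_zero] at h5
    exact h6.symm
  have hηξ : ‖η - ξ‖ ≤ δ := by
    have := hKsub hηK
    rwa [Metric.mem_closedBall, dist_eq_norm] at this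
  refine ⟨η, ?_, hfix, hηξ⟩
  intro h0
  rw [h0] at hηξ
  rw [zero_sub, norm_neg, hξ] at hηξ
  linarith
end

section
/- Let n ≥ 1 and 0 < ε < 1. Suppose 𝒢 is an indecomposable monomial group of n×n unitary matrices and ξ ∈ ℂⁿ is a unit vector with |⟨Gξ, ξ⟩| ≥ 1 − ε for all G ∈ 𝒢. Let |ξ| ∈ ℝⁿ denote the vector of entrywise absolute values of ξ and let η = (1/√n)(1, 1, …, 1). Then η is fixed by every permutation matrix |G| (G ∈ 𝒢, |G| the matrix of entrywise absolute values), and ‖η − |ξ|‖ ≤ n√(nε). -/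
/-- If an indecomposable monomial group `G` of `n × n` unitary matrices
(all `|A|` are permutation matrices and the associated permutation group acts transitively)
has a weak `ε`-approximate fixed point `ξ`, then the vector `η = (1/√n)(1,…,1)` is fixed by
every permutation matrix `|A|` (`A ∈ G`), and `‖η - |ξ|‖ ≤ n√(nε)`. -/
theorem stmt_6 (n : ℕ) (hn : 1 ≤ n) (ε : ℝ) (hε : 0 < ε) (hε1 : ε < 1)
    (G : Set (Matrix (Fin n) (Fin n) ℂ))
    (hone : (1 : Matrix (Fin n) (Fin n) ℂ) ∈ G)
    (hmul : ∀ A ∈ G, ∀ B ∈ G, A * B ∈ G)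
    (hinv : ∀ A ∈ G, A⁻¹ ∈ G)
    (hunitary : ∀ A ∈ G, A ∈ Matrix.unitaryGroup (Fin n) ℂ)
    (hmonomial : ∀ A ∈ G, ∃ σ : Equiv.Perm (Fin n),
      ∀ i j, ‖A i j‖ = if σ j = i then 1 else 0)
    (htrans : ∀ i j : Fin n, ∃ A ∈ G, A i j ≠ 0)
    (ξ : EuclideanSpace ℂ (Fin n)) (hξ : ‖ξ‖ = 1)
    (hweak : ∀ A ∈ G, 1 - ε ≤ ‖(inner ℂ ξ (Matrix.toEuclideanLin A ξ) : ℂ)‖) :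
    (∀ A ∈ G,
      (Matrix.of fun i j => (‖A i j‖ : ℝ)).mulVec
          (fun _ => 1 / Real.sqrt n) = fun _ => 1 / Real.sqrt n) ∧
    ‖(WithLp.toLp 2 ((fun _ => 1 / Real.sqrt n) - (fun i => ‖ξ i‖)) :
        EuclideanSpace ℝ (Fin n))‖ ≤ n * Real.sqrt (n * ε) := by
  have hn0 : (0:ℝ) < n := by exact_mod_cast Nat.lt_of_lt_of_le Nat.zero_lt_one hn
  set u : Fin n → ℝ := fun i => ‖ξ i‖ with hudef
  have hu0 : ∀ i, 0 ≤ u i := fun i => norm_nonneg _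
  have husq : ∑ i, u i ^ 2 = 1 := by
    have h := hξ
    rw [EuclideanSpace.norm_eq, Real.sqrt_eq_one] at h
    simpa using h
  constructor
  · intro A hA
    obtain ⟨σ, hσ⟩ := hmonomial A hA
    funext i
    show ∑ j, (‖A i j‖ : ℝ) * (1 / Real.sqrt n) = 1 / Real.sqrt n
    simp only [hσ]
    simp only [Equiv.apply_eq_iff_eq_symm_apply, ite_mul, one_mul, zero_mul]
    simp [Finset.sum_ite_eq']
  -- key pairwise estimate
  have key : ∀ i j : Fin n, (u i - u j) ^ 2 ≤ 2 * ε := by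
    intro i j
    obtain ⟨A, hA, hAij⟩ := htrans i j
    obtain ⟨σ, hσ⟩ := hmonomial A hA
    have hσj : σ j = i := by
      by_contra h
      apply hAij
      have h2 := hσ i j
      rw [if_neg h] at h2
      exact norm_eq_zero.mp h2
    have hA0 : ∀ k m, σ m ≠ k → A k m = 0 := by
      intro k m h
      have h2 := hσ k m
      rw [if_neg h] at h2
      exact norm_eq_zero.mp h2
    have hA1 : ∀ k, ‖A k (σ.symm k)‖ = 1 := by
      intro k
      have h2 := hσ k (σ.symm k)
      rwa [if_pos (σ.apply_symm_apply k)] at h2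
    have hmv : ∀ k, (A.mulVec ξ) k = A k (σ.symm k) * ξ (σ.symm k) := by
      intro k
      show ∑ m, A k m * ξ m = _
      rw [Finset.sum_eq_single (σ.symm k)]
      · intro m _ hm
        rw [hA0 k m (fun hc => hm (by rw [← hc, Equiv.symm_apply_apply])), zero_mul]
      · intro h; exact absurd (Finset.mem_univ _) h
    have hinner : ‖(inner ℂ ξ (Matrix.toEuclideanLin A ξ) : ℂ)‖
        ≤ ∑ k, u k * u (σ.symm k) := by
      have heq : (inner ℂ ξ (Matrix.toEuclideanLin A ξ) : ℂ)
          = ∑ k, (starRingEnd ℂ) (ξ k) * (A.mulVec ξ) k := by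
        simp only [PiLp.inner_apply, RCLike.inner_apply]
        exact Finset.sum_congr rfl fun x _ => mul_comm _ _
      rw [heq]
      refine (norm_sum_le _ _).trans (Finset.sum_le_sum fun k _ => ?_)
      rw [hmv k, norm_mul, norm_mul, Complex.norm_conj, hA1]
      simp [hudef]
    have hS : 1 - ε ≤ ∑ k, u k * u (σ.symm k) := le_trans (hweak A hA) hinner
    have hperm : ∑ k, u (σ.symm k) ^ 2 = 1 := by
      rw [Equiv.sum_comp σ.symm (fun k => u k ^ 2)]; exact husq
    have hsum : ∑ k, (u k - u (σ.symm k)) ^ 2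
        = 2 - 2 * ∑ k, u k * u (σ.symm k) := by
      have hptw : ∀ k : Fin n, (u k - u (σ.symm k)) ^ 2
          = u k ^ 2 + u (σ.symm k) ^ 2 - 2 * (u k * u (σ.symm k)) := fun k => by ring
      rw [Finset.sum_congr rfl fun k _ => hptw k]
      rw [Finset.sum_sub_distrib, Finset.sum_add_distrib, husq, hperm, ← Finset.mul_sum]
      ring
    have hsymm : σ.symm i = j := by rw [← hσj, Equiv.symm_apply_apply]
    have hterm : (u i - u j) ^ 2 ≤ ∑ k, (u k - u (σ.symm k)) ^ 2 := by
      have h := Finset.single_le_sum (f := fun k => (u k - u (σ.symm k)) ^ 2)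
        (fun k _ => sq_nonneg _) (Finset.mem_univ i)
      simpa [hsymm] using h
    linarith
  -- existence of coordinates above/below 1/√n
  have hne : (Finset.univ : Finset (Fin n)).Nonempty := ⟨⟨0, hn⟩, Finset.mem_univ _⟩
  obtain ⟨jM, -, hjM⟩ := Finset.exists_max_image Finset.univ u hne
  obtain ⟨jm, -, hjm⟩ := Finset.exists_min_image Finset.univ u hne
  have hMbig : 1 / Real.sqrt n ≤ u jM := by
    have hsq : 1 ≤ (n : ℝ) * u jM ^ 2 := by
      calc (1:ℝ) = ∑ i, u i ^ 2 := husq.symm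
        _ ≤ ∑ _i : Fin n, u jM ^ 2 := Finset.sum_le_sum fun i _ =>
            pow_le_pow_left₀ (hu0 i) (hjM i (Finset.mem_univ i)) 2
        _ = (n : ℝ) * u jM ^ 2 := by simp [Finset.sum_const, mul_comm]
    have h1n : (1:ℝ) / n ≤ u jM ^ 2 := by
      rw [div_le_iff₀ hn0]; linarith
    have := Real.sqrt_le_sqrt h1n
    rwa [one_div, Real.sqrt_inv, ← one_div, Real.sqrt_sq (hu0 jM)] at this
  have hmsmall : u jm ≤ 1 / Real.sqrt n := by
    have hsq : (n : ℝ) * u jm ^ 2 ≤ 1 := by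
      calc (n : ℝ) * u jm ^ 2 = ∑ _i : Fin n, u jm ^ 2 := by simp [Finset.sum_const, mul_comm]
        _ ≤ ∑ i, u i ^ 2 := Finset.sum_le_sum fun i _ =>
            pow_le_pow_left₀ (hu0 jm) (hjm i (Finset.mem_univ i)) 2
        _ = 1 := husq
    have h1n : u jm ^ 2 ≤ 1 / n := by
      rw [le_div_iff₀ hn0]; linarith
    have h2 := Real.sqrt_le_sqrt h1n
    rwa [one_div, Real.sqrt_inv, ← one_div, Real.sqrt_sq (hu0 jm)] at h2
  have hle : ∀ a b : Fin n, u a - u b ≤ Real.sqrt (2 * ε) := by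
    intro a b
    refine (le_abs_self _).trans ?_
    rw [← Real.sqrt_sq_eq_abs]
    exact Real.sqrt_le_sqrt (key a b)
  have hcoord : ∀ i, (1 / Real.sqrt n - u i) ^ 2 ≤ 2 * ε := by
    intro i
    have h1 : 1 / Real.sqrt n - u i ≤ Real.sqrt (2 * ε) := by
      have := hle jM i; linarith [hjM i (Finset.mem_univ i)]
    have h2 : -(Real.sqrt (2 * ε)) ≤ 1 / Real.sqrt n - u i := by
      have := hle i jm; linarith [hjm i (Finset.mem_univ i)]
    calc (1 / Real.sqrt n - u i) ^ 2 ≤ Real.sqrt (2 * ε) ^ 2 := sq_le_sq' h2 h1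
      _ = 2 * ε := Real.sq_sqrt (by positivity)
  rcases eq_or_lt_of_le hn with hn1 | hn2
  · -- n = 1
    have hn1' : n = 1 := hn1.symm
    subst hn1'
    have hu1 : ∀ i : Fin 1, u i = 1 := by
      intro i
      have : u 0 ^ 2 = 1 := by simpa using husq
      have h0 : u i = u 0 := by rw [Subsingleton.elim i 0]
      nlinarith [hu0 (0 : Fin 1)]
    have hz : ((fun _ => 1 / Real.sqrt ((1:ℕ):ℝ)) - u : Fin 1 → ℝ) = 0 := by
      funext i
      rw [Pi.sub_apply]
      show 1 / Real.sqrt ((1:ℕ):ℝ) - u i = 0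
      rw [hu1 i, Nat.cast_one, Real.sqrt_one]
      norm_num
    rw [show ((fun _ => 1 / Real.sqrt ((1:ℕ):ℝ)) - (fun i => ‖ξ i‖) :
        Fin 1 → ℝ) = 0 from hz, WithLp.toLp_zero, norm_zero]
    positivity
  · -- 2 ≤ n
    have hn2' : (2:ℝ) ≤ n := by exact_mod_cast hn2
    rw [EuclideanSpace.norm_eq]
    have hsum : ∑ i, ‖(WithLp.toLp 2 ((fun _ => 1 / Real.sqrt n) - (fun i => ‖ξ i‖)) :
        EuclideanSpace ℝ (Fin n)) i‖ ^ 2 ≤ (n:ℝ) ^ 2 * (n * ε) := by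
      calc ∑ i, ‖(WithLp.toLp 2 ((fun _ => 1 / Real.sqrt n) - (fun i => ‖ξ i‖)) :
            EuclideanSpace ℝ (Fin n)) i‖ ^ 2
          = ∑ i, (1 / Real.sqrt n - u i) ^ 2 := by
            refine Finset.sum_congr rfl fun i _ => ?_
            rw [PiLp.toLp_apply, Pi.sub_apply, Real.norm_eq_abs, sq_abs]
        _ ≤ ∑ _i : Fin n, 2 * ε := Finset.sum_le_sum fun i _ => hcoord i
        _ = (n:ℝ) * (2 * ε) := by simp [Finset.sum_const, mul_comm]
        _ = 2 * ((n:ℝ) * ε) := by ring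
        _ ≤ (n:ℝ) ^ 2 * (n * ε) := by
            have h2n : (2:ℝ) ≤ (n:ℝ) ^ 2 := by nlinarith
            exact mul_le_mul_of_nonneg_right h2n (by positivity)
    calc Real.sqrt (∑ i, ‖(WithLp.toLp 2 ((fun _ => 1 / Real.sqrt n) - (fun i => ‖ξ i‖)) :
          EuclideanSpace ℝ (Fin n)) i‖ ^ 2)
        ≤ Real.sqrt ((n:ℝ) ^ 2 * (n * ε)) := Real.sqrt_le_sqrt hsum
      _ = n * Real.sqrt (n * ε) := by
          rw [Real.sqrt_mul (sq_nonneg _), Real.sqrt_sq hn0.le]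
end

section
/- Let n ≥ 1 and 0 < ε < 1. Suppose 𝒢 is an indecomposable monomial group of n×n unitary matrices and ξ ∈ ℂⁿ is a unit vector with nonnegative real entries such that |⟨Gξ, ξ⟩| ≥ 1 − ε for all G ∈ 𝒢. If n√(nε) < 1/3, then the vector η = (1/√n)(1, 1, …, 1) satisfies |⟨Gη, η⟩| ≥ 1 − 3n√(nε) for every G ∈ 𝒢; that is, η is a weak 3n√(nε)-approximate fixed point of 𝒢. -/
open Finset in
lemma aux_inner_s7 (n : ℕ) (B : Matrix (Fin n) (Fin n) ℂ) (σ : Equiv.Perm (Fin n))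
    (hσ : ∀ i j, ‖B i j‖ = if σ j = i then 1 else 0)
    (v : EuclideanSpace ℂ (Fin n)) :
    (inner ℂ v (Matrix.toEuclideanLin B v) : ℂ)
      = ∑ j, (starRingEnd ℂ) (v (σ j)) * (B (σ j) j * v j) := by
  have hzero : ∀ i j, σ j ≠ i → B i j = 0 := by
    intro i j h
    have h2 := hσ i j
    rw [if_neg h] at h2
    exact norm_eq_zero.mp h2
  have h1 : ∀ i, (Matrix.toEuclideanLin B v) i = B i (σ.symm i) * v (σ.symm i) := by
    intro i
    show ∑ j, B i j * v j = _
    refine Finset.sum_eq_single (σ.symm i) ?_ ?_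
    · intro j _ hj
      rw [hzero i j (fun h => hj (by rw [← h, Equiv.symm_apply_apply])), zero_mul]
    · intro h; exact absurd (Finset.mem_univ _) h
  have : (inner ℂ v (Matrix.toEuclideanLin B v) : ℂ)
      = ∑ i, (starRingEnd ℂ) (v i) * (B i (σ.symm i) * v (σ.symm i)) := by
    rw [PiLp.inner_apply]
    exact Finset.sum_congr rfl fun i _ => by rw [h1 i, RCLike.inner_apply']
  rw [this, ← Equiv.sum_comp σ (fun i => (starRingEnd ℂ) (v i) * (B i (σ.symm i) * v (σ.symm i)))]
  exact Finset.sum_congr rfl fun j _ => by rw [Equiv.symm_apply_apply]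

lemma le_of_sq_le_sq' (a b : ℝ) (ha : 0 ≤ a) (hb : 0 ≤ b) (h : a^2 ≤ b^2) : a ≤ b := by
  nlinarith

lemma numeric (n : ℕ) (hn : 1 ≤ n) (ε d : ℝ) (hε : 0 < ε) (hd : 0 ≤ d)
    (hd2 : d^2 ≤ 2 - 2*Real.sqrt (1 - n*ε))
    (hsmall : (n:ℝ)*Real.sqrt ((n:ℝ)*ε) < 1/3) :
    ε + 2*d ≤ 3*((n:ℝ)*Real.sqrt ((n:ℝ)*ε)) := by
  set s := Real.sqrt ((n:ℝ)*ε) with hs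
  have hn1 : (1:ℝ) ≤ n := by exact_mod_cast hn
  have hnε : 0 ≤ (n:ℝ)*ε := by positivity
  have hs0 : 0 < s := Real.sqrt_pos.mpr (by positivity)
  have hs2 : s^2 = (n:ℝ)*ε := Real.sq_sqrt hnε
  have hsle : s ≤ (n:ℝ)*s := le_mul_of_one_le_left hs0.le hn1
  have hs3 : s < 1/3 := lt_of_le_of_lt hsle hsmall
  have hu : (n:ℝ)*ε < 1/9 := by nlinarith
  have h1u : (0:ℝ) ≤ 1 - (n:ℝ)*ε := by nlinarith
  have hq2 : (Real.sqrt (1 - (n:ℝ)*ε))^2 = 1 - (n:ℝ)*ε := Real.sq_sqrt h1u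
  have hq0 : 0 ≤ Real.sqrt (1 - (n:ℝ)*ε) := Real.sqrt_nonneg _
  have hlow : 1 - ((n:ℝ)*ε)/2 - ((n:ℝ)*ε)^2 ≤ Real.sqrt (1 - (n:ℝ)*ε) := by
    apply le_of_sq_le_sq' _ _ (by nlinarith) hq0
    rw [hq2]
    nlinarith [sq_nonneg ((n:ℝ)*ε), mul_nonneg hnε hnε, mul_nonneg (mul_nonneg hnε hnε) hnε]
  have hd4 : d ≤ (4/3)*s := by
    apply le_of_sq_le_sq' _ _ hd (by positivity)
    nlinarith
  have hεs : ε ≤ s^2 := by nlinarith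
  nlinarith

/-- Let `G` be an indecomposable monomial group of `n × n` unitary
matrices and `ξ` a unit vector with nonnegative real entries which is a weak
`ε`-approximate fixed point of `G`. If `n√(nε) < 1/3`, then `η = (1/√n)(1,…,1)` is a weak
`3n√(nε)`-approximate fixed point of `G`. -/
theorem stmt_7 (n : ℕ) (hn : 1 ≤ n) (ε : ℝ) (hε : 0 < ε) (hε1 : ε < 1)
    (G : Set (Matrix (Fin n) (Fin n) ℂ))
    (hone : (1 : Matrix (Fin n) (Fin n) ℂ) ∈ G)
    (hmul : ∀ A ∈ G, ∀ B ∈ G, A * B ∈ G)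
    (hinv : ∀ A ∈ G, A⁻¹ ∈ G)
    (hunitary : ∀ A ∈ G, A ∈ Matrix.unitaryGroup (Fin n) ℂ)
    (hmonomial : ∀ A ∈ G, ∃ σ : Equiv.Perm (Fin n),
      ∀ i j, ‖A i j‖ = if σ j = i then 1 else 0)
    (htrans : ∀ i j : Fin n, ∃ A ∈ G, A i j ≠ 0)
    (ξ : EuclideanSpace ℂ (Fin n)) (hξ : ‖ξ‖ = 1)
    (hreal : ∀ i, (ξ i).im = 0 ∧ 0 ≤ (ξ i).re)
    (hweak : ∀ A ∈ G, 1 - ε ≤ ‖(inner ℂ ξ (Matrix.toEuclideanLin A ξ) : ℂ)‖)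
    (hsmall : (n : ℝ) * Real.sqrt (n * ε) < 1 / 3) :
    ∀ A ∈ G,
      1 - 3 * ((n : ℝ) * Real.sqrt (n * ε)) ≤
        ‖(@inner ℂ (EuclideanSpace ℂ (Fin n)) _
          (WithLp.toLp 2 (fun _ => ((1 / Real.sqrt n : ℝ) : ℂ)))
          (Matrix.toEuclideanLin A (WithLp.toLp 2 (fun _ => ((1 / Real.sqrt n : ℝ) : ℂ)))))‖ := by
  set x : Fin n → ℝ := fun i => (ξ i).re with hxdef
  have hx0 : ∀ i, 0 ≤ x i := fun i => (hreal i).2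
  have hxξ : ∀ i, ξ i = ((x i : ℝ) : ℂ) := by
    intro i
    exact Complex.ext rfl (by simp [hxdef, (hreal i).1])
  have hn1 : (1:ℝ) ≤ (n:ℝ) := by exact_mod_cast hn
  have hn0 : (0:ℝ) < (n:ℝ) := by linarith
  set rn : ℝ := Real.sqrt n with hrndef
  have hrn0 : 0 < rn := Real.sqrt_pos.mpr hn0
  have hrnsq : rn^2 = (n:ℝ) := Real.sq_sqrt hn0.le
  -- sum of squares is 1
  have hsum2 : ∑ i, (x i)^2 = 1 := by
    have h1 : ‖ξ‖ = Real.sqrt (∑ i, ‖ξ i‖^2) := EuclideanSpace.norm_eq ξ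
    have h2 : Real.sqrt (∑ i, ‖ξ i‖^2) = 1 := by rw [← h1, hξ]
    have h3 : ∑ i, ‖ξ i‖^2 = 1 := by
      have := Real.sqrt_eq_one.mp h2
      exact this
    rw [← h3]
    refine Finset.sum_congr rfl fun i _ => ?_
    rw [hxξ i, Complex.norm_real, Real.norm_eq_abs, sq_abs]
  -- weak fixed point gives correlation bound for any monomial B in G
  have hSle : ∀ B ∈ G, ∀ σ : Equiv.Perm (Fin n),
      (∀ i j, ‖B i j‖ = if σ j = i then 1 else 0) →
      1 - ε ≤ ∑ j, x (σ j) * x j := by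
    intro B hB σ hσ
    refine le_trans (hweak B hB) ?_
    rw [aux_inner_s7 n B σ hσ ξ]
    refine le_trans (norm_sum_le _ _) ?_
    refine le_of_eq (Finset.sum_congr rfl fun j _ => ?_)
    rw [hxξ (σ j), hxξ j, Complex.conj_ofReal]
    rw [norm_mul, norm_mul, Complex.norm_real, Complex.norm_real, Real.norm_eq_abs, Real.norm_eq_abs, hσ (σ j) j, if_pos rfl]
    rw [abs_of_nonneg (hx0 (σ j)), abs_of_nonneg (hx0 j)]
    ring
  -- sum of squares is permutation invariant
  have hperm2 : ∀ σ : Equiv.Perm (Fin n), ∑ j, (x (σ j))^2 = 1 := by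
    intro σ
    rw [← hsum2]
    exact Equiv.sum_comp σ (fun k => (x k)^2)
  -- pairwise closeness
  have hpair : ∀ i j : Fin n, (x i - x j)^2 ≤ 2*ε := by
    intro i j
    obtain ⟨B, hB, hBij⟩ := htrans i j
    obtain ⟨σ, hσ⟩ := hmonomial B hB
    have hσji : σ j = i := by
      by_contra h
      exact hBij (norm_eq_zero.mp (by rw [hσ i j, if_neg h]))
    have h1 := hSle B hB σ hσ
    have hexp : ∑ k, (x (σ k) - x k)^2 = 2 - 2 * ∑ k, x (σ k) * x k := by
      have : ∀ k : Fin n, (x (σ k) - x k)^2 = (x (σ k))^2 + (x k)^2 - 2*(x (σ k) * x k) := by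
        intro k; ring
      rw [Finset.sum_congr rfl fun k _ => this k, Finset.sum_sub_distrib,
        Finset.sum_add_distrib, hperm2 σ, hsum2, ← Finset.mul_sum]
      ring
    have hterm : (x (σ j) - x j)^2 ≤ ∑ k, (x (σ k) - x k)^2 :=
      Finset.single_le_sum (f := fun k => (x (σ k) - x k)^2)
        (fun k _ => sq_nonneg _) (Finset.mem_univ j)
    rw [hσji] at hterm
    linarith [hterm, hexp ▸ hterm]
  -- bound on sum
  set T : ℝ := ∑ i, x i with hTdef
  have hT0 : 0 ≤ T := Finset.sum_nonneg fun i _ => hx0 i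
  have hTsq : (n:ℝ) - (n:ℝ)^2 * ε ≤ T^2 := by
    have hexp : ∑ i, ∑ j, (x i - x j)^2 = 2*(n:ℝ) - 2*T^2 := by
      have h1 : ∀ i : Fin n, ∑ j, (x i - x j)^2
          = (n:ℝ)*(x i)^2 + 1 - x i * (2*T) := by
        intro i
        have hc : ∀ j : Fin n, (x i - x j)^2 = (x i)^2 + (x j)^2 - (x i * 2) * x j := by
          intro j; ring
        rw [Finset.sum_congr rfl fun j _ => hc j, Finset.sum_sub_distrib,
          Finset.sum_add_distrib, hsum2, Finset.sum_const, ← Finset.mul_sum,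
          ← hTdef, Finset.card_univ, Fintype.card_fin, nsmul_eq_mul]
        push_cast
        ring
      rw [Finset.sum_congr rfl fun i _ => h1 i, Finset.sum_sub_distrib,
        Finset.sum_add_distrib, ← Finset.mul_sum, hsum2,
        Finset.sum_const, ← Finset.sum_mul, ← hTdef, Finset.card_univ,
        Fintype.card_fin, nsmul_eq_mul]
      push_cast
      ring
    have hbd : ∑ i, ∑ j, (x i - x j)^2 ≤ (n:ℝ)^2 * (2*ε) := by
      calc ∑ i : Fin n, ∑ j, (x i - x j)^2
          ≤ ∑ i : Fin n, ∑ j : Fin n, 2*ε :=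
            Finset.sum_le_sum fun i _ => Finset.sum_le_sum fun j _ => hpair i j
        _ = (n:ℝ)^2 * (2*ε) := by
            simp [Finset.sum_const, Finset.card_univ]
            ring
    nlinarith
  -- smallness consequences
  have hnε : 0 ≤ (n:ℝ)*ε := by positivity
  have hs0 : 0 < Real.sqrt ((n:ℝ)*ε) := Real.sqrt_pos.mpr (by positivity)
  have hs3 : Real.sqrt ((n:ℝ)*ε) < 1/3 :=
    lt_of_le_of_lt (le_mul_of_one_le_left hs0.le hn1) hsmall
  have hu : (n:ℝ)*ε < 1/9 := by
    nlinarith [Real.sq_sqrt hnε, hs0, hs3]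
  have h1u : (0:ℝ) ≤ 1 - (n:ℝ)*ε := by nlinarith
  -- distance to the uniform vector
  set d2 : ℝ := ∑ i, (x i - 1/rn)^2 with hd2def
  have hd2nn : 0 ≤ d2 := Finset.sum_nonneg fun i _ => sq_nonneg _
  have hd2 : d2 ≤ 2 - 2*Real.sqrt (1 - (n:ℝ)*ε) := by
    have hexp : d2 = 2 - 2*(T/rn) := by
      have hc : ∀ i : Fin n, (x i - 1/rn)^2 = (x i)^2 + (1/rn)^2 - x i * (2/rn) := by
        intro i
        field_simp
        ring
      rw [hd2def, Finset.sum_congr rfl fun i _ => hc i, Finset.sum_sub_distrib,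
        Finset.sum_add_distrib, hsum2, Finset.sum_const, ← Finset.sum_mul, ← hTdef,
        Finset.card_univ, Fintype.card_fin, nsmul_eq_mul]
      have h1 : (n:ℝ) * (1/rn)^2 = 1 := by
        rw [div_pow, one_pow, hrnsq]
        field_simp
      rw [h1]
      field_simp
      ring
    have hTlow : Real.sqrt (1 - (n:ℝ)*ε) * rn ≤ T := by
      have key : Real.sqrt ((1 - (n:ℝ)*ε) * (n:ℝ)) ≤ Real.sqrt (T^2) := by
        apply Real.sqrt_le_sqrt
        nlinarith
      rw [Real.sqrt_mul h1u, Real.sqrt_sq hT0] at key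
      exact key
    have : Real.sqrt (1 - (n:ℝ)*ε) ≤ T/rn := by
      rw [le_div_iff₀ hrn0]
      exact hTlow
    linarith [hexp, this]
  set d : ℝ := Real.sqrt d2 with hddef
  have hd0 : 0 ≤ d := Real.sqrt_nonneg _
  have hdsq : d^2 = d2 := Real.sq_sqrt hd2nn
  -- Cauchy-Schwarz error bounds
  have herr : ∀ σ : Equiv.Perm (Fin n),
      ∑ j, |x (σ j) * x j - 1/(n:ℝ)| ≤ 2*d := by
    intro σ
    have ha1 : ∑ j, x (σ j) * |x j - 1/rn| ≤ d := by
      apply le_of_sq_le_sq' _ _ (Finset.sum_nonneg fun j _ =>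
        mul_nonneg (hx0 _) (abs_nonneg _)) hd0
      calc (∑ j, x (σ j) * |x j - 1/rn|)^2
          ≤ (∑ j, (x (σ j))^2) * ∑ j, |x j - 1/rn|^2 :=
            Finset.sum_mul_sq_le_sq_mul_sq _ _ _
        _ = d^2 := by
            rw [hperm2 σ, one_mul, hdsq, hd2def]
            exact Finset.sum_congr rfl fun j _ => sq_abs _
    have ha2 : ∑ j, (1/rn) * |x (σ j) - 1/rn| ≤ d := by
      rw [← Finset.mul_sum]
      have hre : ∑ j, |x (σ j) - 1/rn| = ∑ i, |x i - 1/rn| :=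
        Equiv.sum_comp σ (fun k => |x k - 1/rn|)
      rw [hre]
      have hcs : (∑ i, |x i - 1/rn|)^2 ≤ (n:ℝ) * d2 := by
        have := Finset.sum_mul_sq_le_sq_mul_sq Finset.univ
          (fun _ : Fin n => (1:ℝ)) (fun i => |x i - 1/rn|)
        simp only [one_pow, one_mul, Finset.sum_const, Finset.card_univ,
          Fintype.card_fin, nsmul_eq_mul, mul_one] at this
        calc (∑ i, |x i - 1/rn|)^2 ≤ (n:ℝ) * ∑ i, |x i - 1/rn|^2 := this
          _ = (n:ℝ) * d2 := by
              rw [hd2def]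
              congr 1
              exact Finset.sum_congr rfl fun i _ => sq_abs _
      have hsum_le : ∑ i, |x i - 1/rn| ≤ rn * d := by
        apply le_of_sq_le_sq' _ _ (Finset.sum_nonneg fun i _ => abs_nonneg _)
          (mul_nonneg hrn0.le hd0)
        calc (∑ i, |x i - 1/rn|)^2 ≤ (n:ℝ) * d2 := hcs
          _ = (rn * d)^2 := by rw [mul_pow, hrnsq, hdsq]
      calc (1/rn) * ∑ i, |x i - 1/rn| ≤ (1/rn) * (rn * d) := by
            apply mul_le_mul_of_nonneg_left hsum_le (by positivity)
        _ = d := by field_simp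
    have hpt : ∀ j : Fin n, |x (σ j) * x j - 1/(n:ℝ)|
        ≤ x (σ j) * |x j - 1/rn| + (1/rn) * |x (σ j) - 1/rn| := by
      intro j
      have h1n : (1:ℝ)/(n:ℝ) = (1/rn)*(1/rn) := by
        rw [← hrnsq]; field_simp
      have hsplit : x (σ j) * x j - 1/(n:ℝ)
          = x (σ j) * (x j - 1/rn) + (1/rn) * (x (σ j) - 1/rn) := by
        rw [h1n]; ring
      rw [hsplit]
      calc |x (σ j) * (x j - 1/rn) + (1/rn) * (x (σ j) - 1/rn)|
          ≤ |x (σ j) * (x j - 1/rn)| + |(1/rn) * (x (σ j) - 1/rn)| := abs_add_le _ _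
        _ = x (σ j) * |x j - 1/rn| + (1/rn) * |x (σ j) - 1/rn| := by
            rw [abs_mul, abs_mul, abs_of_nonneg (hx0 _), abs_of_nonneg (by positivity : (0:ℝ) ≤ 1/rn)]
    calc ∑ j, |x (σ j) * x j - 1/(n:ℝ)|
        ≤ ∑ j, (x (σ j) * |x j - 1/rn| + (1/rn) * |x (σ j) - 1/rn|) :=
          Finset.sum_le_sum fun j _ => hpt j
      _ = (∑ j, x (σ j) * |x j - 1/rn|) + ∑ j, (1/rn) * |x (σ j) - 1/rn| :=
          Finset.sum_add_distrib
      _ ≤ d + d := add_le_add ha1 ha2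
      _ = 2*d := by ring
  -- main argument
  intro A hA
  obtain ⟨σ, hσ⟩ := hmonomial A hA
  set c : Fin n → ℂ := fun j => A (σ j) j with hcdef
  have hcabs : ∀ j, ‖c j‖ = 1 := by
    intro j
    have := hσ (σ j) j
    rwa [if_pos rfl] at this
  -- inner with ξ
  have hinnerξ : (inner ℂ ξ (Matrix.toEuclideanLin A ξ) : ℂ)
      = ∑ j, c j * ((x (σ j) * x j : ℝ) : ℂ) := by
    rw [aux_inner_s7 n A σ hσ ξ]
    refine Finset.sum_congr rfl fun j _ => ?_
    rw [hxξ (σ j), hxξ j, Complex.conj_ofReal]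
    push_cast
    ring
  -- inner with η
  set η : EuclideanSpace ℂ (Fin n) := WithLp.toLp 2 (fun _ => ((1 / Real.sqrt n : ℝ) : ℂ)) with hηdef
  have hinnerη : (inner ℂ η (Matrix.toEuclideanLin A η) : ℂ)
      = ∑ j, c j * ((1/(n:ℝ) : ℝ) : ℂ) := by
    rw [aux_inner_s7 n A σ hσ η]
    refine Finset.sum_congr rfl fun j _ => ?_
    have h1n : (1:ℝ)/(n:ℝ) = (1/rn)*(1/rn) := by
      rw [← hrnsq]; field_simp
    simp only [hcdef, hηdef, PiLp.toLp_apply]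
    rw [Complex.conj_ofReal, h1n]
    push_cast
    ring
  -- difference bound
  have hdiff : ‖(∑ j, c j * ((x (σ j) * x j : ℝ) : ℂ))
      - ∑ j, c j * ((1/(n:ℝ) : ℝ) : ℂ)‖ ≤ 2*d := by
    rw [← Finset.sum_sub_distrib]
    refine le_trans (norm_sum_le _ _) (le_trans ?_ (herr σ))
    refine le_of_eq (Finset.sum_congr rfl fun j _ => ?_)
    rw [← mul_sub, norm_mul, hcabs j, one_mul, ← Complex.ofReal_sub, Complex.norm_real, Real.norm_eq_abs]
  have hwk : 1 - ε ≤ ‖∑ j, c j * ((x (σ j) * x j : ℝ) : ℂ)‖ := by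
    rw [← hinnerξ]; exact hweak A hA
  have htri : ‖∑ j, c j * ((x (σ j) * x j : ℝ) : ℂ)‖
      ≤ ‖∑ j, c j * ((1/(n:ℝ) : ℝ) : ℂ)‖ + 2*d := by
    calc ‖∑ j, c j * ((x (σ j) * x j : ℝ) : ℂ)‖
        ≤ ‖∑ j, c j * ((1/(n:ℝ) : ℝ) : ℂ)‖
          + ‖(∑ j, c j * ((x (σ j) * x j : ℝ) : ℂ))
            - ∑ j, c j * ((1/(n:ℝ) : ℝ) : ℂ)‖ := by
          have := norm_add_le (∑ j, c j * ((1/(n:ℝ) : ℝ) : ℂ))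
            ((∑ j, c j * ((x (σ j) * x j : ℝ) : ℂ)) - ∑ j, c j * ((1/(n:ℝ) : ℝ) : ℂ))
          simpa using this
      _ ≤ _ := by linarith [hdiff]
  have hnum := numeric n hn ε d hε hd0 (by rw [hdsq]; exact hd2) hsmall
  have hfin : 1 - 3*((n:ℝ)*Real.sqrt ((n:ℝ)*ε))
      ≤ ‖∑ j, c j * ((1/(n:ℝ) : ℝ) : ℂ)‖ := by
    linarith [hwk, htri, hnum]
  calc 1 - 3*((n:ℝ)*Real.sqrt ((n:ℝ)*ε))
      ≤ ‖∑ j, c j * ((1/(n:ℝ) : ℝ) : ℂ)‖ := hfin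
    _ = _ := by rw [← hinnerη]
end

section
/- Let k ≥ 1, let φ₁, …, φ_k ∈ [−π, π], and let 0 < ε < 1. If |1 + Σ_{j=1}^k e^{iφ_j}| ≥ (k+1)(1 − ε), then Σ_{j=1}^k |φ_j| < π √k (k+1) √(ε/2). -/
/-- Let `k ≥ 1`, `φ₁, …, φ_k ∈ [-π, π]`, and `0 < ε < 1`. If
`|1 + ∑ e^{iφ_j}| ≥ (k+1)(1-ε)`, then `∑ |φ_j| < π √k (k+1) √(ε/2)`. -/
theorem stmt_9 (k : ℕ) (hk : 1 ≤ k) (φ : Fin k → ℝ)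
    (hφ : ∀ j, -Real.pi ≤ φ j ∧ φ j ≤ Real.pi)
    (ε : ℝ) (hε : 0 < ε) (hε1 : ε < 1)
    (h : ((k : ℝ) + 1) * (1 - ε) ≤
      ‖1 + ∑ j, Complex.exp (φ j * Complex.I)‖) :
    ∑ j, |φ j| < Real.pi * Real.sqrt k * ((k : ℝ) + 1) * Real.sqrt (ε / 2) := by
  have hπ := Real.pi_pos
  set z : ℂ := 1 + ∑ j, Complex.exp (φ j * Complex.I) with hz
  set C : ℝ := ∑ j, Real.cos (φ j) with hC
  set S : ℝ := ∑ j, Real.sin (φ j) with hS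
  have hzre : z.re = 1 + C := by
    simp [hz, Complex.add_re, Complex.re_sum, Complex.exp_ofReal_mul_I_re, hC]
  have hzim : z.im = S := by
    simp [hz, Complex.add_im, Complex.im_sum, Complex.exp_ofReal_mul_I_im, hS]
  -- |w| ≤ k where w = ∑ e^{iφ_j}
  have hw : ‖∑ j, Complex.exp (φ j * Complex.I)‖ ≤ (k : ℝ) := by
    calc ‖∑ j, Complex.exp (φ j * Complex.I)‖
        ≤ ∑ j : Fin k, ‖Complex.exp (φ j * Complex.I)‖ := by
          exact norm_sum_le _ _
      _ = (k : ℝ) := by simp [Complex.norm_exp_ofReal_mul_I]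
  have hCS : C ^ 2 + S ^ 2 ≤ (k : ℝ) ^ 2 := by
    have := Complex.sq_norm (∑ j, Complex.exp (φ j * Complex.I))
    have hre : (∑ j, Complex.exp (φ j * Complex.I)).re = C := by
      simp [Complex.re_sum, Complex.exp_ofReal_mul_I_re, hC]
    have him : (∑ j, Complex.exp (φ j * Complex.I)).im = S := by
      simp [Complex.im_sum, Complex.exp_ofReal_mul_I_im, hS]
    have hsq : C ^ 2 + S ^ 2 = ‖∑ j, Complex.exp (φ j * Complex.I)‖ ^ 2 := by
      rw [Complex.sq_norm, Complex.normSq_apply, hre, him]; ring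
    rw [hsq]
    have h0 : (0:ℝ) ≤ ‖∑ j, Complex.exp (φ j * Complex.I)‖ :=
      norm_nonneg _
    exact pow_le_pow_left₀ h0 hw 2
  -- lower bound on |z|² gives bound on ∑ (1 - cos φ j)
  have hz2 : ((k : ℝ) + 1) ^ 2 * (1 - ε) ^ 2 ≤ 1 + 2 * C + (C ^ 2 + S ^ 2) := by
    have h1 : ((k : ℝ) + 1) * (1 - ε) ≥ 0 :=
      mul_nonneg (by positivity) (by linarith)
    have h2 : (((k : ℝ) + 1) * (1 - ε)) ^ 2 ≤ ‖z‖ ^ 2 :=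
      pow_le_pow_left₀ h1 h 2
    have h3 : ‖z‖ ^ 2 = (1 + C) ^ 2 + S ^ 2 := by
      rw [Complex.sq_norm, Complex.normSq_apply, hzre, hzim]; ring
    nlinarith [h2, h3]
  have hcos : ∑ j, (1 - Real.cos (φ j)) ≤ ((k : ℝ) + 1) ^ 2 * (2 * ε - ε ^ 2) / 2 := by
    have : ∑ j, (1 - Real.cos (φ j)) = (k : ℝ) - C := by
      rw [Finset.sum_sub_distrib]; simp [hC]
    rw [this]
    nlinarith [hCS, hz2]
  -- Jordan: φ² ≤ π²/2 · (1 - cos φ)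
  have hjordan : ∀ j, (φ j) ^ 2 ≤ Real.pi ^ 2 / 2 * (1 - Real.cos (φ j)) := by
    intro j
    have habs : |φ j| ≤ Real.pi := abs_le.2 ⟨(hφ j).1, (hφ j).2⟩
    have h2 : 2 / Real.pi ^ 2 * (φ j) ^ 2 ≤ 1 - Real.cos (φ j) := by
      have := Real.cos_le_one_sub_mul_cos_sq habs
      linarith
    have hπ2 : (0:ℝ) < Real.pi ^ 2 := by positivity
    calc (φ j) ^ 2 = Real.pi ^ 2 / 2 * (2 / Real.pi ^ 2 * (φ j) ^ 2) := by
          field_simp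
      _ ≤ Real.pi ^ 2 / 2 * (1 - Real.cos (φ j)) :=
          mul_le_mul_of_nonneg_left h2 (by positivity)
  have hsumsq : ∑ j, (φ j) ^ 2 < Real.pi ^ 2 * ((k : ℝ) + 1) ^ 2 * ε / 2 := by
    calc ∑ j, (φ j) ^ 2 ≤ ∑ j, Real.pi ^ 2 / 2 * (1 - Real.cos (φ j)) :=
          Finset.sum_le_sum fun j _ => hjordan j
      _ = Real.pi ^ 2 / 2 * ∑ j, (1 - Real.cos (φ j)) := by rw [Finset.mul_sum]
      _ ≤ Real.pi ^ 2 / 2 * (((k : ℝ) + 1) ^ 2 * (2 * ε - ε ^ 2) / 2) := by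
          apply mul_le_mul_of_nonneg_left hcos (by positivity)
      _ < Real.pi ^ 2 * ((k : ℝ) + 1) ^ 2 * ε / 2 := by
          have hpos : (0:ℝ) < Real.pi ^ 2 * ((k : ℝ) + 1) ^ 2 * ε ^ 2 := by positivity
          nlinarith [hpos]
  -- Cauchy–Schwarz
  have hcs : (∑ j, |φ j|) ^ 2 ≤ (k : ℝ) * ∑ j, (φ j) ^ 2 := by
    have := sq_sum_le_card_mul_sum_sq (s := Finset.univ) (f := fun j => |φ j|)
    simpa [sq_abs] using this
  -- conclude
  have hRHS : 0 ≤ Real.pi * Real.sqrt k * ((k : ℝ) + 1) * Real.sqrt (ε / 2) := by positivity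
  refine lt_of_pow_lt_pow_left₀ 2 hRHS ?_
  have hRHSsq : (Real.pi * Real.sqrt k * ((k : ℝ) + 1) * Real.sqrt (ε / 2)) ^ 2
      = Real.pi ^ 2 * (k : ℝ) * ((k : ℝ) + 1) ^ 2 * (ε / 2) := by
    have h1 : Real.sqrt (k : ℝ) ^ 2 = (k : ℝ) := Real.sq_sqrt (by positivity)
    have h2 : Real.sqrt (ε / 2) ^ 2 = ε / 2 := Real.sq_sqrt (by positivity)
    rw [mul_pow, mul_pow, mul_pow, h1, h2]
  rw [hRHSsq]
  calc (∑ j, |φ j|) ^ 2 ≤ (k : ℝ) * ∑ j, (φ j) ^ 2 := hcs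
    _ < (k : ℝ) * (Real.pi ^ 2 * ((k : ℝ) + 1) ^ 2 * ε / 2) := by
        apply mul_lt_mul_of_pos_left hsumsq
        exact_mod_cast Nat.pos_of_ne_zero (by omega)
    _ = Real.pi ^ 2 * (k : ℝ) * ((k : ℝ) + 1) ^ 2 * (ε / 2) := by ring
end

section
/- Let n ≥ 1 and 0 < ε < 2/n³. Suppose g₁, …, g_n are complex numbers of modulus 1 such that g₁g₂⋯g_n = 1 and |g₁ + ⋯ + g_n| ≥ n(1 − ε). Then there exists a complex number α with |α| = 1 and αⁿ = 1 such that Σ_{j=1}^n |g_j − α| < πn√(2nε) and (Σ_{j=1}^n |g_j − α|²)^{1/2} < πn√(2ε). -/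
open Complex Finset

/-- chord length -/
lemma chord_eq (x : ℝ) :
    ‖Complex.exp (x * Complex.I) - 1‖ = 2 * |Real.sin (x / 2)| := by
  have hre : (Complex.exp (x * Complex.I) - 1).re = Real.cos x - 1 := by
    simp [Complex.exp_ofReal_mul_I_re]
  have him : (Complex.exp (x * Complex.I) - 1).im = Real.sin x := by
    simp [Complex.exp_ofReal_mul_I_im]
  have hsq : ‖Complex.exp (x * Complex.I) - 1‖ ^ 2
      = (2 * |Real.sin (x / 2)|) ^ 2 := by
    rw [Complex.sq_norm, Complex.normSq_apply, hre, him]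
    have h1 : Real.sin (x / 2) ^ 2 = 1 / 2 - Real.cos (2 * (x / 2)) / 2 :=
      Real.sin_sq_eq_half_sub (x / 2)
    have h2 : Real.sin x ^ 2 + Real.cos x ^ 2 = 1 := Real.sin_sq_add_cos_sq x
    have h3 : |Real.sin (x / 2)| ^ 2 = Real.sin (x / 2) ^ 2 := sq_abs _
    rw [show 2 * (x / 2) = x by ring] at h1
    nlinarith
  have h0 : (0:ℝ) ≤ ‖Complex.exp (x * Complex.I) - 1‖ := norm_nonneg _
  have h0' : (0:ℝ) ≤ 2 * |Real.sin (x / 2)| := by positivity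
  nlinarith

lemma prod_sub_one_bound {ι : Type*} (s : Finset ι) (h : ι → ℂ)
    (hh : ∀ i ∈ s, ‖h i‖ ≤ 1) :
    ‖∏ i ∈ s, h i - 1‖ ≤ ∑ i ∈ s, ‖h i - 1‖ := by
  induction s using Finset.cons_induction with
  | empty => simp
  | cons a s ha ih =>
    rw [Finset.prod_cons, Finset.sum_cons]
    have hP : ‖∏ i ∈ s, h i‖ ≤ 1 := by
      calc ‖∏ i ∈ s, h i‖ = ∏ i ∈ s, ‖h i‖ := by
            simp [norm_prod]
        _ ≤ ∏ i ∈ s, (1:ℝ) := by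
            apply Finset.prod_le_prod
            · intro i _; exact norm_nonneg _
            · intro i hi; exact hh i (Finset.mem_cons_of_mem hi)
        _ = 1 := by simp
    calc ‖h a * ∏ i ∈ s, h i - 1‖
        = ‖(h a - 1) * ∏ i ∈ s, h i + (∏ i ∈ s, h i - 1)‖ := by ring_nf
      _ ≤ ‖(h a - 1) * ∏ i ∈ s, h i‖ + ‖∏ i ∈ s, h i - 1‖ :=
          norm_add_le _ _
      _ ≤ ‖h a - 1‖ * 1 + ∑ i ∈ s, ‖h i - 1‖ := by
          rw [norm_mul]
          exact add_le_add
            (mul_le_mul_of_nonneg_left hP (norm_nonneg _))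
            (ih (fun i hi => hh i (Finset.mem_cons_of_mem hi)))
      _ = ‖h a - 1‖ + ∑ i ∈ s, ‖h i - 1‖ := by ring

set_option maxHeartbeats 1000000 in
/-- Let `n ≥ 1` and `0 < ε < 2/n³`. If `g₁, …, g_n` are unimodular
complex numbers with `g₁ ⋯ g_n = 1` and `|g₁ + ⋯ + g_n| ≥ n(1-ε)`, then there is an `n`-th
root of unity `α` with `∑ |g_j - α| < πn√(2nε)` and `(∑ |g_j - α|²)^{1/2} < πn√(2ε)`. -/
theorem stmt_10 (n : ℕ) (hn : 1 ≤ n) (ε : ℝ) (hε : 0 < ε) (hε1 : ε < 2 / (n : ℝ) ^ 3)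
    (g : Fin n → ℂ) (hg : ∀ j, ‖g j‖ = 1)
    (hprod : ∏ j, g j = 1)
    (hsum : (n : ℝ) * (1 - ε) ≤ ‖∑ j, g j‖) :
    ∃ α : ℂ, ‖α‖ = 1 ∧ α ^ n = 1 ∧
      (∑ j, ‖g j - α‖) < Real.pi * n * Real.sqrt (2 * n * ε) ∧
      Real.sqrt (∑ j, ‖g j - α‖ ^ 2) < Real.pi * n * Real.sqrt (2 * ε) := by
  have hnR : (1:ℝ) ≤ n := by exact_mod_cast hn
  have hn0 : (0:ℝ) < n := by linarith
  have hπ := Real.pi_pos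
  have hπ3 := Real.pi_gt_three
  set S := ∑ j, g j with hS
  set φ := S.arg with hφdef
  set u := Complex.exp (↑φ * Complex.I) with hu
  have habsu : ‖u‖ = 1 := Complex.norm_exp_ofReal_mul_I φ
  have huS : (‖S‖ : ℂ) * u = S := Complex.norm_mul_exp_arg_mul_I S
  set c := Real.sqrt (2 * ε) with hc
  have hc0 : 0 < c := Real.sqrt_pos.mpr (by linarith)
  have hc2 : c ^ 2 = 2 * ε := Real.sq_sqrt (by linarith)
  have hnormu : Complex.normSq u = 1 := by
    rw [Complex.normSq_eq_norm_sq, habsu]; norm_num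
  have hcu : (starRingEnd ℂ) u * u = 1 := by
    rw [mul_comm, Complex.mul_conj, hnormu, Complex.ofReal_one]
  -- ℓ² distance to u
  have hterm : ∀ j, ‖g j - u‖ ^ 2 = 2 - 2 * (g j * (starRingEnd ℂ) u).re := by
    intro j
    rw [Complex.sq_norm, Complex.normSq_sub]
    have h1 : Complex.normSq (g j) = 1 := by
      rw [Complex.normSq_eq_norm_sq, hg j]; norm_num
    rw [h1, hnormu]; ring
  have hsum2 : ∑ j, ‖g j - u‖ ^ 2 ≤ 2 * n * ε := by
    have hre : (S * (starRingEnd ℂ) u).re = ‖S‖ := by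
      conv_lhs => rw [← huS]
      rw [mul_assoc, mul_comm u, hcu, mul_one, Complex.ofReal_re]
    have heq : ∑ j, ‖g j - u‖ ^ 2
        = 2 * n - 2 * (S * (starRingEnd ℂ) u).re := by
      calc ∑ j, ‖g j - u‖ ^ 2
          = ∑ j, (2 - 2 * (g j * (starRingEnd ℂ) u).re) := by
            exact Finset.sum_congr rfl (fun j _ => hterm j)
        _ = 2 * n - 2 * (S * (starRingEnd ℂ) u).re := by
            have hre2 : (S * (starRingEnd ℂ) u).re = ∑ j, (g j * (starRingEnd ℂ) u).re := by
              rw [hS, Finset.sum_mul, Complex.re_sum]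
            rw [Finset.sum_sub_distrib, Finset.sum_const, Finset.card_univ, Fintype.card_fin,
              hre2, Finset.mul_sum, nsmul_eq_mul]
            ring
    rw [heq, hre]
    nlinarith [hsum]
  -- ℓ¹ bound via Cauchy-Schwarz
  have hL1 : ∑ j, ‖g j - u‖ ≤ n * c := by
    have h1 : (∑ j, ‖g j - u‖) ^ 2
        ≤ (Finset.univ.card : ℝ) * ∑ j, ‖g j - u‖ ^ 2 :=
      sq_sum_le_card_mul_sum_sq
    rw [Finset.card_univ, Fintype.card_fin] at h1
    have hL0 : 0 ≤ ∑ j, ‖g j - u‖ :=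
      Finset.sum_nonneg (fun j _ => norm_nonneg _)
    have h2 : ((n:ℝ) * c) ^ 2 = n * (2 * n * ε) := by
      rw [mul_pow, hc2]; ring
    nlinarith [hsum2, hc0, hn0, h2, mul_pos hn0 hc0]
  -- |u^n - 1| bound
  have hun : ‖u ^ n - 1‖ ≤ n * c := by
    have hprod2 : ∏ j, ((starRingEnd ℂ) u * g j) = (starRingEnd ℂ) u ^ n := by
      rw [Finset.prod_mul_distrib, hprod, Finset.prod_const, mul_one, Finset.card_univ,
        Fintype.card_fin]
    have h1 : ‖(starRingEnd ℂ) u ^ n - 1‖ ≤ ∑ j, ‖g j - u‖ := by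
      rw [← hprod2]
      refine le_trans (prod_sub_one_bound _ _ ?_) (le_of_eq ?_)
      · intro i _
        rw [norm_mul, Complex.norm_conj, habsu, hg, one_mul]
      · refine Finset.sum_congr rfl (fun j _ => ?_)
        have : (starRingEnd ℂ) u * g j - 1 = (starRingEnd ℂ) u * (g j - u) := by
          rw [mul_sub, hcu]
        rw [this, norm_mul, Complex.norm_conj, habsu, one_mul]
    have h2 : ‖u ^ n - 1‖ = ‖(starRingEnd ℂ) u ^ n - 1‖ := by
      have h3 : (starRingEnd ℂ) (u ^ n - 1) = (starRingEnd ℂ) u ^ n - 1 := by simp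
      rw [← Complex.norm_conj (u ^ n - 1), h3]
    rw [h2]
    exact h1.trans hL1
  -- chord to sine
  have hsin : 2 * |Real.sin ((n:ℝ) * φ / 2)| ≤ n * c := by
    have hexp : u ^ n = Complex.exp (↑((n:ℝ) * φ) * Complex.I) := by
      rw [← Complex.exp_nat_mul]
      congr 1
      push_cast
      ring
    rw [← chord_eq, ← hexp]
    exact hun
  set k : ℤ := round ((n:ℝ) * φ / (2 * Real.pi)) with hk
  set θ : ℝ := (n:ℝ) * φ - 2 * Real.pi * k with hθdef
  have hθπ : |θ| ≤ Real.pi := by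
    have h := abs_sub_round ((n:ℝ) * φ / (2 * Real.pi))
    have h2 : θ = ((n:ℝ) * φ / (2 * Real.pi) - k) * (2 * Real.pi) := by
      field_simp [hθdef]
      exact hθdef
    rw [h2, abs_mul, _root_.abs_of_pos (by positivity : (0:ℝ) < 2 * Real.pi)]
    nlinarith
  have hsinθ : |Real.sin (θ / 2)| = |Real.sin ((n:ℝ) * φ / 2)| := by
    have h1 : (n:ℝ) * φ / 2 = θ / 2 + k * Real.pi := by rw [hθdef]; ring
    rw [h1, Real.sin_add_int_mul_pi, abs_mul]
    have h2 : |(-1:ℝ) ^ k| = 1 := by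
      rcases Int.even_or_odd k with h | h
      · rw [h.neg_one_zpow, abs_one]
      · rw [h.neg_one_zpow, abs_neg, abs_one]
    rw [h2, one_mul]
  have hθbound : |θ| ≤ Real.pi * (n * c) / 2 := by
    have habs : |Real.sin (θ / 2)| = Real.sin (|θ| / 2) := by
      rcases le_or_gt 0 θ with h | h
      · rw [_root_.abs_of_nonneg h, _root_.abs_of_nonneg]
        exact Real.sin_nonneg_of_nonneg_of_le_pi (by linarith)
          (by rw [_root_.abs_of_nonneg h] at hθπ; linarith)
      · have h2 : 0 ≤ Real.sin (-(θ / 2)) := by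
          refine Real.sin_nonneg_of_nonneg_of_le_pi (by linarith) ?_
          rw [_root_.abs_of_neg h] at hθπ; linarith
        rw [Real.sin_neg] at h2
        rw [_root_.abs_of_nonpos (by linarith), _root_.abs_of_neg h, show -θ / 2 = -(θ / 2) by ring,
          Real.sin_neg]
    have hjordan : 2 / Real.pi * (|θ| / 2) ≤ Real.sin (|θ| / 2) :=
      Real.mul_le_sin (by positivity) (by linarith [abs_nonneg θ, hθπ])
    rw [← habs, hsinθ] at hjordan
    have h3 : 2 / Real.pi * (|θ| / 2) = |θ| / Real.pi := by ring
    rw [h3, div_le_iff₀ hπ] at hjordan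
    nlinarith
  -- the root of unity
  set ψ : ℝ := 2 * Real.pi * k / n with hψ
  set A := Complex.exp (↑ψ * Complex.I) with hA
  have hnC : (n:ℂ) ≠ 0 := Nat.cast_ne_zero.mpr (by omega)
  refine ⟨A, Complex.norm_exp_ofReal_mul_I ψ, ?_, ?_⟩
  · rw [hA, ← Complex.exp_nat_mul]
    rw [show ((n:ℂ) * (↑ψ * Complex.I)) = (k : ℂ) * (2 * ↑Real.pi * Complex.I) by
      rw [hψ]; push_cast; field_simp]
    exact Complex.exp_int_mul_two_pi_mul_I k
  -- distance from u to A
  have hUA : ‖u - A‖ ≤ |θ| / n := by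
    have hfac : u - A = A * (Complex.exp (↑(φ - ψ) * Complex.I) - 1) := by
      rw [hA, hu, mul_sub, mul_one, ← Complex.exp_add]
      congr 2
      push_cast
      ring
    rw [hfac, norm_mul, Complex.norm_exp_ofReal_mul_I, one_mul, chord_eq]
    have h1 : |Real.sin ((φ - ψ) / 2)| ≤ |(φ - ψ) / 2| := Real.abs_sin_le_abs
    have h2 : φ - ψ = θ / n := by
      rw [hθdef, hψ]; field_simp
    rw [h2]
    have h3 : |θ / ↑n / 2| = |θ| / ↑n / 2 := by
      rw [_root_.abs_div, _root_.abs_div]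
      simp [_root_.abs_of_pos hn0]
    rw [h2, h3] at h1
    linarith
  -- final bounds
  have hB0 : 0 ≤ ‖u - A‖ := norm_nonneg _
  have hB : ‖u - A‖ ≤ Real.pi * c / 2 := by
    refine hUA.trans ?_
    rw [div_le_iff₀ hn0]
    exact hθbound.trans (le_of_eq (by ring))
  set B := ‖u - A‖ with hBdef
  have htri : ∀ j, ‖g j - A‖ ≤ ‖g j - u‖ + B :=
    fun j => norm_sub_le_norm_sub_add_norm_sub (g j) u A
  have hsqn : 1 ≤ Real.sqrt (n:ℝ) := Real.one_le_sqrt.mpr hnR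
  have hsn2 : Real.sqrt (n:ℝ) ^ 2 = n := Real.sq_sqrt hn0.le
  have hsnn : Real.sqrt (n:ℝ) ≤ n := by nlinarith [Real.sqrt_nonneg (n:ℝ)]
  constructor
  · -- ℓ¹ bound
    have h1 : ∑ j, ‖g j - A‖ ≤ n * c + n * B := by
      calc ∑ j, ‖g j - A‖ ≤ ∑ j, (‖g j - u‖ + B) :=
            Finset.sum_le_sum (fun j _ => htri j)
        _ = (∑ j, ‖g j - u‖) + n * B := by
            rw [Finset.sum_add_distrib, Finset.sum_const, Finset.card_univ, Fintype.card_fin,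
              nsmul_eq_mul]
        _ ≤ n * c + n * B := by linarith [hL1]
    have hrt : Real.sqrt (2 * n * ε) = Real.sqrt (n:ℝ) * c := by
      rw [hc, ← Real.sqrt_mul (Nat.cast_nonneg n)]
      congr 1
      ring
    rw [hrt]
    have h2 : Real.pi * n * c ≤ Real.pi * n * (Real.sqrt (n:ℝ) * c) := by
      nlinarith [mul_pos (mul_pos hπ hn0) hc0]
    nlinarith [h1, h2, hB, mul_pos hn0 hc0, mul_le_mul_of_nonneg_left hB hn0.le]
  · -- ℓ² bound
    have h1 : ∑ j, ‖g j - A‖ ^ 2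
        ≤ (Real.sqrt (n:ℝ) * (c * (1 + Real.pi / 2))) ^ 2 := by
      have e1 : ∑ j, ‖g j - A‖ ^ 2 ≤ ∑ j, (‖g j - u‖ + B) ^ 2 := by
        refine Finset.sum_le_sum (fun j _ => ?_)
        have := htri j
        nlinarith [norm_nonneg (g j - A)]
      have e2 : ∑ j, (‖g j - u‖ + B) ^ 2
          = (∑ j, ‖g j - u‖ ^ 2) + 2 * B * (∑ j, ‖g j - u‖)
            + n * B ^ 2 := by
        have e3 : ∀ j : Fin n, (‖g j - u‖ + B) ^ 2
            = ‖g j - u‖ ^ 2 + 2 * B * ‖g j - u‖ + B ^ 2 :=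
          fun j => by ring
        rw [Finset.sum_congr rfl (fun j _ => e3 j), Finset.sum_add_distrib,
          Finset.sum_add_distrib, Finset.sum_const, Finset.card_univ, Fintype.card_fin,
          nsmul_eq_mul, ← Finset.mul_sum]
      calc ∑ j, ‖g j - A‖ ^ 2
          ≤ (∑ j, ‖g j - u‖ ^ 2) + 2 * B * (∑ j, ‖g j - u‖)
            + n * B ^ 2 := by rw [← e2]; exact e1
        _ ≤ 2 * n * ε + 2 * B * (n * c) + n * B ^ 2 := by
            have := mul_le_mul_of_nonneg_left hL1 (by positivity : (0:ℝ) ≤ 2 * B)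
            linarith [hsum2]
        _ ≤ (Real.sqrt (n:ℝ) * (c * (1 + Real.pi / 2))) ^ 2 := by
            rw [mul_pow, hsn2]
            nlinarith [hc2, hn0.le, hc0,
              mul_le_mul hB hB hB0 (by positivity : (0:ℝ) ≤ Real.pi * c / 2),
              mul_le_mul_of_nonneg_left hB (by positivity : (0:ℝ) ≤ 2 * (n:ℝ) * c)]
    have h2 : Real.sqrt (∑ j, ‖g j - A‖ ^ 2)
        ≤ Real.sqrt (n:ℝ) * (c * (1 + Real.pi / 2)) := by
      have h0 : 0 ≤ Real.sqrt (n:ℝ) * (c * (1 + Real.pi / 2)) := by positivity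
      calc Real.sqrt (∑ j, ‖g j - A‖ ^ 2)
          ≤ Real.sqrt ((Real.sqrt (n:ℝ) * (c * (1 + Real.pi / 2))) ^ 2) :=
            Real.sqrt_le_sqrt h1
        _ = _ := Real.sqrt_sq h0
    refine lt_of_le_of_lt h2 ?_
    have h3 : Real.sqrt (n:ℝ) * (c * (1 + Real.pi / 2)) ≤ n * (c * (1 + Real.pi / 2)) :=
      mul_le_mul_of_nonneg_right hsnn (by positivity)
    nlinarith [mul_pos hn0 hc0]
end

section
/- Let ℂⁿ = V₁ ⊕ V₂ ⊕ ⋯ ⊕ V_k be an orthogonal direct sum decomposition into nonzero subspaces, and let 𝒢 be a group of n×n unitary matrices such that for every G ∈ 𝒢 and every j ∈ {1,…,k} there is an index π(j) with G(V_j) ⊆ V_{π(j)}. Let 0 < ε < 1 and let ξ ∈ ℂⁿ be a unit vector with |⟨Gξ, ξ⟩| ≥ 1 − ε for all G ∈ 𝒢; write ξ_i for the orthogonal projection of ξ onto V_i. If ξ_i ≠ 0, then for every G ∈ 𝒢 with G(V_i) ⊆ V_i one has |⟨Gξ_i, ξ_i⟩| ≥ ‖ξ_i‖² − ε; equivalently,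 the unit vector ξ_i/‖ξ_i‖ satisfies |⟨G(ξ_i/‖ξ_i‖), ξ_i/‖ξ_i‖⟩| ≥ 1 − ε/‖ξ_i‖². -/
/-- Let `ℂⁿ = V₁ ⊕ ⋯ ⊕ V_k` be an orthogonal direct sum of nonzero
subspaces, permuted by a group `G` of unitary matrices, let `ξ` be a weak `ε`-approximate
fixed point of `G` and `ξᵢ` its orthogonal projection onto `Vᵢ`. If `ξᵢ ≠ 0` then for
every `A ∈ G` with `A(Vᵢ) ⊆ Vᵢ` one has `|⟨Aξᵢ, ξᵢ⟩| ≥ ‖ξᵢ‖² - ε`; equivalently, the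
unit vector `ξᵢ/‖ξᵢ‖` satisfies `|⟨A(ξᵢ/‖ξᵢ‖), ξᵢ/‖ξᵢ‖⟩| ≥ 1 - ε/‖ξᵢ‖²`. -/
theorem stmt_12 (n : ℕ) (hn : 1 ≤ n) (k : ℕ) (hk : 1 ≤ k)
    (V : Fin k → Submodule ℂ (EuclideanSpace ℂ (Fin n)))
    (hVne : ∀ j, V j ≠ ⊥)
    (horth : ∀ i j, i ≠ j → ∀ x ∈ V i, ∀ y ∈ V j, (inner ℂ x y : ℂ) = 0)
    (hspan : (⨆ j, V j) = ⊤)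
    (G : Set (Matrix (Fin n) (Fin n) ℂ))
    (hone : (1 : Matrix (Fin n) (Fin n) ℂ) ∈ G)
    (hmul : ∀ A ∈ G, ∀ B ∈ G, A * B ∈ G)
    (hinv : ∀ A ∈ G, A⁻¹ ∈ G)
    (hunitary : ∀ A ∈ G, A ∈ Matrix.unitaryGroup (Fin n) ℂ)
    (hblock : ∀ A ∈ G, ∀ j : Fin k, ∃ p : Fin k,
      ∀ x ∈ V j, Matrix.toEuclideanLin A x ∈ V p)
    (ε : ℝ) (hε : 0 < ε) (hε1 : ε < 1)
    (ξ : EuclideanSpace ℂ (Fin n)) (hξ : ‖ξ‖ = 1)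
    (hweak : ∀ A ∈ G, 1 - ε ≤ ‖(inner ℂ ξ (Matrix.toEuclideanLin A ξ) : ℂ)‖)
    (i : Fin k)
    (hξi : ((Submodule.orthogonalProjectionOnto (V i) ξ : V i) : EuclideanSpace ℂ (Fin n)) ≠ 0) :
    ∀ A ∈ G, (∀ x ∈ V i, Matrix.toEuclideanLin A x ∈ V i) →
      (‖((Submodule.orthogonalProjectionOnto (V i) ξ : V i) : EuclideanSpace ℂ (Fin n))‖ ^ 2 - ε ≤
        ‖(inner ℂ
          ((Submodule.orthogonalProjectionOnto (V i) ξ : V i) : EuclideanSpace ℂ (Fin n))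
          (Matrix.toEuclideanLin A
            ((Submodule.orthogonalProjectionOnto (V i) ξ : V i) : EuclideanSpace ℂ (Fin n))) : ℂ)‖) ∧
      (1 - ε / ‖((Submodule.orthogonalProjectionOnto (V i) ξ : V i) : EuclideanSpace ℂ (Fin n))‖ ^ 2 ≤
        ‖(inner ℂ
          ((‖((Submodule.orthogonalProjectionOnto (V i) ξ : V i) : EuclideanSpace ℂ (Fin n))‖⁻¹ : ℂ) •
            ((Submodule.orthogonalProjectionOnto (V i) ξ : V i) : EuclideanSpace ℂ (Fin n)))
          (Matrix.toEuclideanLin A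
            ((‖((Submodule.orthogonalProjectionOnto (V i) ξ : V i) : EuclideanSpace ℂ (Fin n))‖⁻¹ : ℂ) •
              ((Submodule.orthogonalProjectionOnto (V i) ξ : V i) : EuclideanSpace ℂ (Fin n)))) : ℂ)‖) := by
  intro A hA hAVi
  set ξi : EuclideanSpace ℂ (Fin n) :=
    ((Submodule.orthogonalProjectionOnto (V i) ξ : V i) : EuclideanSpace ℂ (Fin n)) with hξidef
  set f : EuclideanSpace ℂ (Fin n) →ₗ[ℂ] EuclideanSpace ℂ (Fin n) :=
    (Matrix.toEuclideanLin A : _) with hf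
  set g : EuclideanSpace ℂ (Fin n) →ₗ[ℂ] EuclideanSpace ℂ (Fin n) :=
    (Matrix.toEuclideanLin (star A) : _) with hg
  have hU := hunitary A hA
  have hstar : star A * A = 1 := hU.1
  have hgf : ∀ v, g (f v) = v := by
    intro v
    simp [hf, hg, Matrix.toEuclideanLin_apply, Matrix.mulVec_mulVec, hstar]
  have hadj : ∀ x y, (inner ℂ x (f y) : ℂ) = inner ℂ (g x) y := by
    intro x y
    rw [hg, Matrix.star_eq_conjTranspose, Matrix.toEuclideanLin_conjTranspose_eq_adjoint,
      LinearMap.adjoint_inner_left]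
  have hnormf : ∀ v, ‖f v‖ = ‖v‖ := by
    intro v
    have h : (inner ℂ (f v) (f v) : ℂ) = inner ℂ v v := by rw [hadj, hgf]
    rw [@norm_eq_sqrt_re_inner ℂ, @norm_eq_sqrt_re_inner ℂ, h]
  have hinj : Function.Injective f := by
    intro a b h
    rw [← hgf a, ← hgf b, h]
  have hmap : Submodule.map f (V i) = V i := by
    apply Submodule.eq_of_le_of_finrank_le
    · rintro _ ⟨x, hx, rfl⟩; exact hAVi x hx
    · exact le_of_eq (Submodule.equivMapOfInjective f hinj (V i)).finrank_eq
  have hginv : ∀ x ∈ V i, g x ∈ V i := by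
    intro x hx
    rw [← hmap] at hx
    obtain ⟨y, hy, rfl⟩ := hx
    rw [hgf]; exact hy
  set η : EuclideanSpace ℂ (Fin n) := ξ - ξi with hη
  have hηmem : η ∈ (V i)ᗮ := Submodule.sub_starProjection_mem_orthogonal (K := V i) ξ
  have hξimem : ξi ∈ V i := SetLike.coe_mem _
  have hsum : ξ = ξi + η := by rw [hη]; abel
  have h1 : (inner ℂ η (f ξi) : ℂ) = 0 :=
    Submodule.inner_left_of_mem_orthogonal (hAVi _ hξimem) hηmem
  have h2 : (inner ℂ ξi (f η) : ℂ) = 0 := by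
    rw [hadj]
    exact Submodule.inner_right_of_mem_orthogonal (hginv _ hξimem) hηmem
  have hexp : (inner ℂ ξ (f ξ) : ℂ) = inner ℂ ξi (f ξi) + inner ℂ η (f η) := by
    rw [hsum, map_add, inner_add_left, inner_add_right, inner_add_right, h1, h2]
    ring
  have hpyth : ‖ξi‖ ^ 2 + ‖η‖ ^ 2 = 1 := by
    have h0 : (inner ℂ ξi η : ℂ) = 0 :=
      Submodule.inner_right_of_mem_orthogonal hξimem hηmem
    have hns := norm_add_sq (𝕜 := ℂ) ξi η
    rw [h0] at hns
    simp only [map_zero, mul_zero, add_zero, zero_add, mul_comm] at hns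
    rw [← hsum, hξ] at hns
    simpa using hns.symm
  have hbound : ‖(inner ℂ η (f η) : ℂ)‖ ≤ ‖η‖ ^ 2 := by
    calc ‖(inner ℂ η (f η) : ℂ)‖ = ‖(inner ℂ η (f η) : ℂ)‖ := rfl
      _ ≤ ‖η‖ * ‖f η‖ := norm_inner_le_norm _ _
      _ = ‖η‖ ^ 2 := by rw [hnormf]; ring
  have hpos : (0:ℝ) < ‖ξi‖ := norm_pos_iff.mpr hξi
  have hmain : ‖ξi‖ ^ 2 - ε ≤ ‖(inner ℂ ξi (f ξi) : ℂ)‖ := by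
    have hw := hweak A hA
    rw [show Matrix.toEuclideanLin A ξ = f ξ from rfl, hexp] at hw
    have htri : ‖(inner ℂ ξi (f ξi) : ℂ) + inner ℂ η (f η)‖
        ≤ ‖(inner ℂ ξi (f ξi) : ℂ)‖ + ‖(inner ℂ η (f η) : ℂ)‖ :=
      norm_add_le _ _
    nlinarith [hbound, hw, htri]
  refine ⟨hmain, ?_⟩
  have hsc : (inner ℂ ((‖ξi‖⁻¹ : ℂ) • ξi) (f ((‖ξi‖⁻¹ : ℂ) • ξi)) : ℂ)
      = ((‖ξi‖ : ℂ)⁻¹ * (‖ξi‖ : ℂ)⁻¹) * inner ℂ ξi (f ξi) := by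
    rw [map_smul, inner_smul_left, inner_smul_right, map_inv₀, Complex.conj_ofReal]
    ring
  rw [hsc]
  rw [norm_mul, norm_mul]
  have habs : ‖((‖ξi‖ : ℂ)⁻¹)‖ = ‖ξi‖⁻¹ := by
    rw [norm_inv, Complex.norm_of_nonneg (norm_nonneg _)]
  rw [habs]
  calc (1 : ℝ) - ε / ‖ξi‖ ^ 2 = (‖ξi‖ ^ 2 - ε) * (‖ξi‖⁻¹ * ‖ξi‖⁻¹) := by
        rw [show ‖ξi‖⁻¹ * ‖ξi‖⁻¹ = (‖ξi‖ ^ 2)⁻¹ by rw [← mul_inv, sq],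
          sub_mul, mul_inv_cancel₀ (by positivity), div_eq_mul_inv]
    _ ≤ ‖(inner ℂ ξi (f ξi) : ℂ)‖ * (‖ξi‖⁻¹ * ‖ξi‖⁻¹) := by
        apply mul_le_mul_of_nonneg_right hmain (by positivity)
    _ = ‖ξi‖⁻¹ * ‖ξi‖⁻¹ * ‖(inner ℂ ξi (f ξi) : ℂ)‖ := by ring
end

section
/- Let n ≥ 2 and 0 < ε < 1/(3600 n¹¹). Suppose 𝒢 is a monomial group of n×n unitary matrices and ξ ∈ ℂⁿ is a unit vector with |⟨Gξ, ξ⟩| ≥ 1 − ε for all G ∈ 𝒢. Then 𝒢 has a common eigenvector, i.e. there exists a nonzero vector ζ ∈ ℂⁿ such that for each G ∈ 𝒢 there is a scalar λ with Gζ = λζ. -/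
open Matrix Complex

noncomputable section Stmt13Aux

/-- Matrices as a Euclidean (Hilbert) space. -/
def Lmap (n : ℕ) : Matrix (Fin n) (Fin n) ℂ ≃ₗ[ℂ] EuclideanSpace ℂ (Fin n × Fin n) :=
  LinearEquiv.ofLinear
    { toFun := fun M => (WithLp.equiv 2 (Fin n × Fin n → ℂ)).symm fun p => M p.1 p.2
      map_add' := fun _ _ => rfl
      map_smul' := fun _ _ => rfl }
    { toFun := fun v => Matrix.of fun i j => v (i, j)
      map_add' := fun _ _ => rfl
      map_smul' := fun _ _ => rfl }
    rfl rfl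

variable {n : ℕ}

lemma Lmap_apply (M : Matrix (Fin n) (Fin n) ℂ) (p : Fin n × Fin n) :
    Lmap n M p = M p.1 p.2 := rfl

lemma inner_Lmap (M N : Matrix (Fin n) (Fin n) ℂ) :
    (inner ℂ (Lmap n M) (Lmap n N) : ℂ) = (Mᴴ * N).trace := by
  simp only [PiLp.inner_apply, RCLike.inner_apply, Lmap_apply, Matrix.trace,
    Matrix.diag_apply, Matrix.mul_apply, Matrix.conjTranspose_apply]
  rw [Fintype.sum_prod_type]
  rw [Finset.sum_comm]
  simp [mul_comm]

lemma inner_conj_conj (H M N : Matrix (Fin n) (Fin n) ℂ)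
    (h1 : Hᴴ * H = 1) :
    (inner ℂ (Lmap n (H * M * Hᴴ)) (Lmap n (H * N * Hᴴ)) : ℂ)
      = inner ℂ (Lmap n M) (Lmap n N) := by
  rw [inner_Lmap, inner_Lmap]
  have key : (H * M * Hᴴ)ᴴ * (H * N * Hᴴ) = H * (Mᴴ * N) * Hᴴ := by
    simp only [Matrix.conjTranspose_mul, Matrix.conjTranspose_conjTranspose,
      Matrix.mul_assoc]
    rw [← Matrix.mul_assoc Hᴴ H, h1, Matrix.one_mul]
  rw [key, Matrix.trace_mul_cycle, ← Matrix.mul_assoc, h1, Matrix.one_mul]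

lemma norm_Lmap_sq (M : Matrix (Fin n) (Fin n) ℂ) :
    ‖Lmap n M‖ ^ 2 = RCLike.re (inner ℂ (Lmap n M) (Lmap n M) : ℂ) := by
  rw [inner_self_eq_norm_sq (𝕜 := ℂ)]

lemma norm_conj (H M : Matrix (Fin n) (Fin n) ℂ) (h1 : Hᴴ * H = 1) :
    ‖Lmap n (H * M * Hᴴ)‖ = ‖Lmap n M‖ := by
  have h := inner_conj_conj H M M h1
  have h2 : ‖Lmap n (H * M * Hᴴ)‖ ^ 2 = ‖Lmap n M‖ ^ 2 := by
    rw [norm_Lmap_sq, norm_Lmap_sq, h]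
  rw [← Real.sqrt_sq (norm_nonneg (Lmap n (H * M * Hᴴ))),
    ← Real.sqrt_sq (norm_nonneg (Lmap n M)), h2]

lemma conj_vecMulVec (H : Matrix (Fin n) (Fin n) ℂ) (u : Fin n → ℂ) :
    H * Matrix.vecMulVec u (star u) * Hᴴ
      = Matrix.vecMulVec (H *ᵥ u) (star (H *ᵥ u)) := by
  ext i j
  simp only [Matrix.mul_apply, Matrix.vecMulVec_apply, Matrix.conjTranspose_apply,
    Matrix.mulVec, dotProduct, Pi.star_apply]
  rw [star_sum, Finset.sum_mul_sum]
  simp only [Finset.sum_mul]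
  rw [Finset.sum_comm]
  refine Finset.sum_congr rfl fun k _ => ?_
  refine Finset.sum_congr rfl fun l _ => ?_
  simp only [star_mul', star_star]
  ring

lemma vecMulVec_star_herm (u : Fin n → ℂ) :
    (Matrix.vecMulVec u (star u))ᴴ = Matrix.vecMulVec u (star u) := by
  ext i j
  simp only [Matrix.conjTranspose_apply, Matrix.vecMulVec_apply, Pi.star_apply,
    star_mul', star_star]
  ring

lemma vecMulVec_mulVec (u v w : Fin n → ℂ) :
    Matrix.vecMulVec u v *ᵥ w = (v ⬝ᵥ w) • u := by
  funext i
  simp only [Matrix.mulVec, Matrix.vecMulVec_apply, dotProduct, Pi.smul_apply,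
    smul_eq_mul, Finset.mul_sum]
  rw [Finset.sum_mul]
  refine Finset.sum_congr rfl fun k _ => ?_
  ring

lemma norm_Lmap_vecMulVec (u : Fin n → ℂ) (hu : star u ⬝ᵥ u = 1) :
    ‖Lmap n (Matrix.vecMulVec u (star u))‖ = 1 := by
  have htr : ((Matrix.vecMulVec u (star u))ᴴ * Matrix.vecMulVec u (star u)).trace = 1 := by
    rw [vecMulVec_star_herm]
    have : ((Matrix.vecMulVec u (star u)) * Matrix.vecMulVec u (star u)).trace
        = (star u ⬝ᵥ u) * (star u ⬝ᵥ u) := by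
      simp only [Matrix.trace, Matrix.diag_apply, Matrix.mul_apply,
        Matrix.vecMulVec_apply, dotProduct, Pi.star_apply]
      rw [Finset.sum_mul_sum]
      rw [Finset.sum_comm]
      refine Finset.sum_congr rfl fun k _ => ?_
      refine Finset.sum_congr rfl fun l _ => ?_
      ring
    rw [this, hu, one_mul]
  have hsq : ‖Lmap n (Matrix.vecMulVec u (star u))‖ ^ 2 = 1 := by
    rw [norm_Lmap_sq, inner_Lmap, htr]
    norm_num
  rw [← Real.sqrt_sq (norm_nonneg _), hsq, Real.sqrt_one]

/-- Conjugation by `H` as a linear endomorphism of the matrix Hilbert space. -/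
def conjLin (n : ℕ) (H : Matrix (Fin n) (Fin n) ℂ) :
    EuclideanSpace ℂ (Fin n × Fin n) →ₗ[ℂ] EuclideanSpace ℂ (Fin n × Fin n) where
  toFun x := Lmap n (H * (Lmap n).symm x * Hᴴ)
  map_add' x y := by
    rw [_root_.map_add, Matrix.mul_add, Matrix.add_mul, _root_.map_add]
  map_smul' c x := by
    rw [_root_.map_smul, Matrix.mul_smul, Matrix.smul_mul, _root_.map_smul]
    rfl

def dotLin (n : ℕ) (ξf : Fin n → ℂ) :
    EuclideanSpace ℂ (Fin n × Fin n) →ₗ[ℂ] ℂ where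
  toFun x := star ξf ⬝ᵥ ((Lmap n).symm x *ᵥ ξf)
  map_add' x y := by
    rw [_root_.map_add, Matrix.add_mulVec, dotProduct_add]
  map_smul' c x := by
    rw [_root_.map_smul, Matrix.smul_mulVec, dotProduct_smul]
    rfl

def innerFun (n : ℕ) (ξf : Fin n → ℂ) :
    EuclideanSpace ℂ (Fin n × Fin n) →ₗ[ℝ] ℝ :=
  Complex.reLm.comp ((dotLin n ξf).restrictScalars ℝ)

lemma innerFun_apply (ξf : Fin n → ℂ) (x : EuclideanSpace ℂ (Fin n × Fin n)) :
    innerFun n ξf x = (star ξf ⬝ᵥ ((Lmap n).symm x *ᵥ ξf)).re := rfl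

/-- The Hermitian defect as a real-linear map. -/
def hermDefect (n : ℕ) :
    EuclideanSpace ℂ (Fin n × Fin n) →ₗ[ℝ] Matrix (Fin n) (Fin n) ℂ where
  toFun x := ((Lmap n).symm x)ᴴ - (Lmap n).symm x
  map_add' x y := by
    rw [_root_.map_add, Matrix.conjTranspose_add]
    abel
  map_smul' a x := by
    rw [← algebraMap_smul ℂ a x, _root_.map_smul, Matrix.conjTranspose_smul, smul_sub]
    have hstar : star ((algebraMap ℝ ℂ) a) = (algebraMap ℝ ℂ) a := by
      simp [Complex.star_def, Complex.conj_ofReal]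
    rw [hstar, algebraMap_smul]
    rfl

/-- Uniqueness of the minimal-norm point of a convex set. -/
lemma min_norm_unique {F : Type*} [NormedAddCommGroup F] [InnerProductSpace ℝ F]
    {C : Set F} (hconv : Convex ℝ C) {q q' : F} (hq : q ∈ C) (hq' : q' ∈ C)
    (hmin : ‖(0:F) - q‖ = ⨅ w : C, ‖(0:F) - w‖) (hnorm : ‖q'‖ = ‖q‖) : q' = q := by
  have hmin' : ‖(0:F) - q'‖ = ⨅ w : C, ‖(0:F) - w‖ := by
    rw [zero_sub, norm_neg, hnorm, ← norm_neg, ← zero_sub]; exact hmin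
  have h1 := (norm_eq_iInf_iff_real_inner_le_zero hconv hq).mp hmin
  have h2 := (norm_eq_iInf_iff_real_inner_le_zero hconv hq').mp hmin'
  have a1 := h1 q' hq'
  have a2 := h2 q hq
  have key : (inner ℝ (q' - q) (q' - q) : ℝ) ≤ 0 := by
    have e1 : (0:F) - q = -q := zero_sub q
    have e2 : (0:F) - q' = -q' := zero_sub q'
    rw [e1] at a1; rw [e2] at a2
    have heq : (inner ℝ (-q) (q' - q) : ℝ) + (inner ℝ (-q') (q - q') : ℝ)
        = inner ℝ (q' - q) (q' - q) := by
      have hqq : q - q' = -(q' - q) := by abel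
      rw [hqq, inner_neg_neg, ← inner_add_left]
      congr 1; abel
    linarith [heq ▸ add_nonpos a1 a2]
  have := real_inner_self_nonpos.mp key
  rwa [sub_eq_zero] at this

end Stmt13Aux

set_option maxHeartbeats 1000000 in
/-- Let `n ≥ 2` and `0 < ε < 1/(3600 n¹¹)`. Every monomial group of
`n × n` unitary matrices with a weak `ε`-approximate fixed point has a common
eigenvector. -/
theorem stmt_13 (n : ℕ) (hn : 2 ≤ n) (ε : ℝ) (hε : 0 < ε)
    (hε1 : ε < 1 / (3600 * (n : ℝ) ^ 11))
    (G : Set (Matrix (Fin n) (Fin n) ℂ))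
    (hone : (1 : Matrix (Fin n) (Fin n) ℂ) ∈ G)
    (hmul : ∀ A ∈ G, ∀ B ∈ G, A * B ∈ G)
    (hinv : ∀ A ∈ G, A⁻¹ ∈ G)
    (hunitary : ∀ A ∈ G, A ∈ Matrix.unitaryGroup (Fin n) ℂ)
    (hmonomial : ∀ A ∈ G, ∃ σ : Equiv.Perm (Fin n),
      ∀ i j, ‖A i j‖ = if σ j = i then 1 else 0)
    (ξ : EuclideanSpace ℂ (Fin n)) (hξ : ‖ξ‖ = 1)
    (hweak : ∀ A ∈ G, 1 - ε ≤ ‖(inner ℂ ξ (Matrix.toEuclideanLin A ξ) : ℂ)‖) :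
    ∃ ζ : EuclideanSpace ℂ (Fin n), ζ ≠ 0 ∧
      ∀ A ∈ G, ∃ lam : ℂ, Matrix.toEuclideanLin A ζ = lam • ζ := by
  classical
  set ξf : Fin n → ℂ := (WithLp.equiv 2 (Fin n → ℂ)) ξ with hξfdef
  -- basic facts
  have hξdot : star ξf ⬝ᵥ ξf = 1 := by
    have h1 : (inner ℂ ξ ξ : ℂ) = (1 : ℂ) := by
      rw [inner_self_eq_norm_sq_to_K (𝕜 := ℂ), hξ]
      norm_num
    rw [← h1]
    simp only [PiLp.inner_apply, RCLike.inner_apply, dotProduct, Pi.star_apply]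
    exact Finset.sum_congr rfl fun i _ => mul_comm _ _
  have hAunit : ∀ A ∈ G, Aᴴ * A = 1 := by
    intro A hA
    have := (Matrix.mem_unitaryGroup_iff').mp (hunitary A hA)
    rwa [Matrix.star_eq_conjTranspose] at this
  have hAunit' : ∀ A ∈ G, A * Aᴴ = 1 := by
    intro A hA
    have := (Matrix.mem_unitaryGroup_iff).mp (hunitary A hA)
    rwa [Matrix.star_eq_conjTranspose] at this
  have hudot : ∀ A ∈ G, star (A *ᵥ ξf) ⬝ᵥ (A *ᵥ ξf) = 1 := by
    intro A hA
    rw [Matrix.star_mulVec, Matrix.dotProduct_mulVec, Matrix.vecMul_vecMul,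
      hAunit A hA, Matrix.vecMul_one, hξdot]
  -- the orbit of rank-one projectors and its closed convex hull
  set R : Matrix (Fin n) (Fin n) ℂ → Matrix (Fin n) (Fin n) ℂ :=
    fun A => Matrix.vecMulVec (A *ᵥ ξf) (star (A *ᵥ ξf)) with hRdef
  set O : Set (EuclideanSpace ℂ (Fin n × Fin n)) := (fun A => Lmap n (R A)) '' G with hOdef
  set C : Set (EuclideanSpace ℂ (Fin n × Fin n)) := closure (convexHull ℝ O) with hCdef
  have hCconv : Convex ℝ C := (convex_convexHull ℝ O).closure
  have hCne : C.Nonempty := ⟨Lmap n (R 1), subset_closure (subset_convexHull ℝ O ⟨1, hone, rfl⟩)⟩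
  obtain ⟨q, hqC, hqmin⟩ :=
    exists_norm_eq_iInf_of_complete_convex hCne isClosed_closure.isComplete hCconv 0
  -- conjugation invariance and the fixed point property of q
  have hRconj : ∀ H A : Matrix (Fin n) (Fin n) ℂ, H * R A * Hᴴ = R (H * A) := by
    intro H A
    rw [hRdef]
    dsimp only
    rw [conj_vecMulVec, Matrix.mulVec_mulVec]
  have hQfix : ∀ H ∈ G, Lmap n (H * (Lmap n).symm q * Hᴴ) = q := by
    intro H hH
    have hOsub : (conjLin n H) '' O ⊆ O := by
      rintro - ⟨-, ⟨A, hA, rfl⟩, rfl⟩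
      refine ⟨H * A, hmul H hH A hA, ?_⟩
      show Lmap n (R (H * A)) = conjLin n H (Lmap n (R A))
      rw [conjLin]
      dsimp only [LinearMap.coe_mk, AddHom.coe_mk]
      rw [LinearEquiv.symm_apply_apply, hRconj]
    have hCsub : (conjLin n H) '' C ⊆ C := by
      have hcont : Continuous (conjLin n H) :=
        (conjLin n H).continuous_of_finiteDimensional
      calc (conjLin n H) '' C ⊆ closure ((conjLin n H) '' (convexHull ℝ O)) :=
            image_closure_subset_closure_image hcont
        _ = closure (convexHull ℝ ((conjLin n H) '' O)) :=
            congrArg closure (((conjLin n H).restrictScalars ℝ).image_convexHull O)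
        _ ⊆ closure (convexHull ℝ O) := closure_mono (convexHull_mono hOsub)
    have hq' : conjLin n H q ∈ C := hCsub ⟨q, hqC, rfl⟩
    have hnorm : ‖conjLin n H q‖ = ‖q‖ := by
      have : ‖Lmap n (H * (Lmap n).symm q * Hᴴ)‖ = ‖Lmap n ((Lmap n).symm q)‖ :=
        norm_conj H _ (hAunit H hH)
      rwa [LinearEquiv.apply_symm_apply] at this
    exact min_norm_unique hCconv hqC hq' hqmin hnorm
  set Qm : Matrix (Fin n) (Fin n) ℂ := (Lmap n).symm q with hQmdef
  have hfix' : ∀ H ∈ G, H * Qm * Hᴴ = Qm := by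
    intro H hH
    have := congrArg (Lmap n).symm (hQfix H hH)
    rwa [LinearEquiv.symm_apply_apply] at this
  have hcomm : ∀ A ∈ G, A * Qm = Qm * A := by
    intro A hA
    have h1 := congrArg (· * A) (hfix' A hA)
    rw [Matrix.mul_assoc (A * Qm) Aᴴ A, hAunit A hA, Matrix.mul_one] at h1
    exact h1
  -- membership facts for q
  have hmemfact : ∀ (t : Set (EuclideanSpace ℂ (Fin n × Fin n))), IsClosed t →
      Convex ℝ t → O ⊆ t → q ∈ t := by
    intro t hcl hcv hO
    exact closure_minimal (convexHull_min hO hcv) hcl hqC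
  -- (1) Hermitian
  have hQHerm : Qm.IsHermitian := by
    have hq0 : hermDefect n q = 0 := by
      have := hmemfact ((hermDefect n) ⁻¹' {0})
        (IsClosed.preimage (hermDefect n).continuous_of_finiteDimensional isClosed_singleton)
        ((convex_singleton (0 : Matrix (Fin n) (Fin n) ℂ)).linear_preimage (hermDefect n))
        ?_
      · exact this
      · rintro - ⟨A, hA, rfl⟩
        show hermDefect n (Lmap n (R A)) = 0
        rw [hermDefect]
        dsimp only [LinearMap.coe_mk, AddHom.coe_mk]
        rw [LinearEquiv.symm_apply_apply, hRdef]
        dsimp only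
        rw [vecMulVec_star_herm, sub_self]
    have h2 : ((Lmap n).symm q)ᴴ - (Lmap n).symm q = 0 := hq0
    exact sub_eq_zero.mp h2
  -- small epsilon
  have hn2 : (2:ℝ) ≤ (n:ℝ) := by exact_mod_cast hn
  have hp11 : (1:ℝ) ≤ (n:ℝ)^11 := one_le_pow₀ (by linarith)
  have hε36 : ε < 1/3600 := by
    have h1 : (3600:ℝ) ≤ 3600*(n:ℝ)^11 := by nlinarith
    have h2 : 1/(3600*(n:ℝ)^11) ≤ 1/3600 := by
      apply one_div_le_one_div_of_le (by norm_num) h1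
    linarith
  have hε1' : ε < 1 := by linarith
  -- (2) inner product bound
  have hzeq : ∀ A : Matrix (Fin n) (Fin n) ℂ,
      (inner ℂ ξ (Matrix.toEuclideanLin A ξ) : ℂ) = star ξf ⬝ᵥ (A *ᵥ ξf) := by
    intro A
    simp only [PiLp.inner_apply, RCLike.inner_apply, dotProduct, Pi.star_apply]
    exact Finset.sum_congr rfl fun i _ => mul_comm _ _
  have hQinner : (1 - ε)^2 ≤ (star ξf ⬝ᵥ (Qm *ᵥ ξf)).re := by
    have hmm := hmemfact ((innerFun n ξf) ⁻¹' (Set.Ici ((1-ε)^2)))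
      (IsClosed.preimage (innerFun n ξf).continuous_of_finiteDimensional isClosed_Ici)
      ((convex_Ici _).linear_preimage (innerFun n ξf)) ?_
    · exact hmm
    · rintro - ⟨A, hA, rfl⟩
      show (1-ε)^2 ≤ innerFun n ξf (Lmap n (R A))
      rw [innerFun_apply, LinearEquiv.symm_apply_apply, hRdef]
      dsimp only
      rw [_root_.vecMulVec_mulVec, dotProduct_smul]
      set z : ℂ := star ξf ⬝ᵥ (A *ᵥ ξf) with hzdef
      have hsz : star (A *ᵥ ξf) ⬝ᵥ ξf = star z := by
        rw [hzdef, Matrix.star_dotProduct]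
      rw [hsz, smul_eq_mul]
      have hcz : star z * z = ((Complex.normSq z : ℝ) : ℂ) := by
        rw [Complex.star_def, mul_comm, Complex.mul_conj]
      rw [hcz, Complex.ofReal_re, ← Complex.sq_norm]
      have habs : 1 - ε ≤ ‖z‖ := by rw [hzdef, ← hzeq A]; exact hweak A hA
      have h1ε : (0:ℝ) ≤ 1 - ε := by linarith
      nlinarith [norm_nonneg z]
  -- (3) norm bound
  have hqnorm : ‖q‖ ≤ 1 := by
    have hmm := hmemfact (Metric.closedBall 0 1) Metric.isClosed_closedBall
      (convex_closedBall _ _) ?_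
    · rwa [Metric.mem_closedBall, dist_zero_right] at hmm
    · rintro - ⟨A, hA, rfl⟩
      show Lmap n (R A) ∈ Metric.closedBall 0 1
      rw [Metric.mem_closedBall, dist_zero_right, hRdef]
      dsimp only
      rw [norm_Lmap_vecMulVec _ (hudot A hA)]
  -- eigen decomposition
  set V : Matrix (Fin n) (Fin n) ℂ := ↑(Matrix.IsHermitian.eigenvectorUnitary hQHerm)
    with hVdef
  have hV1 : Vᴴ * V = 1 := by
    have := (Matrix.mem_unitaryGroup_iff').mp (Matrix.IsHermitian.eigenvectorUnitary hQHerm).2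
    rwa [Matrix.star_eq_conjTranspose] at this
  have hV2 : V * Vᴴ = 1 := by
    have := (Matrix.mem_unitaryGroup_iff).mp (Matrix.IsHermitian.eigenvectorUnitary hQHerm).2
    rwa [Matrix.star_eq_conjTranspose] at this
  set μ : Fin n → ℝ := hQHerm.eigenvalues with hμdef
  set D : Matrix (Fin n) (Fin n) ℂ := Matrix.diagonal (fun i => (μ i : ℂ)) with hDdef
  have hspec : Qm = V * D * Vᴴ := by
    have h0 := hQHerm.spectral_theorem
    rw [Unitary.conjStarAlgAut_apply, Matrix.star_eq_conjTranspose] at h0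
    exact h0
  have hQV : Qm * V = V * D := by
    rw [hspec, Matrix.mul_assoc (V * D) Vᴴ V, hV1, Matrix.mul_one]
  set c0 : Fin n → ℂ := Vᴴ *ᵥ ξf with hc0def
  have hstarc0 : star c0 = star ξf ᵥ* V := by
    rw [hc0def, Matrix.star_mulVec, Matrix.conjTranspose_conjTranspose]
  have hc0dot : star c0 ⬝ᵥ c0 = 1 := by
    rw [hstarc0, hc0def, Matrix.dotProduct_mulVec, Matrix.vecMul_vecMul,
      hV2, Matrix.vecMul_one, hξdot]
  have hsumc0 : ∑ i, Complex.normSq (c0 i) = 1 := by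
    have h1 : star c0 ⬝ᵥ c0 = ((∑ i, Complex.normSq (c0 i) : ℝ) : ℂ) := by
      rw [dotProduct]
      push_cast
      refine Finset.sum_congr rfl fun i _ => ?_
      rw [Pi.star_apply, Complex.star_def, mul_comm, Complex.mul_conj]
    rw [hc0dot] at h1
    exact_mod_cast h1.symm
  have hrayleigh : (star ξf ⬝ᵥ (Qm *ᵥ ξf)).re = ∑ i, μ i * Complex.normSq (c0 i) := by
    have h1 : Qm *ᵥ ξf = V *ᵥ (D *ᵥ c0) := by
      rw [hc0def, Matrix.mulVec_mulVec, Matrix.mulVec_mulVec, ← hspec]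
    rw [h1, Matrix.dotProduct_mulVec (star ξf) V, ← hstarc0]
    have h2 : ∀ i, (D *ᵥ c0) i = (μ i : ℂ) * c0 i := by
      intro i
      rw [hDdef]
      exact Matrix.mulVec_diagonal _ _ _
    rw [dotProduct]
    rw [Complex.re_sum]
    refine Finset.sum_congr rfl fun i _ => ?_
    rw [h2 i, Pi.star_apply, Complex.star_def]
    have : (starRingEnd ℂ) (c0 i) * ((μ i : ℂ) * c0 i)
        = ((μ i * Complex.normSq (c0 i) : ℝ) : ℂ) := by
      push_cast
      rw [← Complex.mul_conj (c0 i)]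
      ring
    rw [this, Complex.ofReal_re]
  -- pick the top eigenvalue
  haveI : Nonempty (Fin n) := ⟨⟨0, by omega⟩⟩
  obtain ⟨i₀, hi₀⟩ := Finite.exists_max μ
  have hμ0 : (1 - ε)^2 ≤ μ i₀ := by
    calc (1-ε)^2 ≤ (star ξf ⬝ᵥ (Qm *ᵥ ξf)).re := hQinner
      _ = ∑ i, μ i * Complex.normSq (c0 i) := hrayleigh
      _ ≤ ∑ i, μ i₀ * Complex.normSq (c0 i) :=
          Finset.sum_le_sum fun i _ =>
            mul_le_mul_of_nonneg_right (hi₀ i) (Complex.normSq_nonneg _)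
      _ = μ i₀ * ∑ i, Complex.normSq (c0 i) := by rw [← Finset.mul_sum]
      _ = μ i₀ := by rw [hsumc0, mul_one]
  have hfrob : ∑ i, (μ i)^2 ≤ 1 := by
    have hq2 : ‖q‖^2 ≤ 1 := by nlinarith [norm_nonneg q]
    have hqLm : q = Lmap n Qm := (LinearEquiv.apply_symm_apply (Lmap n) q).symm
    have hmul2 : (V * D * Vᴴ) * (V * D * Vᴴ) = V * (D * D) * Vᴴ := by
      calc (V*D*Vᴴ)*(V*D*Vᴴ) = V*(D*((Vᴴ*V)*(D*Vᴴ))) := by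
            simp only [Matrix.mul_assoc]
        _ = V * (D * D) * Vᴴ := by
            rw [hV1, Matrix.one_mul]
            simp only [Matrix.mul_assoc]
    have h2 : (Qmᴴ * Qm).trace = ((∑ i, (μ i)^2 : ℝ) : ℂ) := by
      rw [hQHerm]
      nth_rewrite 1 [hspec]
      nth_rewrite 1 [hspec]
      rw [hmul2, Matrix.trace_mul_cycle, ← Matrix.mul_assoc, hV1, Matrix.one_mul, hDdef,
        Matrix.diagonal_mul_diagonal, Matrix.trace_diagonal]
      push_cast
      refine Finset.sum_congr rfl fun i _ => ?_
      ring
    have h1 : ‖q‖^2 = (∑ i, (μ i)^2 : ℝ) := by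
      rw [hqLm, norm_Lmap_sq, inner_Lmap, h2]
      simp only [RCLike.re_to_complex, Complex.ofReal_re]
    linarith [h1, hq2]
  have hhalf : (1:ℝ)/2 < μ i₀ ^ 2 := by
    have ha : (0.98:ℝ) ≤ (1-ε)^2 := by nlinarith
    have hb : (0.98:ℝ) ≤ μ i₀ := le_trans ha hμ0
    nlinarith [hb, mul_self_nonneg (μ i₀ - 0.98)]
  have hμj : ∀ j, j ≠ i₀ → μ j ≠ μ i₀ := by
    intro j hj heq
    have hpair : ∑ i ∈ ({i₀, j} : Finset (Fin n)), (μ i)^2 = μ i₀^2 + μ j^2 :=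
      Finset.sum_pair (Ne.symm hj)
    have hle : ∑ i ∈ ({i₀,j} : Finset (Fin n)), (μ i)^2 ≤ ∑ i, (μ i)^2 :=
      Finset.sum_le_sum_of_subset_of_nonneg (Finset.subset_univ _)
        (fun i _ _ => sq_nonneg _)
    rw [hpair, heq] at hle
    nlinarith
  -- the eigenvector
  set ζf : Fin n → ℂ := fun i => V i i₀ with hζfdef
  have hζV : V *ᵥ Pi.single i₀ 1 = ζf := by
    rw [Matrix.mulVec_single_one]
    funext j
    rw [hζfdef]
    exact Matrix.transpose_apply V i₀ j
  have heig : Qm *ᵥ ζf = (μ i₀ : ℂ) • ζf := by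
    rw [← hζV, Matrix.mulVec_mulVec, hQV, ← Matrix.mulVec_mulVec, hDdef,
      Matrix.diagonal_mulVec_single, mul_one]
    have hsingle : Pi.single (M := fun _ : Fin n => ℂ) i₀ ((μ i₀ : ℂ))
        = (μ i₀ : ℂ) • Pi.single (M := fun _ : Fin n => ℂ) i₀ 1 := by
      funext j
      simp only [Pi.single_apply, Pi.smul_apply, smul_eq_mul]
      split_ifs <;> simp
    rw [hsingle, Matrix.mulVec_smul, hζV]
  refine ⟨(WithLp.equiv 2 (Fin n → ℂ)).symm ζf, ?_, ?_⟩
  · intro h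
    have hz : ζf = 0 := by
      have h3 := congrArg (WithLp.equiv 2 (Fin n → ℂ)) h
      simpa using h3
    have h1 : (Vᴴ * V) i₀ i₀ = 1 := by rw [hV1]; simp [Matrix.one_apply]
    rw [Matrix.mul_apply] at h1
    have hzk : ∀ k, V k i₀ = 0 := fun k => congrFun hz k
    simp [Matrix.conjTranspose_apply, hzk] at h1
  · intro A hA
    have hAQ : A * Qm = Qm * A := hcomm A hA
    set w : Fin n → ℂ := A *ᵥ ζf with hwdef
    set cc : Fin n → ℂ := Vᴴ *ᵥ w with hccdef
    have hwV : V *ᵥ cc = w := by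
      rw [hccdef, Matrix.mulVec_mulVec, hV2, Matrix.one_mulVec]
    have hQw : Qm *ᵥ w = (μ i₀ : ℂ) • w := by
      rw [hwdef, Matrix.mulVec_mulVec, ← hAQ, ← Matrix.mulVec_mulVec, heig,
        Matrix.mulVec_smul]
    have hDc : D *ᵥ cc = (μ i₀ : ℂ) • cc := by
      have h1 : V *ᵥ (D *ᵥ cc) = V *ᵥ ((μ i₀ : ℂ) • cc) := by
        rw [Matrix.mulVec_mulVec, ← hQV, ← Matrix.mulVec_mulVec, hwV, hQw,
          Matrix.mulVec_smul, hwV]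
      have e : ∀ x : Fin n → ℂ, Vᴴ *ᵥ (V *ᵥ x) = x := by
        intro x; rw [Matrix.mulVec_mulVec, hV1, Matrix.one_mulVec]
      have h2 : Vᴴ *ᵥ (V *ᵥ (D *ᵥ cc)) = Vᴴ *ᵥ (V *ᵥ ((μ i₀ : ℂ) • cc)) := by rw [h1]
      rwa [e, e] at h2
    have hcj : ∀ j, j ≠ i₀ → cc j = 0 := by
      intro j hj
      have h1 := congrFun hDc j
      rw [hDdef] at h1
      have h2 : (Matrix.diagonal (fun i => (μ i : ℂ)) *ᵥ cc) j = (μ j : ℂ) * cc j :=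
        Matrix.mulVec_diagonal _ _ _
      rw [h2] at h1
      have h3 : ((μ j : ℂ) - (μ i₀ : ℂ)) * cc j = 0 := by
        rw [sub_mul, h1]
        simp
      rcases mul_eq_zero.mp h3 with h4 | h4
      · exfalso
        apply hμj j hj
        have : (μ j : ℂ) = (μ i₀ : ℂ) := by linear_combination h4
        exact_mod_cast this
      · exact h4
    have hccsingle : cc = cc i₀ • Pi.single (M := fun _ : Fin n => ℂ) i₀ 1 := by
      funext j
      by_cases hji : j = i₀
      · subst hji
        simp
      · rw [hcj j hji]
        simp [Pi.single_apply, hji]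
    have hw : w = cc i₀ • ζf := by
      rw [← hwV]
      nth_rewrite 1 [hccsingle]
      rw [Matrix.mulVec_smul, hζV]
    refine ⟨cc i₀, ?_⟩
    rw [WithLp.equiv_symm_apply, Matrix.toEuclideanLin_apply_piLp_toLp, ← hwdef, hw]
    rfl
end

section
/- Let n ≥ 2 and 0 < ε < 1/(3600 n¹¹). Suppose 𝒢 is a finite group of n×n complex unitary matrices and there exists a unit vector ξ ∈ ℂⁿ with |⟨Gξ, ξ⟩| ≥ 1 − ε for all G ∈ 𝒢. Then 𝒢 is reducible, i.e. there exists a linear subspace W ⊆ ℂⁿ with 0 < dim W < n such that G(W) ⊆ W for every G ∈ 𝒢. -/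
open scoped InnerProductSpace

private lemma bessel_two {F : Type*} [NormedAddCommGroup F] [InnerProductSpace ℂ F]
    {a b : F} (ha : ‖a‖ = 1) (hb : ‖b‖ = 1) (hab : (inner ℂ a b : ℂ) = 0) (x : F) :
    ‖(inner ℂ a x : ℂ)‖ ^ 2 + ‖(inner ℂ b x : ℂ)‖ ^ 2 ≤ ‖x‖ ^ 2 := by
  have hba : (inner ℂ b a : ℂ) = 0 := by
    rw [← inner_conj_symm b a, hab]; simp
  have horth : Orthonormal ℂ (![a, b]) := by
    rw [orthonormal_iff_ite]
    intro i j
    fin_cases i <;> fin_cases j <;>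
      simp [inner_self_eq_norm_sq_to_K, ha, hb, hab, hba]
  have key := horth.sum_inner_products_le (s := (Finset.univ : Finset (Fin 2))) x
  simpa [Fin.sum_univ_two] using key

set_option maxHeartbeats 1000000 in
/-- Let `n ≥ 2` and `0 < ε < 1/(3600 n¹¹)`. Every finite group of
`n × n` unitary matrices with a weak `ε`-approximate fixed point is reducible: it has a
common invariant subspace `W` with `0 < dim W < n`. -/
theorem stmt_14 (n : ℕ) (hn : 2 ≤ n) (ε : ℝ) (hε : 0 < ε)
    (hε1 : ε < 1 / (3600 * (n : ℝ) ^ 11))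
    (G : Set (Matrix (Fin n) (Fin n) ℂ))
    (hfin : G.Finite)
    (hone : (1 : Matrix (Fin n) (Fin n) ℂ) ∈ G)
    (hmul : ∀ A ∈ G, ∀ B ∈ G, A * B ∈ G)
    (hinv : ∀ A ∈ G, A⁻¹ ∈ G)
    (hunitary : ∀ A ∈ G, A ∈ Matrix.unitaryGroup (Fin n) ℂ)
    (ξ : EuclideanSpace ℂ (Fin n)) (hξ : ‖ξ‖ = 1)
    (hweak : ∀ A ∈ G, 1 - ε ≤ ‖(inner ℂ ξ (Matrix.toEuclideanLin A ξ) : ℂ)‖) :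
    ∃ W : Submodule ℂ (EuclideanSpace ℂ (Fin n)),
      0 < Module.finrank ℂ W ∧ Module.finrank ℂ W < n ∧
      ∀ A ∈ G, ∀ x ∈ W, Matrix.toEuclideanLin A x ∈ W := by
  classical
  let f : Matrix (Fin n) (Fin n) ℂ → Module.End ℂ (EuclideanSpace ℂ (Fin n)) :=
    fun M => Matrix.toEuclideanLin M
  have hf_mul : ∀ A B : Matrix (Fin n) (Fin n) ℂ, f (A * B) = f A * f B := by
    intro A B
    show Matrix.toEuclideanLin (A * B) = _
    rw [Matrix.toEuclideanLin_eq_toLin, Matrix.toLin_mul _ (PiLp.basisFun 2 ℂ (Fin n)) _]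
    rfl
  have hf_one : f 1 = 1 := by
    show Matrix.toEuclideanLin (1 : Matrix (Fin n) (Fin n) ℂ) = _
    rw [Matrix.toEuclideanLin_eq_toLin, Matrix.toLin_one]
    rfl
  -- inverses are conjugate transposes
  have hinv_star : ∀ A ∈ G, A⁻¹ = star A := by
    intro A hA
    exact Matrix.inv_eq_right_inv ((Matrix.mem_unitaryGroup_iff).mp (hunitary A hA))
  have hmul_inv : ∀ A ∈ G, A * A⁻¹ = 1 := by
    intro A hA
    rw [hinv_star A hA]
    exact (Matrix.mem_unitaryGroup_iff).mp (hunitary A hA)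
  have hinv_mul : ∀ A ∈ G, A⁻¹ * A = 1 := by
    intro A hA
    rw [hinv_star A hA]
    exact (Matrix.mem_unitaryGroup_iff').mp (hunitary A hA)
  have hadj : ∀ A ∈ G, f A⁻¹ = LinearMap.adjoint (f A) := by
    intro A hA
    rw [hinv_star A hA]
    exact Matrix.toEuclideanLin_conjTranspose_eq_adjoint A
  have hinner_inv : ∀ A ∈ G, ∀ x y : EuclideanSpace ℂ (Fin n),
      (inner ℂ x (f A⁻¹ y) : ℂ) = inner ℂ (f A x) y := by
    intro A hA x y
    rw [hadj A hA]
    exact LinearMap.adjoint_inner_right _ x y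
  -- norm preservation
  have hnorm : ∀ A ∈ G, ∀ x : EuclideanSpace ℂ (Fin n),
      (inner ℂ (f A x) (f A x) : ℂ) = inner ℂ x x := by
    intro A hA x
    have h0 := hinner_inv A hA x (f A x)
    rw [← h0]
    have h1 : f A⁻¹ (f A x) = x := by
      have h2 : f A⁻¹ * f A = 1 := by rw [← hf_mul, hinv_mul A hA, hf_one]
      calc f A⁻¹ (f A x) = (f A⁻¹ * f A) x := rfl
        _ = x := by rw [h2]; rfl
    rw [h1]
  -- the finset of group elements
  set S : Finset (Matrix (Fin n) (Fin n) ℂ) := hfin.toFinset with hSdef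
  have hmemS : ∀ A, A ∈ S ↔ A ∈ G := fun A => hfin.mem_toFinset
  have hSone : (1 : Matrix (Fin n) (Fin n) ℂ) ∈ S := (hmemS _).mpr hone
  -- rank one projection onto ξ
  let P : Module.End ℂ (EuclideanSpace ℂ (Fin n)) := LinearMap.smulRight (innerₛₗ ℂ ξ) ξ
  have hP_apply : ∀ x : EuclideanSpace ℂ (Fin n), P x = (inner ℂ ξ x : ℂ) • ξ := fun x => rfl
  -- the averaged operator
  set T : Module.End ℂ (EuclideanSpace ℂ (Fin n)) := ∑ g ∈ S, f g * P * f g⁻¹ with hTdef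
  -- T commutes with all elements of G
  have hcomm : ∀ h ∈ G, f h * T = T * f h := by
    intro h hh
    rw [hTdef, Finset.mul_sum, Finset.sum_mul]
    refine Finset.sum_bij' (fun g _ => h * g) (fun g _ => h⁻¹ * g) ?_ ?_ ?_ ?_ ?_
    · intro g hg
      exact (hmemS _).mpr (hmul h hh g ((hmemS _).mp hg))
    · intro g hg
      exact (hmemS _).mpr (hmul h⁻¹ (hinv h hh) g ((hmemS _).mp hg))
    · intro g hg
      show h⁻¹ * (h * g) = g
      rw [← mul_assoc, hinv_mul h hh, one_mul]
    · intro g hg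
      show h * (h⁻¹ * g) = g
      rw [← mul_assoc, hmul_inv h hh, one_mul]
    · intro g hg
      have h1 : (h * g)⁻¹ * h = g⁻¹ := by
        rw [Matrix.mul_inv_rev, mul_assoc, hinv_mul h hh, mul_one]
      have e1 : f (h * g) * P * f (h * g)⁻¹ * f h = f (h * g) * P * (f (h * g)⁻¹ * f h) := by
        simp only [mul_assoc]
      rw [e1, ← hf_mul, h1, hf_mul h g]
      simp only [mul_assoc]
  -- existence of an eigenvalue
  have hnE : Module.finrank ℂ (EuclideanSpace ℂ (Fin n)) = n := finrank_euclideanSpace_fin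
  have hnontriv : Nontrivial (EuclideanSpace ℂ (Fin n)) := by
    apply Module.nontrivial_of_finrank_pos (R := ℂ)
    rw [hnE]; omega
  obtain ⟨μ, hμ⟩ := Module.End.exists_eigenvalue T
  obtain ⟨v, hvW, hv0⟩ := hμ.exists_hasEigenvector
  refine ⟨Module.End.eigenspace T μ, ?_, ?_, ?_⟩
  · rw [Module.finrank_pos_iff]
    exact ⟨⟨⟨v, hvW⟩, 0, fun h => hv0 (by simpa using congrArg Subtype.val h)⟩⟩
  · -- the eigenspace is proper
    by_contra hlt
    push_neg at hlt
    have hle : Module.finrank ℂ (Module.End.eigenspace T μ) ≤ n :=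
      le_trans (Submodule.finrank_le _) (le_of_eq hnE)
    have heq : Module.finrank ℂ (Module.End.eigenspace T μ)
        = Module.finrank ℂ (EuclideanSpace ℂ (Fin n)) := by
      rw [hnE]; omega
    have htop : Module.End.eigenspace T μ = ⊤ := Submodule.eq_top_of_finrank_eq heq
    have hTx : ∀ x : EuclideanSpace ℂ (Fin n), T x = μ • x := by
      intro x
      have hx : x ∈ Module.End.eigenspace T μ := htop ▸ Submodule.mem_top
      exact Module.End.mem_eigenspace_iff.mp hx
    -- find a unit vector orthogonal to ξ
    have hξ0 : ξ ≠ 0 := by intro h; rw [h, norm_zero] at hξ; norm_num at hξ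
    have hKrank : Module.finrank ℂ ((ℂ ∙ ξ)ᗮ : Submodule ℂ (EuclideanSpace ℂ (Fin n))) = n - 1 := by
      have h1 := Submodule.finrank_add_finrank_orthogonal (ℂ ∙ ξ : Submodule ℂ (EuclideanSpace ℂ (Fin n)))
      rw [finrank_span_singleton hξ0, hnE] at h1
      omega
    obtain ⟨y, hyK, hy0⟩ : ∃ y : EuclideanSpace ℂ (Fin n), y ∈ (ℂ ∙ ξ)ᗮ ∧ y ≠ 0 := by
      have hpos : 0 < Module.finrank ℂ ((ℂ ∙ ξ)ᗮ : Submodule ℂ (EuclideanSpace ℂ (Fin n))) := by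
        omega
      rw [Module.finrank_pos_iff] at hpos
      obtain ⟨⟨y, hy⟩, hy0⟩ := exists_ne (0 : ((ℂ ∙ ξ)ᗮ : Submodule ℂ (EuclideanSpace ℂ (Fin n))))
      exact ⟨y, hy, fun h => hy0 (by simpa using h)⟩
    set η : EuclideanSpace ℂ (Fin n) := (‖y‖ : ℂ)⁻¹ • y with hηdef
    have hη : ‖η‖ = 1 := by
      rw [hηdef, norm_smul]
      simp [norm_ne_zero_iff.mpr hy0]
    have hξη : (inner ℂ ξ η : ℂ) = 0 := by
      rw [hηdef, inner_smul_right]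
      have h2 := (Submodule.mem_orthogonal _ y).mp hyK ξ (Submodule.mem_span_singleton_self ξ)
      rw [h2, mul_zero]
    -- the key identity for ⟪w, T w⟫
    have hTval : ∀ w : EuclideanSpace ℂ (Fin n), (inner ℂ w (T w) : ℂ) =
        ∑ g ∈ S, (starRingEnd ℂ) (inner ℂ w (f g ξ)) * (inner ℂ w (f g ξ) : ℂ) := by
      intro w
      have h3 : T w = ∑ g ∈ S, (inner ℂ ξ (f g⁻¹ w) : ℂ) • f g ξ := by
        rw [hTdef, LinearMap.sum_apply]
        refine Finset.sum_congr rfl fun g hg => ?_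
        show (f g) (P ((f g⁻¹) w)) = _
        rw [hP_apply, map_smul]
      rw [h3, inner_sum]
      refine Finset.sum_congr rfl fun g hg => ?_
      rw [inner_smul_right, hinner_inv g ((hmemS _).mp hg) ξ w, ← inner_conj_symm (f g ξ) w]
    -- norms of f g ξ
    have hgξnorm : ∀ g ∈ S, ‖f g ξ‖ = 1 := by
      intro g hg
      have h1 := hnorm g ((hmemS _).mp hg) ξ
      rw [inner_self_eq_norm_sq_to_K, inner_self_eq_norm_sq_to_K, hξ] at h1
      have h3 : (‖f g ξ‖ : ℝ) ^ 2 = 1 ^ 2 := by exact_mod_cast h1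
      nlinarith [norm_nonneg (f g ξ)]
    -- evaluate at ξ and η
    have hinnerself : (inner ℂ ξ ξ : ℂ) = 1 := by
      rw [inner_self_eq_norm_sq_to_K, hξ]; norm_num
    have hμξ : (μ : ℂ) = ∑ g ∈ S, (starRingEnd ℂ) (inner ℂ ξ (f g ξ)) * (inner ℂ ξ (f g ξ) : ℂ) := by
      rw [← hTval ξ, hTx ξ, inner_smul_right, hinnerself, mul_one]
    have hμη : (μ : ℂ) = ∑ g ∈ S, (starRingEnd ℂ) (inner ℂ η (f g ξ)) * (inner ℂ η (f g ξ) : ℂ) := by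
      rw [← hTval η, hTx η, inner_smul_right, inner_self_eq_norm_sq_to_K, hη]
      norm_num
    -- pass to real parts
    have hre : ∀ z : ℂ, ((starRingEnd ℂ) z * z).re = ‖z‖ ^ 2 := by
      intro z
      have h12 : ((starRingEnd ℂ) z * z) = (((‖z‖ : ℝ) ^ 2 : ℝ) : ℂ) := by
        rw [mul_comm, Complex.mul_conj, Complex.normSq_eq_norm_sq]
      rw [h12]; exact Complex.ofReal_re _
    have hμre1 : μ.re = ∑ g ∈ S, ‖(inner ℂ ξ (f g ξ) : ℂ)‖ ^ 2 := by
      rw [hμξ, Complex.re_sum]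
      exact Finset.sum_congr rfl fun g _ => hre _
    have hμre2 : μ.re = ∑ g ∈ S, ‖(inner ℂ η (f g ξ) : ℂ)‖ ^ 2 := by
      rw [hμη, Complex.re_sum]
      exact Finset.sum_congr rfl fun g _ => hre _
    -- upper bound: 2 μ.re ≤ |S|
    have hupper : 2 * μ.re ≤ (S.card : ℝ) := by
      have h5 : 2 * μ.re
          = ∑ g ∈ S, (‖(inner ℂ ξ (f g ξ) : ℂ)‖ ^ 2 + ‖(inner ℂ η (f g ξ) : ℂ)‖ ^ 2) := by
        rw [Finset.sum_add_distrib, ← hμre1, ← hμre2]; ring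
      rw [h5]
      calc ∑ g ∈ S, (‖(inner ℂ ξ (f g ξ) : ℂ)‖ ^ 2 + ‖(inner ℂ η (f g ξ) : ℂ)‖ ^ 2)
          ≤ ∑ _g ∈ S, (1 : ℝ) := by
            refine Finset.sum_le_sum fun g hg => ?_
            have h6 := bessel_two hξ hη hξη (f g ξ)
            rw [hgξnorm g hg] at h6
            simpa using h6
        _ = (S.card : ℝ) := by simp
    -- lower bound
    have hlower : (S.card : ℝ) * (1 - ε) ^ 2 ≤ μ.re := by
      rw [hμre1]
      calc (S.card : ℝ) * (1 - ε) ^ 2 = ∑ _g ∈ S, (1 - ε) ^ 2 := by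
            rw [Finset.sum_const, nsmul_eq_mul]
        _ ≤ ∑ g ∈ S, ‖(inner ℂ ξ (f g ξ) : ℂ)‖ ^ 2 := by
            refine Finset.sum_le_sum fun g hg => ?_
            have hw := hweak g ((hmemS _).mp hg)
            have hεn : ε < 1 := by
              have h2 : (1 : ℝ) ≤ (n : ℝ) ^ 11 := by
                apply one_le_pow₀
                exact_mod_cast Nat.one_le_of_lt hn
              have h7 : 1 / (3600 * (n : ℝ) ^ 11) ≤ 1 / 3600 := by
                apply div_le_div_of_nonneg_left <;> nlinarith
              nlinarith
            have h1ε : (0 : ℝ) ≤ 1 - ε := by linarith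
            have h8 : (1 - ε) ≤ ‖(inner ℂ ξ (f g ξ) : ℂ)‖ := by
              exact hw
            nlinarith [norm_nonneg (inner ℂ ξ (f g ξ) : ℂ)]
    have hScard : (1 : ℝ) ≤ (S.card : ℝ) := by
      have h9 : 0 < S.card := Finset.card_pos.mpr ⟨1, hSone⟩
      exact_mod_cast h9
    have hεsmall : ε < 1 / 3600 := by
      have h2 : (1 : ℝ) ≤ (n : ℝ) ^ 11 := by
        apply one_le_pow₀
        exact_mod_cast Nat.one_le_of_lt hn
      have h7 : 1 / (3600 * (n : ℝ) ^ 11) ≤ 1 / 3600 := by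
        apply div_le_div_of_nonneg_left <;> nlinarith
      linarith
    have hc : (0 : ℝ) < S.card := by linarith
    have h10 : (S.card : ℝ) * (2 * (1 - ε) ^ 2 - 1) ≤ 0 := by nlinarith
    have h11 : 0 < 2 * (1 - ε) ^ 2 - 1 := by nlinarith [sq_nonneg ε]
    nlinarith [mul_pos hc h11]
  · -- invariance
    intro A hA x hx
    rw [Module.End.mem_eigenspace_iff] at hx ⊢
    have h1 : T (Matrix.toEuclideanLin A x) = (T * f A) x := rfl
    rw [h1, ← hcomm A hA]
    show f A (T x) = _
    rw [hx, map_smul]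
end

section
/- Let n ≥ 2 and 0 < ε < 1/(3600 n¹¹). Suppose 𝒢 is a compact (equivalently, closed) subgroup of the group of n×n complex unitary matrices and there exists a unit vector ξ ∈ ℂⁿ with |⟨Gξ, ξ⟩| ≥ 1 − ε for all G ∈ 𝒢. Then 𝒢 is reducible, i.e. there exists a linear subspace W ⊆ ℂⁿ with 0 < dim W < n such that G(W) ⊆ W for every G ∈ 𝒢. -/
open Matrix Module.End

namespace Stmt18Aux

variable {n : ℕ}

noncomputable def mvec (M : Matrix (Fin n) (Fin n) ℂ) : EuclideanSpace ℂ (Fin n × Fin n) :=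
  (WithLp.equiv 2 ((Fin n × Fin n) → ℂ)).symm (fun p => M p.1 p.2)

def munvec (x : EuclideanSpace ℂ (Fin n × Fin n)) : Matrix (Fin n) (Fin n) ℂ :=
  Matrix.of fun i j => x (i, j)

@[simp] lemma munvec_mvec (M : Matrix (Fin n) (Fin n) ℂ) : munvec (mvec M) = M := rfl

@[simp] lemma mvec_munvec (x : EuclideanSpace ℂ (Fin n × Fin n)) : mvec (munvec x) = x := rfl

lemma mvec_apply (M : Matrix (Fin n) (Fin n) ℂ) (p : Fin n × Fin n) : mvec M p = M p.1 p.2 := rfl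

lemma mvec_add (M N : Matrix (Fin n) (Fin n) ℂ) : mvec (M + N) = mvec M + mvec N := rfl

lemma mvec_smul (r : ℝ) (M : Matrix (Fin n) (Fin n) ℂ) : mvec (r • M) = r • mvec M := rfl

lemma munvec_add (x y : EuclideanSpace ℂ (Fin n × Fin n)) :
    munvec (x + y) = munvec x + munvec y := rfl

lemma munvec_smul (r : ℝ) (x : EuclideanSpace ℂ (Fin n × Fin n)) :
    munvec (r • x) = r • munvec x := rfl

lemma munvec_continuous : Continuous (munvec (n := n)) := by
  refine continuous_pi fun i => continuous_pi fun j => ?_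
  exact (continuous_apply (i, j)).comp (PiLp.continuous_ofLp 2 fun _ : Fin n × Fin n => ℂ)

lemma inner_mvec (M N : Matrix (Fin n) (Fin n) ℂ) :
    (inner ℂ (mvec M) (mvec N) : ℂ) = Matrix.trace (Mᴴ * N) := by
  simp only [PiLp.inner_apply, mvec_apply, RCLike.inner_apply, Matrix.trace, Matrix.diag,
    Matrix.mul_apply, Matrix.conjTranspose_apply]
  rw [Fintype.sum_prod_type, Finset.sum_comm]
  simp [mul_comm]

lemma norm_mvec_sq (M : Matrix (Fin n) (Fin n) ℂ) :
    ‖mvec M‖ ^ 2 = (Matrix.trace (Mᴴ * M)).re := by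
  rw [← inner_mvec M M]
  rw [← RCLike.re_to_complex, inner_self_eq_norm_sq (𝕜 := ℂ)]

lemma conj_trace_eq (B M : Matrix (Fin n) (Fin n) ℂ) (hB : Bᴴ * B = 1) :
    Matrix.trace ((B * M * Bᴴ)ᴴ * (B * M * Bᴴ)) = Matrix.trace (Mᴴ * M) := by
  have h1 : (B * M * Bᴴ)ᴴ = B * Mᴴ * Bᴴ := by
    simp [Matrix.conjTranspose_mul, Matrix.mul_assoc]
  rw [h1]
  have h2 : B * Mᴴ * Bᴴ * (B * M * Bᴴ) = B * (Mᴴ * M) * Bᴴ := by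
    simp only [Matrix.mul_assoc]
    rw [← Matrix.mul_assoc Bᴴ B, hB, Matrix.one_mul]
  rw [h2, Matrix.trace_mul_cycle, ← Matrix.mul_assoc, hB, Matrix.one_mul]

lemma norm_mvec_conj (B M : Matrix (Fin n) (Fin n) ℂ) (hB : Bᴴ * B = 1) :
    ‖mvec (B * M * Bᴴ)‖ = ‖mvec M‖ := by
  have h1 := norm_mvec_sq (B * M * Bᴴ)
  have h2 := norm_mvec_sq M
  rw [conj_trace_eq B M hB] at h1
  nlinarith [norm_nonneg (mvec (B * M * Bᴴ)), norm_nonneg (mvec M)]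

lemma toEuclideanLin_apply' (M : Matrix (Fin n) (Fin n) ℂ) (v : EuclideanSpace ℂ (Fin n))
    (i : Fin n) : Matrix.toEuclideanLin M v i = ∑ j, M i j * v j := rfl

lemma toEuclideanLin_mul (M N : Matrix (Fin n) (Fin n) ℂ) :
    Matrix.toEuclideanLin (M * N) =
      (Matrix.toEuclideanLin M).comp (Matrix.toEuclideanLin N) := by
  rw [Matrix.toEuclideanLin_eq_toLin]
  exact Matrix.toLin_mul _ _ _ M N

end Stmt18Aux

section Main
open Stmt18Aux

set_option maxHeartbeats 2000000 in
/-- Let `n ≥ 2` and `0 < ε < 1/(3600 n¹¹)`. Every compact (equivalently,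
closed) group of `n × n` unitary matrices with a weak `ε`-approximate fixed point is
reducible: it has a common invariant subspace `W` with `0 < dim W < n`. -/
theorem stmt_18 (n : ℕ) (hn : 2 ≤ n) (ε : ℝ) (hε : 0 < ε)
    (hε1 : ε < 1 / (3600 * (n : ℝ) ^ 11))
    (G : Set (Matrix (Fin n) (Fin n) ℂ))
    (hone : (1 : Matrix (Fin n) (Fin n) ℂ) ∈ G)
    (hmul : ∀ A ∈ G, ∀ B ∈ G, A * B ∈ G)
    (hinv : ∀ A ∈ G, A⁻¹ ∈ G)
    (hunitary : ∀ A ∈ G, A ∈ Matrix.unitaryGroup (Fin n) ℂ)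
    (hcompact : IsCompact G)
    (ξ : EuclideanSpace ℂ (Fin n)) (hξ : ‖ξ‖ = 1)
    (hweak : ∀ A ∈ G, 1 - ε ≤ ‖(inner ℂ ξ (Matrix.toEuclideanLin A ξ) : ℂ)‖) :
    ∃ W : Submodule ℂ (EuclideanSpace ℂ (Fin n)),
      0 < Module.finrank ℂ W ∧ Module.finrank ℂ W < n ∧
      ∀ A ∈ G, ∀ x ∈ W, Matrix.toEuclideanLin A x ∈ W := by
  classical
  -- numeric facts
  have hn2 : (2 : ℝ) ≤ (n : ℝ) := by exact_mod_cast hn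
  have hε4 : ε < 1 / 4 := by
    have h1 : (1 : ℝ) ≤ (n : ℝ) ^ 11 := one_le_pow₀ (by linarith)
    have h2 : (3600 : ℝ) ≤ 3600 * (n : ℝ) ^ 11 := by nlinarith
    have h3 : 1 / (3600 * (n : ℝ) ^ 11) ≤ 1 / 3600 := by
      rw [div_le_div_iff₀ (by nlinarith) (by norm_num)]
      nlinarith
    linarith
  -- unitary facts
  have huni : ∀ A ∈ G, Aᴴ * A = 1 ∧ A * Aᴴ = 1 := by
    intro A hA
    have h := hunitary A hA
    have h2 := (Unitary.mem_iff).mp h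
    rw [Matrix.star_eq_conjTranspose] at h2
    exact h2
  -- the rank one projection P = ξ ξ*
  set P : Matrix (Fin n) (Fin n) ℂ :=
    Matrix.of fun i j => ξ i * (starRingEnd ℂ) (ξ j) with hPdef
  have hPapply : ∀ v : EuclideanSpace ℂ (Fin n),
      Matrix.toEuclideanLin P v = (inner ℂ ξ v : ℂ) • ξ := by
    intro v
    ext i
    rw [toEuclideanLin_apply', PiLp.smul_apply, PiLp.inner_apply]
    simp only [hPdef, Matrix.of_apply]
    simp only [RCLike.inner_apply, smul_eq_mul, Finset.sum_mul]
    exact Finset.sum_congr rfl fun j _ => by ring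
  have hPherm : Pᴴ = P := by
    ext i j
    simp only [Matrix.conjTranspose_apply, hPdef, Matrix.of_apply, star_mul']
    simp [mul_comm]
  have htraceP : Matrix.trace P = 1 := by
    have h1 : Matrix.trace P = ∑ i, ξ i * (starRingEnd ℂ) (ξ i) := rfl
    have h2 : (inner ℂ ξ ξ : ℂ) = ∑ i, (starRingEnd ℂ) (ξ i) * ξ i := by
      rw [PiLp.inner_apply]; simp only [RCLike.inner_apply]
      exact Finset.sum_congr rfl fun i _ => by ring
    have h3 : (inner ℂ ξ ξ : ℂ) = 1 := by
      rw [inner_self_eq_norm_sq_to_K (𝕜 := ℂ), hξ]; norm_num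
    rw [h1, ← h3, h2]
    exact Finset.sum_congr rfl fun i _ => by ring
  -- generator facts
  have hgenherm : ∀ A ∈ G, (A * P * Aᴴ)ᴴ = A * P * Aᴴ := by
    intro A hA
    simp [Matrix.conjTranspose_mul, hPherm, Matrix.mul_assoc]
  have hgentrace : ∀ A ∈ G, Matrix.trace (A * P * Aᴴ) = 1 := by
    intro A hA
    rw [Matrix.trace_mul_cycle, (huni A hA).1, Matrix.one_mul, htraceP]
  have hgeninner : ∀ A ∈ G,
      (1 - ε) ^ 2 ≤ (inner ℂ ξ (Matrix.toEuclideanLin (A * P * Aᴴ) ξ) : ℂ).re := by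
    intro A hA
    set c : ℂ := (inner ℂ ξ (Matrix.toEuclideanLin A ξ) : ℂ) with hc
    have h1 : Matrix.toEuclideanLin (A * P * Aᴴ) ξ =
        (starRingEnd ℂ) c • Matrix.toEuclideanLin A ξ := by
      rw [toEuclideanLin_mul, toEuclideanLin_mul]
      simp only [LinearMap.comp_apply]
      rw [Matrix.toEuclideanLin_conjTranspose_eq_adjoint]
      have h2 : (inner ℂ ξ (LinearMap.adjoint (Matrix.toEuclideanLin A) ξ) : ℂ)
          = (starRingEnd ℂ) c := by
        rw [LinearMap.adjoint_inner_right, ← inner_conj_symm]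
      rw [hPapply, h2]
      exact _root_.map_smul (Matrix.toEuclideanLin A) _ _
    rw [h1, inner_smul_right]
    have h3 : (starRingEnd ℂ) c * c = ((‖c‖ : ℝ) : ℂ) ^ 2 := by
      rw [mul_comm, Complex.mul_conj']
    rw [← hc, h3]
    have h4 : (((‖c‖ : ℝ) : ℂ) ^ 2).re = (‖c‖) ^ 2 := by
      rw [← Complex.ofReal_pow, Complex.ofReal_re]
    rw [h4]
    have h5 : 1 - ε ≤ ‖c‖ := hweak A hA
    nlinarith [norm_nonneg c]
  -- the compact convex set S
  set f : Matrix (Fin n) (Fin n) ℂ → EuclideanSpace ℂ (Fin n × Fin n) :=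
    fun A => mvec (A * P * Aᴴ) with hfdef
  set S₀ : Set (EuclideanSpace ℂ (Fin n × Fin n)) := f '' G with hS₀def
  set S : Set (EuclideanSpace ℂ (Fin n × Fin n)) := closure (convexHull ℝ S₀) with hSdef
  have hS₀S : S₀ ⊆ S := fun x hx => subset_closure (subset_convexHull ℝ S₀ hx)
  have hSne : S.Nonempty := ⟨f 1, hS₀S ⟨1, hone, rfl⟩⟩
  have hSconv : Convex ℝ S := (convex_convexHull ℝ S₀).closure
  have hScomplete : IsComplete S := isClosed_closure.isComplete
  obtain ⟨t, htS, htmin⟩ :=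
    exists_norm_eq_iInf_of_complete_convex hSne hScomplete hSconv (0 : EuclideanSpace ℂ (Fin n × Fin n))
  have hminle : ∀ w ∈ S, ‖t‖ ≤ ‖w‖ := by
    intro w hw
    have hb : BddBelow (Set.range fun w : S => ‖(0 : EuclideanSpace ℂ (Fin n × Fin n)) - ↑w‖) := by
      refine ⟨0, ?_⟩
      rintro r ⟨w, rfl⟩
      positivity
    have h1 := ciInf_le hb (⟨w, hw⟩ : S)
    rw [← htmin] at h1
    simpa using h1
  have huniq : ∀ y ∈ S, ‖y‖ = ‖t‖ → y = t := by
    intro y hy hnorm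
    have hmid : (2⁻¹ : ℝ) • t + (2⁻¹ : ℝ) • y ∈ S :=
      hSconv htS hy (by norm_num) (by norm_num) (by norm_num)
    have h1 : ‖t‖ ≤ ‖(2⁻¹ : ℝ) • t + (2⁻¹ : ℝ) • y‖ := hminle _ hmid
    rw [← smul_add, norm_smul] at h1
    have h3 : ‖(2⁻¹ : ℝ)‖ = 2⁻¹ := by norm_num
    rw [h3] at h1
    have hpar := parallelogram_law_with_norm ℂ t y
    have h5 : ‖t - y‖ = 0 := by
      nlinarith [norm_nonneg (t - y), norm_nonneg (t + y), norm_nonneg t]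
    have h6 := norm_sub_eq_zero_iff.mp h5
    exact h6.symm
  set T : Matrix (Fin n) (Fin n) ℂ := munvec t with hTdef
  -- conjugation invariance
  have hconj : ∀ B ∈ G, B * T * Bᴴ = T := by
    intro B hB
    obtain ⟨hB1, hB2⟩ := huni B hB
    set Φ : EuclideanSpace ℂ (Fin n × Fin n) →ₗ[ℝ] EuclideanSpace ℂ (Fin n × Fin n) :=
      { toFun := fun x => mvec (B * munvec x * Bᴴ)
        map_add' := by
          intro x y
          show mvec (B * munvec (x + y) * Bᴴ) =
            mvec (B * munvec x * Bᴴ) + mvec (B * munvec y * Bᴴ)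
          rw [munvec_add, Matrix.mul_add, Matrix.add_mul, mvec_add]
        map_smul' := by
          intro r x
          show mvec (B * munvec (r • x) * Bᴴ) = r • mvec (B * munvec x * Bᴴ)
          rw [munvec_smul, Matrix.mul_smul, Matrix.smul_mul, mvec_smul] } with hΦdef
    have hΦcont : Continuous Φ := Φ.continuous_of_finiteDimensional
    have hΦS₀ : ⇑Φ '' S₀ ⊆ S₀ := by
      rintro _ ⟨_, ⟨A, hA, rfl⟩, rfl⟩
      refine ⟨B * A, hmul B hB A hA, ?_⟩
      show mvec ((B * A) * P * (B * A)ᴴ) = Φ (mvec (A * P * Aᴴ))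
      have : Φ (mvec (A * P * Aᴴ)) = mvec (B * (A * P * Aᴴ) * Bᴴ) := by
        show mvec (B * munvec (mvec (A * P * Aᴴ)) * Bᴴ) = _
        rw [munvec_mvec]
      rw [this]
      congr 1
      rw [Matrix.conjTranspose_mul]
      simp [Matrix.mul_assoc]
    have hΦt : Φ t ∈ S := by
      have h1 : Φ t ∈ ⇑Φ '' S := ⟨t, htS, rfl⟩
      have h2 : ⇑Φ '' S ⊆ closure (⇑Φ '' convexHull ℝ S₀) :=
        image_closure_subset_closure_image hΦcont
      rw [Φ.image_convexHull S₀] at h2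
      exact closure_mono (convexHull_mono hΦS₀) (h2 h1)
    have hnorm : ‖Φ t‖ = ‖t‖ := by
      show ‖mvec (B * munvec t * Bᴴ)‖ = ‖t‖
      rw [norm_mvec_conj _ _ hB1, mvec_munvec]
    have h7 := huniq (Φ t) hΦt hnorm
    have h8 := congrArg munvec h7
    rw [← hTdef] at h8
    show B * munvec t * Bᴴ = munvec t
    rw [← munvec_mvec (B * munvec t * Bᴴ)]
    exact h8
  have hcomm : ∀ B ∈ G, B * T = T * B := by
    intro B hB
    obtain ⟨hB1, hB2⟩ := huni B hB
    calc B * T = B * T * (Bᴴ * B) := by rw [hB1, Matrix.mul_one]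
      _ = (B * T * Bᴴ) * B := by rw [Matrix.mul_assoc (B * T), Matrix.mul_assoc]
      _ = T * B := by rw [hconj B hB]
  -- properties of T from membership in the closed convex set D
  have hrsmul : ∀ (r : ℝ) (M : Matrix (Fin n) (Fin n) ℂ), r • M = (r : ℂ) • M := by
    intro r M
    ext i j
    simp [Complex.real_smul]
  set D : Set (EuclideanSpace ℂ (Fin n × Fin n)) :=
    {x | (munvec x)ᴴ = munvec x ∧ Matrix.trace (munvec x) = 1 ∧
      (1 - ε) ^ 2 ≤ (inner ℂ ξ (Matrix.toEuclideanLin (munvec x) ξ) : ℂ).re} with hDdef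
  have hDconv : Convex ℝ D := by
    rintro x ⟨hx1, hx2, hx3⟩ y ⟨hy1, hy2, hy3⟩ a b ha hb hab
    have hxy : munvec (a • x + b • y) = (a : ℂ) • munvec x + (b : ℂ) • munvec y := by
      rw [munvec_add, munvec_smul, munvec_smul, hrsmul, hrsmul]
    refine ⟨?_, ?_, ?_⟩
    · rw [hxy]
      rw [Matrix.conjTranspose_add, Matrix.conjTranspose_smul, Matrix.conjTranspose_smul,
        hx1, hy1]
      norm_num
    · rw [hxy, Matrix.trace_add, Matrix.trace_smul, Matrix.trace_smul, hx2, hy2]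
      simp only [smul_eq_mul, mul_one]
      norm_cast
    · rw [hxy]
      rw [map_add, _root_.map_smul, _root_.map_smul]
      simp only [LinearMap.add_apply, LinearMap.smul_apply]
      rw [inner_add_right, inner_smul_right, inner_smul_right]
      simp only [Complex.add_re, Complex.mul_re, Complex.ofReal_re, Complex.ofReal_im,
        zero_mul, sub_zero]
      nlinarith [hx3, hy3]
  have hDclosed : IsClosed D := by
    have hmc : Continuous (munvec (n := n)) := munvec_continuous
    have hc1 : Continuous fun x : EuclideanSpace ℂ (Fin n × Fin n) => (munvec x)ᴴ := by
      refine continuous_pi fun i => continuous_pi fun j => ?_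
      show Continuous fun x : EuclideanSpace ℂ (Fin n × Fin n) => star (x (j, i))
      exact ((continuous_apply (j, i)).comp
        (PiLp.continuous_ofLp 2 fun _ : Fin n × Fin n => ℂ)).star
    have hc2 : Continuous fun x : EuclideanSpace ℂ (Fin n × Fin n) =>
        Matrix.trace (munvec x) := by
      show Continuous fun x : EuclideanSpace ℂ (Fin n × Fin n) => ∑ i, x (i, i)
      apply continuous_finset_sum
      intro i _
      exact (continuous_apply (i, i)).comp (PiLp.continuous_ofLp 2 fun _ : Fin n × Fin n => ℂ)
    have hc3 : Continuous fun x : EuclideanSpace ℂ (Fin n × Fin n) =>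
        Matrix.toEuclideanLin (munvec x) ξ := by
      have h1 : Continuous fun x : EuclideanSpace ℂ (Fin n × Fin n) =>
          (fun i => ∑ j, munvec x i j * ξ j : Fin n → ℂ) := by
        refine continuous_pi fun i => ?_
        apply continuous_finset_sum
        intro j _
        have : (fun x : EuclideanSpace ℂ (Fin n × Fin n) => munvec x i j * ξ j)
            = fun x => x (i, j) * ξ j := rfl
        rw [this]
        exact ((continuous_apply (i, j)).comp
          (PiLp.continuous_ofLp 2 fun _ : Fin n × Fin n => ℂ)).mul continuous_const
      have h2 : Continuous (⇑(WithLp.equiv 2 (Fin n → ℂ)).symm ∘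
          fun x : EuclideanSpace ℂ (Fin n × Fin n) => (fun i => ∑ j, munvec x i j * ξ j)) :=
        (PiLp.continuous_toLp 2 fun _ : Fin n => ℂ).comp h1
      exact h2
    have hc4 : Continuous fun x : EuclideanSpace ℂ (Fin n × Fin n) =>
        (inner ℂ ξ (Matrix.toEuclideanLin (munvec x) ξ) : ℂ).re :=
      Complex.continuous_re.comp (Continuous.inner continuous_const hc3)
    have : D = {x | (munvec x)ᴴ = munvec x} ∩
        ({x | Matrix.trace (munvec x) = 1} ∩
         {x | (1 - ε) ^ 2 ≤ (inner ℂ ξ (Matrix.toEuclideanLin (munvec x) ξ) : ℂ).re}) := rfl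
    rw [this]
    exact (isClosed_eq hc1 hmc).inter ((isClosed_eq hc2 continuous_const).inter
      (isClosed_le continuous_const hc4))
  have hS₀D : S₀ ⊆ D := by
    rintro _ ⟨A, hA, rfl⟩
    refine ⟨?_, ?_, ?_⟩
    · show (munvec (mvec (A * P * Aᴴ)))ᴴ = munvec (mvec (A * P * Aᴴ))
      rw [munvec_mvec]
      exact hgenherm A hA
    · show Matrix.trace (munvec (mvec (A * P * Aᴴ))) = 1
      rw [munvec_mvec]
      exact hgentrace A hA
    · show (1 - ε) ^ 2 ≤ (inner ℂ ξ (Matrix.toEuclideanLin (munvec (mvec (A * P * Aᴴ))) ξ) : ℂ).re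
      rw [munvec_mvec]
      exact hgeninner A hA
  have htD : t ∈ D := closure_minimal (convexHull_min hS₀D hDconv) hDclosed htS
  obtain ⟨hTherm, hTtrace, hTray⟩ := htD
  -- spectral part
  set T' : EuclideanSpace ℂ (Fin n) →ₗ[ℂ] EuclideanSpace ℂ (Fin n) :=
    Matrix.toEuclideanLin T with hT'def
  have hsym : T'.IsSymmetric := Matrix.isHermitian_iff_isSymmetric.mp hTherm
  have hξne : ξ ≠ 0 := by
    intro h
    rw [h] at hξ
    simp at hξ
  haveI : Nontrivial (EuclideanSpace ℂ (Fin n)) := ⟨ξ, 0, hξne⟩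
  have heig := hsym.hasEigenvalue_iSup_of_finiteDimensional
  set μ : ℝ := ⨆ x : {x : EuclideanSpace ℂ (Fin n) // x ≠ 0},
    RCLike.re (inner ℂ (T' ↑x) ↑x : ℂ) / ‖(↑x : EuclideanSpace ℂ (Fin n))‖ ^ 2 with hμdef
  have hbdd : BddAbove (Set.range fun x : {x : EuclideanSpace ℂ (Fin n) // x ≠ 0} =>
      RCLike.re (inner ℂ (T' ↑x) ↑x : ℂ) / ‖(↑x : EuclideanSpace ℂ (Fin n))‖ ^ 2) := by
    refine ⟨‖LinearMap.toContinuousLinearMap T'‖, ?_⟩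
    rintro r ⟨x, rfl⟩
    obtain ⟨x, hx⟩ := x
    have hxpos : 0 < ‖x‖ := norm_pos_iff.mpr hx
    have h1 : RCLike.re (inner ℂ (T' x) x : ℂ) ≤ ‖T' x‖ * ‖x‖ := by
      calc RCLike.re (inner ℂ (T' x) x : ℂ) ≤ ‖(inner ℂ (T' x) x : ℂ)‖ := RCLike.re_le_norm _
        _ ≤ ‖T' x‖ * ‖x‖ := norm_inner_le_norm _ _
    have h2 : ‖T' x‖ ≤ ‖LinearMap.toContinuousLinearMap T'‖ * ‖x‖ := by
      have h3 := (LinearMap.toContinuousLinearMap T').le_opNorm x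
      simpa using h3
    rw [div_le_iff₀ (by positivity)]
    nlinarith [norm_nonneg (T' x), norm_nonneg x]
  have hμge : (1 - ε) ^ 2 ≤ μ := by
    have h0 := le_ciSup hbdd
      (⟨ξ, hξne⟩ : {x : EuclideanSpace ℂ (Fin n) // x ≠ 0})
    have h1 : RCLike.re (inner ℂ (T' ξ) ξ : ℂ) = (inner ℂ ξ (T' ξ) : ℂ).re := by
      rw [← inner_conj_symm]
      simp only [RCLike.re_to_complex, Complex.conj_re]
    simp only at h0
    rw [h1, hξ] at h0
    simp only [one_pow, div_one] at h0
    exact le_trans hTray h0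
  set W : Submodule ℂ (EuclideanSpace ℂ (Fin n)) := Module.End.eigenspace T' (↑μ) with hWdef
  have hWne : W ≠ ⊥ := heig
  refine ⟨W, ?_, ?_, ?_⟩
  · rw [Module.finrank_pos_iff]
    exact Submodule.nontrivial_iff_ne_bot.mpr hWne
  · by_contra hcon
    push_neg at hcon
    have hle : Module.finrank ℂ W ≤ n := by
      have h1 := Submodule.finrank_le W
      rwa [finrank_euclideanSpace, Fintype.card_fin] at h1
    have htop : W = ⊤ := Submodule.eq_top_of_finrank_eq
      (by rw [le_antisymm hle hcon, finrank_euclideanSpace, Fintype.card_fin])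
    have hdiag : ∀ j, T j j = (μ : ℂ) := by
      intro j
      have hmem : EuclideanSpace.single j (1:ℂ) ∈ W := htop ▸ Submodule.mem_top
      have heigv := Module.End.mem_eigenspace_iff.mp hmem
      have h1 : T' (EuclideanSpace.single j (1:ℂ)) j
          = ((μ : ℂ) • EuclideanSpace.single j (1:ℂ)) j := by rw [heigv]
      have h2 : T' (EuclideanSpace.single j (1:ℂ)) j
          = ∑ k, T j k * (EuclideanSpace.single j (1:ℂ)) k := by
        rw [hT'def]
        exact toEuclideanLin_apply' _ _ _
      rw [h2] at h1
      simpa [EuclideanSpace.single_apply, mul_ite, Finset.sum_ite_eq', smul_eq_mul] using h1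
    have htr : Matrix.trace T = (n : ℂ) * (μ : ℂ) := by
      simp [Matrix.trace, Matrix.diag, hdiag, Finset.sum_const, Finset.card_univ,
        Fintype.card_fin, nsmul_eq_mul]
    rw [hTtrace] at htr
    have hreal : (n : ℝ) * μ = 1 := by
      have h4 : ((n : ℂ) * (μ : ℂ)).re = (n : ℝ) * μ := by
        simp [Complex.mul_re]
      rw [← h4, ← htr]
      simp
    nlinarith [hμge, hε4, hε, hn2, hreal]
  · intro A hA x hx
    have hx' := Module.End.mem_eigenspace_iff.mp hx
    apply Module.End.mem_eigenspace_iff.mpr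
    have hcomm' : T * A = A * T := (hcomm A hA).symm
    have h1 : T' (Matrix.toEuclideanLin A x) = Matrix.toEuclideanLin A (T' x) := by
      rw [hT'def]
      calc Matrix.toEuclideanLin T (Matrix.toEuclideanLin A x)
          = Matrix.toEuclideanLin (T * A) x := by rw [toEuclideanLin_mul]; rfl
        _ = Matrix.toEuclideanLin (A * T) x := by rw [hcomm']
        _ = Matrix.toEuclideanLin A (Matrix.toEuclideanLin T x) := by
            rw [toEuclideanLin_mul]; rfl
    rw [h1, hx', _root_.map_smul]

end Main
end
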